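/- arXiv:1701.05179 — 8 statements merged into one kernel-verified Lean document; each statement's English description precedes it below -/
import Mathlib

section
/- Let P_1,...,P_m and W_1,...,W_m be random variables such that for each null index i in H_0: P_i is super-uniform (P[P_i ≤ t] ≤ t for all t in [0,1]), P_i is independent of W_i, the weights are nonnegative, and the sum of all weights equals m almost surely. Then the probability that there exists i in H_0 with P_i ≤ αW_i/m is at most α, for any α in (0,1). -/
open MeasureTheory ProbabilityTheory

/-- **IHW-Bonferroni FWER control (Theorem 1a).**
If for each null index `i ∈ H0` the p-value `P i` is super-uniform and independent of its
weight `W i`, the weights are nonnegative and sum to `m` almost surely, then the probability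
that some null hypothesis is rejected by the weighted Bonferroni rule `P i ≤ α * W i / m`
is at most `α`. -/
theorem ihw_bonferroni_fwer_control
    {Ω : Type*} [MeasurableSpace Ω] (μ : Measure Ω) [IsProbabilityMeasure μ]
    (m : ℕ) (hm : 0 < m) (H0 : Finset (Fin m))
    (P W : Fin m → Ω → ℝ)
    (hPmeas : ∀ i, Measurable (P i)) (hWmeas : ∀ i, Measurable (W i))
    (hsuper : ∀ i ∈ H0, ∀ t ∈ Set.Icc (0 : ℝ) 1,
      μ {ω | P i ω ≤ t} ≤ ENNReal.ofReal t)
    (hindep : ∀ i ∈ H0, IndepFun (P i) (W i) μ)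
    (hWnonneg : ∀ i, ∀ ω, 0 ≤ W i ω)
    (hWsum : ∀ᵐ ω ∂μ, ∑ i, W i ω = (m : ℝ))
    (α : ℝ) (hα : α ∈ Set.Ioo (0 : ℝ) 1) :
    μ {ω | ∃ i ∈ H0, P i ω ≤ α * W i ω / m} ≤ ENNReal.ofReal α := by
  obtain ⟨hα0, hα1⟩ := hα
  have hmR : (0 : ℝ) < m := by exact_mod_cast hm
  -- key per-hypothesis bound
  have key : ∀ i ∈ H0, μ {ω | P i ω ≤ α * W i ω / m}
      ≤ ENNReal.ofReal (α / m) * ∫⁻ ω, ENNReal.ofReal (W i ω) ∂μ := by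
    intro i hi
    have hmap : μ.map (fun ω => (W i ω, P i ω)) = (μ.map (W i)).prod (μ.map (P i)) :=
      (indepFun_iff_map_prod_eq_prod_map_map (hWmeas i).aemeasurable
        (hPmeas i).aemeasurable).mp (hindep i hi).symm
    have hsmeas : MeasurableSet {p : ℝ × ℝ | p.2 ≤ α * p.1 / m} :=
      measurableSet_le measurable_snd (by fun_prop)
    have h1 : μ {ω | P i ω ≤ α * W i ω / m}
        = (μ.map (fun ω => (W i ω, P i ω))) {p : ℝ × ℝ | p.2 ≤ α * p.1 / m} := by
      rw [Measure.map_apply (by fun_prop) hsmeas]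
      rfl
    rw [h1, hmap, Measure.prod_apply hsmeas]
    have h2 : ∀ w : ℝ, 0 ≤ w →
        (μ.map (P i)) (Prod.mk w ⁻¹' {p : ℝ × ℝ | p.2 ≤ α * p.1 / m})
          ≤ ENNReal.ofReal (α * w / m) := by
      intro w hw
      have hpre : (Prod.mk w ⁻¹' {p : ℝ × ℝ | p.2 ≤ α * p.1 / m})
          = Set.Iic (α * w / m) := rfl
      rw [hpre, Measure.map_apply (hPmeas i) measurableSet_Iic]
      have hpos : 0 ≤ α * w / m := by positivity
      by_cases hle : α * w / m ≤ 1
      · exact hsuper i hi _ ⟨hpos, hle⟩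
      · calc μ (P i ⁻¹' Set.Iic (α * w / m)) ≤ 1 := prob_le_one
          _ = ENNReal.ofReal 1 := by simp
          _ ≤ ENNReal.ofReal (α * w / m) := ENNReal.ofReal_le_ofReal (le_of_not_ge hle)
    calc ∫⁻ w, (μ.map (P i)) (Prod.mk w ⁻¹' {p : ℝ × ℝ | p.2 ≤ α * p.1 / m}) ∂(μ.map (W i))
        ≤ ∫⁻ w, ENNReal.ofReal (α / m) * ENNReal.ofReal w ∂(μ.map (W i)) := by
          refine lintegral_mono_ae ?_
          have hae : ∀ᵐ w ∂(μ.map (W i)), 0 ≤ w := by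
            rw [MeasureTheory.ae_map_iff (hWmeas i).aemeasurable measurableSet_Ici]
            exact Filter.Eventually.of_forall (hWnonneg i)
          filter_upwards [hae] with w hw
          refine (h2 w hw).trans_eq ?_
          rw [← ENNReal.ofReal_mul (by positivity)]
          ring_nf
        _ = ENNReal.ofReal (α / m) * ∫⁻ w, ENNReal.ofReal w ∂(μ.map (W i)) :=
          lintegral_const_mul _ (by fun_prop)
        _ = ENNReal.ofReal (α / m) * ∫⁻ ω, ENNReal.ofReal (W i ω) ∂μ := by
          rw [lintegral_map (by fun_prop) (hWmeas i)]
  -- union bound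
  have hset : {ω | ∃ i ∈ H0, P i ω ≤ α * W i ω / m}
      = ⋃ i ∈ H0, {ω | P i ω ≤ α * W i ω / m} := by
    ext ω; simp
  rw [hset]
  calc μ (⋃ i ∈ H0, {ω | P i ω ≤ α * W i ω / m})
      ≤ ∑ i ∈ H0, μ {ω | P i ω ≤ α * W i ω / m} := measure_biUnion_finset_le _ _
    _ ≤ ∑ i ∈ H0, ENNReal.ofReal (α / m) * ∫⁻ ω, ENNReal.ofReal (W i ω) ∂μ :=
        Finset.sum_le_sum key
    _ ≤ ∑ i : Fin m, ENNReal.ofReal (α / m) * ∫⁻ ω, ENNReal.ofReal (W i ω) ∂μ :=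
        Finset.sum_le_sum_of_subset (Finset.subset_univ _)
    _ = ENNReal.ofReal (α / m) * ∫⁻ ω, ∑ i : Fin m, ENNReal.ofReal (W i ω) ∂μ := by
        rw [← Finset.mul_sum, lintegral_finset_sum]
        intro i _; fun_prop
    _ = ENNReal.ofReal (α / m) * ENNReal.ofReal m := by
        congr 1
        have : ∀ᵐ ω ∂μ, (∑ i : Fin m, ENNReal.ofReal (W i ω)) = ENNReal.ofReal (m : ℝ) := by
          filter_upwards [hWsum] with ω hω
          rw [← ENNReal.ofReal_sum_of_nonneg (fun i _ => hWnonneg i ω), hω]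
        rw [lintegral_congr_ae this, lintegral_const, measure_univ, mul_one]
    _ = ENNReal.ofReal α := by
        rw [← ENNReal.ofReal_mul (by positivity)]
        congr 1
        field_simp
end

section
/- Suppose hypotheses {1,...,m} are partitioned into folds I_1,...,I_K such that the tuples ((P_i,X_i))_{i∈I_l} are jointly independent across folds, and for each fold l and each null i ∈ H_0 ∩ I_l, P_i is independent of (X_j)_{j∈I_l}. If the IHW weight vector on fold I_l is a measurable function only of the p-values outside I_l and of all covariates X_1,...,X_m, then for each null i ∈ H_0 ∩ I_l, P_i is independent of the random vector (W_k)_{k∈I_l}; in particular P_i ⊥ W_i. -/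
open MeasureTheory ProbabilityTheory


section Aux
open MeasurableSpace Set

/-- Auxiliary: if `A ⊥ B` and `(A, B) ⊥ C`, then `A ⊥ (B, C)`. -/
lemma indepFun_prod_right_of_indepFun {Ω β γ δ : Type*} [MeasurableSpace Ω]
    [mβ : MeasurableSpace β] [mγ : MeasurableSpace γ] [mδ : MeasurableSpace δ]
    {μ : Measure Ω} [IsProbabilityMeasure μ]
    {A : Ω → β} {B : Ω → γ} {C : Ω → δ}
    (hA : Measurable A) (hB : Measurable B) (hC : Measurable C)
    (hAB : IndepFun A B μ)
    (hABC : IndepFun (fun ω => (A ω, B ω)) C μ) :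
    IndepFun A (fun ω => (B ω, C ω)) μ := by
  have hBC : IndepFun B C μ := hABC.comp measurable_snd measurable_id
  rw [IndepFun_iff_Indep]
  set p1 : Set (Set Ω) := {s | ∃ t, MeasurableSet t ∧ A ⁻¹' t = s} with hp1def
  set p2 : Set (Set Ω) :=
    {s | ∃ t u, MeasurableSet t ∧ MeasurableSet u ∧ B ⁻¹' t ∩ C ⁻¹' u = s} with hp2def
  have hgen1 : MeasurableSpace.comap A mβ = generateFrom p1 := by
    refine le_antisymm ?_ (generateFrom_le ?_)
    · rintro s ⟨t, ht, rfl⟩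
      exact measurableSet_generateFrom ⟨t, ht, rfl⟩
    · rintro s ⟨t, ht, rfl⟩
      exact ⟨t, ht, rfl⟩
  have hgen2 : MeasurableSpace.comap (fun ω => (B ω, C ω)) Prod.instMeasurableSpace
      = generateFrom p2 := by
    refine le_antisymm ?_ (generateFrom_le ?_)
    · rw [show (Prod.instMeasurableSpace : MeasurableSpace (γ × δ))
          = generateFrom (image2 (· ×ˢ ·) {s | MeasurableSet s} {t | MeasurableSet t}) from
          generateFrom_prod.symm, comap_generateFrom]
      refine generateFrom_le ?_
      rintro s ⟨s', ⟨t, ht, u, hu, rfl⟩, rfl⟩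
      refine measurableSet_generateFrom ⟨t, u, ht, hu, ?_⟩
      ext ω; simp [Set.mem_prod]
    · rintro s ⟨t, u, ht, hu, rfl⟩
      exact ⟨t ×ˢ u, ht.prod hu, by ext ω; simp⟩
  have hpi1 : IsPiSystem p1 := by
    rintro s ⟨t, ht, rfl⟩ s' ⟨t', ht', rfl⟩ -
    exact ⟨t ∩ t', ht.inter ht', rfl⟩
  have hpi2 : IsPiSystem p2 := by
    rintro s ⟨t, u, ht, hu, rfl⟩ s' ⟨t', u', ht', hu', rfl⟩ -
    refine ⟨t ∩ t', u ∩ u', ht.inter ht', hu.inter hu', ?_⟩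
    ext ω; simp; tauto
  refine IndepSets.indep (hA.comap_le) ((hB.prodMk hC).comap_le) hpi1 hpi2 hgen1 hgen2 ?_
  rw [IndepSets_iff]
  rintro s s' ⟨t, ht, rfl⟩ ⟨t', u', ht', hu', rfl⟩
  have h1 : A ⁻¹' t ∩ (B ⁻¹' t' ∩ C ⁻¹' u')
      = (fun ω => (A ω, B ω)) ⁻¹' (t ×ˢ t') ∩ C ⁻¹' u' := by
    ext ω; simp [Set.mem_prod]; tauto
  rw [h1, hABC.measure_inter_preimage_eq_mul _ _ (ht.prod ht') hu',
    show (fun ω => (A ω, B ω)) ⁻¹' (t ×ˢ t') = A ⁻¹' t ∩ B ⁻¹' t' by ext ω; simp,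
    hAB.measure_inter_preimage_eq_mul _ _ ht ht',
    hBC.measure_inter_preimage_eq_mul _ _ ht' hu', mul_assoc]

end Aux

/-- **Cross-weighting independence (Lemma 1).**
If the hypotheses are partitioned into folds that are jointly independent (as (p-value,
covariate) pairs), within each fold each null p-value is independent of the fold's
covariates, and the weights on a fold are a measurable function only of the p-values
outside that fold together with all covariates, then for each null `i` in fold `l`
the p-value `P i` is independent of the weight vector `(W k)_{k ∈ I l}`; in particular
`P i` is independent of `W i`. -/
theorem ihw_cross_weighting_independence
    {Ω : Type*} [MeasurableSpace Ω] (μ : Measure Ω) [IsProbabilityMeasure μ]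
    (m K : ℕ) (I : Fin K → Finset (Fin m))
    (hpart : ∀ i : Fin m, ∃! l : Fin K, i ∈ I l)
    (H0 : Finset (Fin m))
    (P X W : Fin m → Ω → ℝ)
    (hPmeas : ∀ i, Measurable (P i)) (hXmeas : ∀ i, Measurable (X i))
    -- independence across folds of the (p-value, covariate) pairs
    (hfold_indep : iIndepFun
      (fun (l : Fin K) (ω : Ω) => fun j : {j : Fin m // j ∈ I l} => (P j ω, X j ω)) μ)
    -- within each fold, each null p-value is independent of the fold's covariates
    (hnull_cov_indep : ∀ l : Fin K, ∀ i ∈ H0, i ∈ I l →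
      IndepFun (P i) (fun ω => fun j : {j : Fin m // j ∈ I l} => X j ω) μ)
    -- the weights on fold `l` depend measurably only on out-of-fold p-values and all covariates
    (hW : ∀ l : Fin K,
      ∃ g : ({j : Fin m // j ∉ I l} → ℝ) × (Fin m → ℝ) → Fin m → ℝ,
        Measurable g ∧
        ∀ k ∈ I l, ∀ ω, W k ω =
          g (fun j : {j : Fin m // j ∉ I l} => P j ω, fun j : Fin m => X j ω) k) :
    ∀ l : Fin K, ∀ i ∈ H0, i ∈ I l →
      (IndepFun (P i) (fun ω => fun k : {k : Fin m // k ∈ I l} => W k ω) μ ∧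
        IndepFun (P i) (W i) μ) := by
  intro l i hi0 hil
  have hYmeas : ∀ l' : Fin K,
      Measurable (fun ω : Ω => fun j : {j : Fin m // j ∈ I l'} => (P j ω, X j ω)) :=
    fun l' => measurable_pi_lambda _ fun j => (hPmeas j).prodMk (hXmeas j)
  -- Step 1: fold l tuple is independent of the tuple of other folds
  have hstep1 := hfold_indep.indepFun_finset {l} {l}ᶜ disjoint_compl_right hYmeas
  have lm : l ∈ ({l} : Finset (Fin K)) := Finset.mem_singleton_self l
  -- out-of-fold indices: their fold
  have hfl : ∀ j : {j : Fin m // j ∉ I l}, ∃ l' : Fin K, l' ≠ l ∧ (j : Fin m) ∈ I l' := by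
    intro j
    obtain ⟨l', hl', -⟩ := hpart j.1
    refine ⟨l', ?_, hl'⟩
    rintro rfl
    exact j.2 hl'
  choose fl flne flmem using hfl
  have flc : ∀ j : {j : Fin m // j ∉ I l}, fl j ∈ ({l}ᶜ : Finset (Fin K)) := by
    intro j
    simp [Finset.mem_compl, flne j]
  -- Step 2: map both tuples to (P i, in-fold X's) and out-of-fold pairs
  have hφ : Measurable (fun y : (∀ k : ({l} : Finset (Fin K)), {j : Fin m // j ∈ I k} → ℝ × ℝ) =>
      ((y ⟨l, lm⟩ ⟨i, hil⟩).1, fun j : {j : Fin m // j ∈ I l} => (y ⟨l, lm⟩ j).2)) := by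
    refine Measurable.prodMk ?_ ?_
    · exact measurable_fst.comp ((measurable_pi_apply _).comp (measurable_pi_apply _))
    · exact measurable_pi_lambda _ fun j =>
        measurable_snd.comp ((measurable_pi_apply _).comp (measurable_pi_apply _))
  have hψ : Measurable (fun y : (∀ k : (({l}ᶜ : Finset (Fin K))), {j : Fin m // j ∈ I k} → ℝ × ℝ) =>
      fun j : {j : Fin m // j ∉ I l} => y ⟨fl j, flc j⟩ ⟨j.1, flmem j⟩) :=
    measurable_pi_lambda _ fun j =>
      (measurable_pi_apply _).comp (measurable_pi_apply _)
  have hABC : IndepFun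
      (fun ω => (P i ω, fun j : {j : Fin m // j ∈ I l} => X j ω))
      (fun ω => fun j : {j : Fin m // j ∉ I l} => (P j ω, X j ω)) μ :=
    hstep1.comp hφ hψ
  -- Step 3: combine with null-covariate independence
  have hmain : IndepFun (P i)
      (fun ω => ((fun j : {j : Fin m // j ∈ I l} => X j ω),
                 (fun j : {j : Fin m // j ∉ I l} => (P j ω, X j ω)))) μ :=
    indepFun_prod_right_of_indepFun (hPmeas i)
      (measurable_pi_lambda _ fun j => hXmeas j)
      (measurable_pi_lambda _ fun j => (hPmeas j).prodMk (hXmeas j))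
      (hnull_cov_indep l i hi0 hil) hABC
  -- Step 4: the weights on fold l are a measurable function of that pair
  obtain ⟨g, hg, hgW⟩ := hW l
  have hinner : Measurable (fun bc :
      ({j : Fin m // j ∈ I l} → ℝ) × ({j : Fin m // j ∉ I l} → ℝ × ℝ) =>
      ((fun j : {j : Fin m // j ∉ I l} => (bc.2 j).1),
       (fun j : Fin m => if hj : j ∈ I l then bc.1 ⟨j, hj⟩ else (bc.2 ⟨j, hj⟩).2))) := by
    refine Measurable.prodMk ?_ ?_
    · exact measurable_pi_lambda _ fun j =>
        measurable_fst.comp ((measurable_pi_apply _).comp measurable_snd)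
    · refine measurable_pi_lambda _ fun j => ?_
      by_cases hj : j ∈ I l
      · simp only [dif_pos hj]
        exact (measurable_pi_apply _).comp measurable_fst
      · simp only [dif_neg hj]
        exact measurable_snd.comp ((measurable_pi_apply _).comp measurable_snd)
  have hh : Measurable (fun bc :
      ({j : Fin m // j ∈ I l} → ℝ) × ({j : Fin m // j ∉ I l} → ℝ × ℝ) =>
      fun k : {k : Fin m // k ∈ I l} =>
        g ((fun j : {j : Fin m // j ∉ I l} => (bc.2 j).1),
           (fun j : Fin m => if hj : j ∈ I l then bc.1 ⟨j, hj⟩ else (bc.2 ⟨j, hj⟩).2)) k.1) :=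
    measurable_pi_lambda _ fun k => (measurable_pi_apply _).comp (hg.comp hinner)
  have hIW := hmain.comp measurable_id hh
  have key : (fun ω => fun k : {k : Fin m // k ∈ I l} => W k ω)
      = (fun ω => fun k : {k : Fin m // k ∈ I l} =>
          g ((fun j : {j : Fin m // j ∉ I l} => P j ω),
             (fun j : Fin m => if hj : j ∈ I l then X j ω else X j ω)) k.1) := by
    funext ω k
    rw [hgW k.1 k.2 ω]
    congr 1
    refine Prod.ext rfl ?_
    funext j
    by_cases hj : j ∈ I l <;> simp [hj]
  have hfirst : IndepFun (P i) (fun ω => fun k : {k : Fin m // k ∈ I l} => W k ω) μ := by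
    rw [key]; exact hIW
  exact ⟨hfirst,
    hfirst.comp measurable_id (measurable_pi_apply (⟨i, hil⟩ : {k : Fin m // k ∈ I l}))⟩
end

section
/- Let U be a super-uniform random variable on [0,1], S > 0 another random variable, and β(r) = ∫_0^r x dν(x) a reshaping function for a probability measure ν on the positive reals. Then for all t > 0, E[ 1{U ≤ t β(S)} / (t S) ] ≤ 1. -/
open MeasureTheory ProbabilityTheory
open Set
open scoped ENNReal

lemma lint_inv_sq {c : ℝ} (hc : 0 < c) :
    ∫⁻ x in Set.Ioi c, ENNReal.ofReal ((x ^ 2)⁻¹) ∂(volume) = ENNReal.ofReal c⁻¹ := by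
  have hcongr : ∀ x ∈ Set.Ioi c, (x ^ 2)⁻¹ = x ^ (-2 : ℝ) := by
    intro x hx
    rw [Real.rpow_neg (le_of_lt (hc.trans hx)), Real.rpow_two]
  have hInt : IntegrableOn (fun x : ℝ => (x ^ 2)⁻¹) (Set.Ioi c) := by
    refine (integrableOn_Ioi_rpow_of_lt (by norm_num : (-2:ℝ) < -1) hc).congr_fun
      (fun x hx => (hcongr x hx).symm) measurableSet_Ioi
  have hnn : 0 ≤ᵐ[volume.restrict (Set.Ioi c)] fun x : ℝ => (x ^ 2)⁻¹ := by
    filter_upwards with x using by positivity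
  rw [← ofReal_integral_eq_lintegral_ofReal hInt hnn]
  congr 1
  rw [setIntegral_congr_fun measurableSet_Ioi hcongr, integral_Ioi_rpow_of_lt (by norm_num) hc]
  norm_num
  rw [Real.rpow_neg_one]

-- weighted version
lemma lint_inv_sq' {c t : ℝ} (hc : 0 < c) (ht : 0 < t) :
    ∫⁻ x in Set.Ioi c, ENNReal.ofReal (t⁻¹ * (x ^ 2)⁻¹) ∂(volume) = ENNReal.ofReal (t⁻¹ * c⁻¹) := by
  have : ∀ x : ℝ, ENNReal.ofReal (t⁻¹ * (x ^ 2)⁻¹)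
      = ENNReal.ofReal t⁻¹ * ENNReal.ofReal ((x ^ 2)⁻¹) := fun x =>
    ENNReal.ofReal_mul (by positivity)
  simp_rw [this]
  rw [lintegral_const_mul _ (by measurability), lint_inv_sq hc,
    ← ENNReal.ofReal_mul (by positivity)]

/-- **Blanchard–Roquain reshaping lemma.**
Let `U` be super-uniform on `[0,1]`, `S > 0` another random variable, and
`β r = ∫_0^r x dν(x)` the reshaping function of a probability measure `ν` on the
positive reals. Then for every `t > 0`, `E[ 1{U ≤ t β(S)} / (t S) ] ≤ 1`. -/
theorem blanchard_roquain_reshaping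
    {Ω : Type*} [MeasurableSpace Ω] (μ : Measure Ω) [IsProbabilityMeasure μ]
    (ν : Measure ℝ) [IsProbabilityMeasure ν] (hν : ν (Set.Iic (0 : ℝ)) = 0)
    (U S : Ω → ℝ) (hUmeas : Measurable U) (hSmeas : Measurable S)
    (hUsuper : ∀ u ∈ Set.Icc (0 : ℝ) 1, μ {ω | U ω ≤ u} ≤ ENNReal.ofReal u)
    (hSpos : ∀ ω, 0 < S ω)
    (β : ℝ → ℝ) (hβ : ∀ r, β r = ∫ x in Set.Ioc (0 : ℝ) r, x ∂ν)
    (t : ℝ) (ht : 0 < t) :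
    ∫ ω, (if U ω ≤ t * β (S ω) then (t * S ω)⁻¹ else 0) ∂μ ≤ 1 := by
  -- basic facts about β
  have hβint : ∀ r : ℝ, IntegrableOn (fun x : ℝ => x) (Set.Ioc 0 r) ν := by
    intro r
    refine ⟨measurable_id.aestronglyMeasurable, HasFiniteIntegral.of_bounded
      (C := max r 0) ?_⟩
    filter_upwards [ae_restrict_mem measurableSet_Ioc] with x hx
    rw [Real.norm_eq_abs, abs_of_pos hx.1]
    exact le_max_of_le_left hx.2
  have hβnn : ∀ r, 0 ≤ β r := by
    intro r; rw [hβ]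
    refine setIntegral_nonneg measurableSet_Ioc fun x hx => hx.1.le
  have hβzero : ∀ r ≤ (0:ℝ), β r = 0 := by
    intro r hr; rw [hβ, Set.Ioc_eq_empty (not_lt.mpr hr), Measure.restrict_empty,
      integral_zero_measure]
  have hβmono : Monotone β := by
    intro a b hab
    rcases le_or_gt a 0 with ha | ha
    · rw [hβzero a ha]; exact hβnn b
    · rw [hβ, hβ]
      refine setIntegral_mono_set (hβint b) ?_ (HasSubset.Subset.eventuallyLE ?_)
      · filter_upwards [ae_restrict_mem measurableSet_Ioc] with x hx using hx.1.le
      · exact Set.Ioc_subset_Ioc_right hab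
  have hβmeas : Measurable β := hβmono.measurable
  have hβofReal : ∀ r, ENNReal.ofReal (β r) = ∫⁻ y in Set.Ioc 0 r, ENNReal.ofReal y ∂ν := by
    intro r
    rw [hβ]
    refine ofReal_integral_eq_lintegral_ofReal (hβint r) ?_
    filter_upwards [ae_restrict_mem measurableSet_Ioc] with x hx using hx.1.le
  -- the indicator-style kernel
  set F : Ω → ℝ → ℝ≥0∞ := fun ω x =>
    (if U ω ≤ t * β (S ω) then (1:ℝ≥0∞) else 0) * ((if S ω < x then (1:ℝ≥0∞) else 0)
      * ENNReal.ofReal (t⁻¹ * (x ^ 2)⁻¹)) with hF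
  have hmeasset : MeasurableSet {ω | U ω ≤ t * β (S ω)} :=
    measurableSet_le hUmeas (measurable_const.mul (hβmeas.comp hSmeas))
  -- pointwise identity
  have hpt : ∀ ω, ENNReal.ofReal (if U ω ≤ t * β (S ω) then (t * S ω)⁻¹ else 0)
      = ∫⁻ x, F ω x ∂volume := by
    intro ω
    rw [hF]
    simp only
    by_cases h : U ω ≤ t * β (S ω)
    · simp only [h, if_true, one_mul]
      have : ∀ x : ℝ, (if S ω < x then (1:ℝ≥0∞) else 0) * ENNReal.ofReal (t⁻¹ * (x ^ 2)⁻¹)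
          = (Set.Ioi (S ω)).indicator (fun x => ENNReal.ofReal (t⁻¹ * (x ^ 2)⁻¹)) x := by
        intro x
        simp [Set.indicator_apply, Set.mem_Ioi, ite_mul]
      simp_rw [this]
      rw [lintegral_indicator measurableSet_Ioi _, lint_inv_sq' (hSpos ω) ht,
        mul_inv]
    · simp [h]
  -- measurability of the kernel
  have hFmeas : AEMeasurable (Function.uncurry F) (μ.prod volume) := by
    refine Measurable.aemeasurable ?_
    have m1 : Measurable fun p : Ω × ℝ => (if U p.1 ≤ t * β (S p.1) then (1:ℝ≥0∞) else 0) :=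
      Measurable.ite (measurable_fst hmeasset) measurable_const measurable_const
    have m2 : Measurable fun p : Ω × ℝ => (if S p.1 < p.2 then (1:ℝ≥0∞) else 0) :=
      Measurable.ite (measurableSet_lt (hSmeas.comp measurable_fst) measurable_snd)
        measurable_const measurable_const
    have m3 : Measurable fun p : Ω × ℝ => ENNReal.ofReal (t⁻¹ * (p.2 ^ 2)⁻¹) :=
      ENNReal.measurable_ofReal.comp
        (measurable_const.mul ((measurable_snd.pow_const 2).inv))
    exact m1.mul (m2.mul m3)
  -- measurability of the integrand
  have hfmeas : Measurable fun ω => (if U ω ≤ t * β (S ω) then (t * S ω)⁻¹ else 0) :=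
    Measurable.ite hmeasset ((measurable_const.mul hSmeas).inv) measurable_const
  have hfnn : 0 ≤ᵐ[μ] fun ω => (if U ω ≤ t * β (S ω) then (t * S ω)⁻¹ else 0) := by
    filter_upwards with ω
    by_cases h : U ω ≤ t * β (S ω) <;> simp [h]
    have := hSpos ω
    positivity
  rw [integral_eq_lintegral_of_nonneg_ae hfnn hfmeas.aestronglyMeasurable]
  have key : ∫⁻ ω, ENNReal.ofReal (if U ω ≤ t * β (S ω) then (t * S ω)⁻¹ else 0) ∂μ ≤ 1 := by
    have step1 : ∫⁻ ω, ENNReal.ofReal (if U ω ≤ t * β (S ω) then (t * S ω)⁻¹ else 0) ∂μ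
        = ∫⁻ x, ∫⁻ ω, F ω x ∂μ ∂volume := by
      simp_rw [hpt]
      exact lintegral_lintegral_swap hFmeas
    have hμbound : ∀ x : ℝ, ∫⁻ ω, F ω x ∂μ
        ≤ ENNReal.ofReal (t⁻¹ * (x ^ 2)⁻¹) * ENNReal.ofReal (min 1 (t * β x)) := by
      intro x
      have hrw : ∀ ω, F ω x = Set.indicator {ω | U ω ≤ t * β (S ω) ∧ S ω < x}
          (fun _ => ENNReal.ofReal (t⁻¹ * (x ^ 2)⁻¹)) ω := by
        intro ω
        by_cases h1 : U ω ≤ t * β (S ω) <;> by_cases h2 : S ω < x <;>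
          simp [hF, h1, h2, Set.indicator_apply]
      have hA : MeasurableSet {ω | U ω ≤ t * β (S ω) ∧ S ω < x} :=
        hmeasset.inter (measurableSet_lt hSmeas measurable_const)
      rw [lintegral_congr hrw, lintegral_indicator_const hA]
      refine mul_le_mul_right ?_ _
      rcases le_or_gt (t * β x) 1 with hle | hlt
      · rw [min_eq_right hle]
        have hsub : {ω | U ω ≤ t * β (S ω) ∧ S ω < x} ⊆ {ω | U ω ≤ t * β x} := by
          intro ω hω
          exact hω.1.trans (by gcongr; exact hβmono hω.2.le)
        exact (measure_mono hsub).trans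
          (hUsuper _ ⟨mul_nonneg ht.le (hβnn x), hle⟩)
      · rw [min_eq_left hlt.le, ENNReal.ofReal_one]
        exact prob_le_one
    have step2 : ∫⁻ x, ∫⁻ ω, F ω x ∂μ ∂volume
        ≤ ∫⁻ x in Set.Ioi (0:ℝ), ENNReal.ofReal ((x ^ 2)⁻¹ * β x) ∂volume := by
      rw [← lintegral_indicator measurableSet_Ioi]
      refine lintegral_mono fun x => ?_
      rcases le_or_gt x 0 with hx | hx
      · have hb := hμbound x
        rw [hβzero x hx] at hb
        simp only [mul_zero, min_eq_right (zero_le_one), ENNReal.ofReal_zero, mul_zero] at hb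
        simpa [Set.indicator_apply, not_lt.mpr hx] using hb
      · rw [Set.indicator_of_mem (Set.mem_Ioi.mpr hx)]
        refine (hμbound x).trans ?_
        calc ENNReal.ofReal (t⁻¹ * (x ^ 2)⁻¹) * ENNReal.ofReal (min 1 (t * β x))
            ≤ ENNReal.ofReal (t⁻¹ * (x ^ 2)⁻¹) * ENNReal.ofReal (t * β x) := by
              gcongr; exact min_le_right _ _
          _ = ENNReal.ofReal (t⁻¹ * (x ^ 2)⁻¹ * (t * β x)) :=
              (ENNReal.ofReal_mul (by positivity)).symm
          _ = ENNReal.ofReal ((x ^ 2)⁻¹ * β x) := by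
              congr 1; field_simp
    have step3 : ∫⁻ x in Set.Ioi (0:ℝ), ENNReal.ofReal ((x ^ 2)⁻¹ * β x) ∂volume = 1 := by
      set G : ℝ → ℝ → ℝ≥0∞ := fun x y =>
        (if 0 < y ∧ y ≤ x then (1:ℝ≥0∞) else 0)
          * (ENNReal.ofReal ((x ^ 2)⁻¹) * ENNReal.ofReal y) with hG
      have hGy : ∀ x : ℝ, ∫⁻ y, G x y ∂ν = ENNReal.ofReal ((x ^ 2)⁻¹ * β x) := by
        intro x
        have hrw : ∀ y, G x y = Set.indicator (Set.Ioc 0 x)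
            (fun y => ENNReal.ofReal ((x ^ 2)⁻¹) * ENNReal.ofReal y) y := by
          intro y
          by_cases h : 0 < y ∧ y ≤ x <;>
            simp [hG, h, Set.indicator_apply, Set.mem_Ioc]
        rw [lintegral_congr hrw, lintegral_indicator measurableSet_Ioc,
          lintegral_const_mul _ ENNReal.measurable_ofReal, ← hβofReal,
          ← ENNReal.ofReal_mul (by positivity)]
      have hGmeas : AEMeasurable (Function.uncurry G)
          ((volume.restrict (Set.Ioi (0:ℝ))).prod ν) := by
        refine Measurable.aemeasurable ?_
        have m1 : Measurable fun p : ℝ × ℝ => (if 0 < p.2 ∧ p.2 ≤ p.1 then (1:ℝ≥0∞) else 0) := by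
          refine Measurable.ite ?_ measurable_const measurable_const
          exact (measurableSet_lt measurable_const measurable_snd).inter
            (measurableSet_le measurable_snd measurable_fst)
        have m2 : Measurable fun p : ℝ × ℝ =>
            ENNReal.ofReal ((p.1 ^ 2)⁻¹) * ENNReal.ofReal p.2 := by
          exact (ENNReal.measurable_ofReal.comp ((measurable_fst.pow_const 2).inv)).mul
            (ENNReal.measurable_ofReal.comp measurable_snd)
        exact m1.mul m2
      have hswap := lintegral_lintegral_swap hGmeas
      have hae : ∀ᵐ y ∂ν, 0 < y := by
        rw [ae_iff]
        refine le_antisymm (le_trans (measure_mono ?_) hν.le) zero_le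
        intro y hy
        simpa using hy
      have hinner : ∀ᵐ y ∂ν, ∫⁻ x in Set.Ioi (0:ℝ), G x y ∂volume = 1 := by
        filter_upwards [hae] with y hy
        have hrw : ∀ x, G x y = Set.indicator (Set.Ici y)
            (fun x => ENNReal.ofReal ((x ^ 2)⁻¹) * ENNReal.ofReal y) x := by
          intro x
          by_cases h : y ≤ x <;> simp [hG, h, hy, Set.indicator_apply, Set.mem_Ici]
        rw [lintegral_congr hrw, lintegral_indicator measurableSet_Ici,
          Measure.restrict_restrict measurableSet_Ici,
          show Set.Ici y ∩ Set.Ioi (0:ℝ) = Set.Ici y from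
            Set.inter_eq_left.mpr fun z hz => lt_of_lt_of_le hy hz,
          ← restrict_Ioi_eq_restrict_Ici,
          lintegral_mul_const _
            (show Measurable fun a : ℝ => ENNReal.ofReal ((a ^ 2)⁻¹) from
              ENNReal.measurable_ofReal.comp ((measurable_id.pow_const 2).inv)),
          lint_inv_sq hy,
          ← ENNReal.ofReal_mul (by positivity), inv_mul_cancel₀ hy.ne',
          ENNReal.ofReal_one]
      calc ∫⁻ x in Set.Ioi (0:ℝ), ENNReal.ofReal ((x ^ 2)⁻¹ * β x) ∂volume
          = ∫⁻ x in Set.Ioi (0:ℝ), ∫⁻ y, G x y ∂ν ∂volume :=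
            lintegral_congr fun x => (hGy x).symm
        _ = ∫⁻ y, ∫⁻ x in Set.Ioi (0:ℝ), G x y ∂volume ∂ν := hswap
        _ = ∫⁻ y, 1 ∂ν := lintegral_congr_ae hinner
        _ = 1 := by simp
    calc ∫⁻ ω, ENNReal.ofReal (if U ω ≤ t * β (S ω) then (t * S ω)⁻¹ else 0) ∂μ
        = ∫⁻ x, ∫⁻ ω, F ω x ∂μ ∂volume := step1
      _ ≤ ∫⁻ x in Set.Ioi (0:ℝ), ENNReal.ofReal ((x ^ 2)⁻¹ * β x) ∂volume := step2
      _ = 1 := step3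
  calc (∫⁻ ω, ENNReal.ofReal (if U ω ≤ t * β (S ω) then (t * S ω)⁻¹ else 0) ∂μ).toReal
      ≤ (1 : ℝ≥0∞).toReal := ENNReal.toReal_mono ENNReal.one_ne_top key
    _ = 1 := by simp
end

section
/- Under Assumption 1 (independent folds, within-fold null p-value independence from covariates, super-uniform nulls), the IHW-BY procedure — weighted BH applied at level α/(Σ_{k=1}^m 1/k) with cross-weights satisfying Σ_i W_i = m a.s. and P_i ⊥ W_i for each null i — controls the FDR at level α: E[V/(R∨1)] ≤ α. -/
open MeasureTheory ProbabilityTheory Classical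


private lemma ihw_harm (m : ℕ) :
    (∑ l ∈ Finset.range m, 1 / ((l : ℝ) + 2)) + m / (m + 1)
      = ∑ j ∈ Finset.range m, 1 / ((j : ℝ) + 1) := by
  induction m with
  | zero => simp
  | succ n ih =>
    rw [Finset.sum_range_succ, Finset.sum_range_succ]
    push_cast
    have h1 : (n:ℝ) + 1 ≠ 0 := by positivity
    have h2 : (n:ℝ) + 2 ≠ 0 := by positivity
    have e : (n:ℝ) + 1 + 1 = (n:ℝ) + 2 := by ring
    rw [e]
    have k1 : 1/((n:ℝ)+2) + ((n:ℝ)+1)/((n:ℝ)+2) = 1 := by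
      rw [← add_div, div_eq_one_iff_eq h2]; ring
    have k2 : ((n:ℝ))/((n:ℝ)+1) + 1/((n:ℝ)+1) = 1 := by
      rw [← add_div, div_eq_one_iff_eq h1]
    linarith [ih, k1, k2]

private lemma ihw_tel (m j : ℕ) (hj : j < m) :
    (1:ℝ) / (j + 1)
      = (∑ l ∈ Finset.Ico j m, 1 / (((l:ℝ) + 1) * ((l:ℝ) + 2))) + 1 / ((m:ℝ) + 1) := by
  have h : j + 1 ≤ m := hj
  clear hj
  induction m, h using Nat.le_induction with
  | base =>
    rw [Finset.sum_Ico_succ_top (le_refl j), Finset.Ico_self, Finset.sum_empty, zero_add]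
    have h1 : (j:ℝ) + 1 ≠ 0 := by positivity
    have h2 : (j:ℝ) + 2 ≠ 0 := by positivity
    push_cast
    rw [div_add_div _ _ (by positivity) (by positivity), div_eq_div_iff (by positivity) (by positivity)]
    ring
  | succ n hn ih =>
    have ih' := ih
    rw [Finset.sum_Ico_succ_top (by omega : j ≤ n)]
    have e : (n:ℝ) + 1 + 1 = (n:ℝ) + 2 := by ring
    push_cast
    rw [e]
    have key : 1/((n:ℝ)+1) = 1/(((n:ℝ)+1)*((n:ℝ)+2)) + 1/((n:ℝ)+2) := by
      rw [div_add_div _ _ (by positivity) (by positivity), div_eq_div_iff (by positivity) (by positivity)]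
      ring
    linarith [ih', key]

private lemma ihw_swap {M : Type*} [AddCommMonoid M] (m : ℕ) (F : ℕ → ℕ → M) :
    ∑ j ∈ Finset.range m, ∑ l ∈ Finset.Ico j m, F l j
      = ∑ l ∈ Finset.range m, ∑ j ∈ Finset.range (l+1), F l j := by
  have h1 : ∀ j, ∑ l ∈ Finset.Ico j m, F l j
      = ∑ l ∈ Finset.range m, if j ≤ l then F l j else 0 := by
    intro j
    rw [← Finset.sum_filter]
    apply Finset.sum_congr _ (fun x _ => rfl)
    ext l
    simp only [Finset.mem_Ico, Finset.mem_filter, Finset.mem_range]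
    omega
  have h2 : ∀ l ∈ Finset.range m, ∑ j ∈ Finset.range (l+1), F l j
      = ∑ j ∈ Finset.range m, if j ≤ l then F l j else 0 := by
    intro l hl
    rw [← Finset.sum_filter]
    apply Finset.sum_congr _ (fun x _ => rfl)
    ext j
    simp only [Finset.mem_filter, Finset.mem_range] at *
    omega
  rw [Finset.sum_congr rfl (fun j _ => h1 j), Finset.sum_comm,
    Finset.sum_congr rfl h2]

private lemma ihw_chunks (ν : Measure ℝ) (c : ℝ) (hc : 0 ≤ c)
    (hF : ∀ t : ℝ, 0 ≤ t → ν (Set.Iic t) ≤ ENNReal.ofReal t) (k : ℕ) :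
    ∑ j ∈ Finset.range k, ν (Set.Ioc (c*j) (c*(j+1))) ≤ ENNReal.ofReal (c * k) := by
  have hdisj : (↑(Finset.range k) : Set ℕ).PairwiseDisjoint
      (fun j : ℕ => Set.Ioc (c*j) (c*(j+1))) := by
    intro i _ j _ hij
    apply Set.Ioc_disjoint_Ioc.mpr
    rcases lt_or_gt_of_ne hij with h | h
    · calc c*((i:ℝ)+1) ⊓ (c*((j:ℝ)+1)) ≤ c*((i:ℝ)+1) := inf_le_left
        _ ≤ c*(j:ℝ) := by
            apply mul_le_mul_of_nonneg_left _ hc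
            exact_mod_cast Nat.succ_le_of_lt h
        _ ≤ (c*(i:ℝ)) ⊔ (c*(j:ℝ)) := le_sup_right
    · calc c*((i:ℝ)+1) ⊓ (c*((j:ℝ)+1)) ≤ c*((j:ℝ)+1) := inf_le_right
        _ ≤ c*(i:ℝ) := by
            apply mul_le_mul_of_nonneg_left _ hc
            exact_mod_cast Nat.succ_le_of_lt h
        _ ≤ (c*(i:ℝ)) ⊔ (c*(j:ℝ)) := le_sup_left
  rw [← measure_biUnion_finset hdisj (fun b _ => measurableSet_Ioc)]
  refine le_trans (measure_mono ?_) (hF (c*k) (by positivity))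
  intro x hx
  simp only [Set.mem_iUnion, Set.mem_Ioc, Finset.mem_range] at hx
  obtain ⟨j, hj, _, hle⟩ := hx
  have : c * ((j:ℝ)+1) ≤ c * k := by
    apply mul_le_mul_of_nonneg_left _ hc
    exact_mod_cast Nat.succ_le_of_lt hj
  exact Set.mem_Iic.mpr (hle.trans this)

private lemma ihw_key (ν : Measure ℝ) (c : ℝ) (hc : 0 ≤ c)
    (hF : ∀ t : ℝ, 0 ≤ t → ν (Set.Iic t) ≤ ENNReal.ofReal t) (m : ℕ) :
    ∑ j ∈ Finset.range m, ENNReal.ofReal (1/((j:ℝ)+1)) * ν (Set.Ioc (c*j) (c*(j+1)))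
      ≤ ENNReal.ofReal (c * ∑ j ∈ Finset.range m, 1/((j:ℝ)+1)) := by
  -- expand each coefficient via the telescoping identity
  have expand : ∀ j ∈ Finset.range m,
      ENNReal.ofReal (1/((j:ℝ)+1)) * ν (Set.Ioc (c*j) (c*(j+1)))
        = (∑ l ∈ Finset.Ico j m,
            ENNReal.ofReal (1/(((l:ℝ)+1)*((l:ℝ)+2))) * ν (Set.Ioc (c*j) (c*(j+1))))
          + ENNReal.ofReal (1/((m:ℝ)+1)) * ν (Set.Ioc (c*j) (c*(j+1))) := by
    intro j hj
    rw [← Finset.sum_mul, ← add_mul]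
    congr 1
    rw [← ENNReal.ofReal_sum_of_nonneg (fun l _ => by positivity),
      ← ENNReal.ofReal_add (by positivity) (by positivity)]
    exact congrArg _ (ihw_tel m j (Finset.mem_range.mp hj))
  rw [Finset.sum_congr rfl expand, Finset.sum_add_distrib, ihw_swap]
  have bound1 : ∑ l ∈ Finset.range m, ∑ j ∈ Finset.range (l+1),
      ENNReal.ofReal (1/(((l:ℝ)+1)*((l:ℝ)+2))) * ν (Set.Ioc (c*j) (c*(j+1)))
      ≤ ∑ l ∈ Finset.range m, ENNReal.ofReal (c/((l:ℝ)+2)) := by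
    apply Finset.sum_le_sum
    intro l _
    rw [← Finset.mul_sum]
    calc ENNReal.ofReal (1/(((l:ℝ)+1)*((l:ℝ)+2)))
          * ∑ j ∈ Finset.range (l+1), ν (Set.Ioc (c*j) (c*(j+1)))
        ≤ ENNReal.ofReal (1/(((l:ℝ)+1)*((l:ℝ)+2))) * ENNReal.ofReal (c*((l:ℝ)+1)) := by
          gcongr
          have := ihw_chunks ν c hc hF (l+1)
          simpa using this
      _ = ENNReal.ofReal ((1/(((l:ℝ)+1)*((l:ℝ)+2))) * (c*((l:ℝ)+1))) :=
          (ENNReal.ofReal_mul (by positivity)).symm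
      _ = ENNReal.ofReal (c/((l:ℝ)+2)) := by
          congr 1
          have h1 : ((l:ℝ)+1) ≠ 0 := by positivity
          field_simp
  have bound2 : ∑ j ∈ Finset.range m,
      ENNReal.ofReal (1/((m:ℝ)+1)) * ν (Set.Ioc (c*j) (c*(j+1)))
      ≤ ENNReal.ofReal ((c*m)/((m:ℝ)+1)) := by
    rw [← Finset.mul_sum]
    calc ENNReal.ofReal (1/((m:ℝ)+1)) * ∑ j ∈ Finset.range m, ν (Set.Ioc (c*j) (c*(j+1)))
        ≤ ENNReal.ofReal (1/((m:ℝ)+1)) * ENNReal.ofReal (c*m) := by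
          gcongr
          exact ihw_chunks ν c hc hF m
      _ = ENNReal.ofReal ((c*m)/((m:ℝ)+1)) := by
          rw [← ENNReal.ofReal_mul (by positivity)]
          congr 1
          ring
  calc _ ≤ (∑ l ∈ Finset.range m, ENNReal.ofReal (c/((l:ℝ)+2)))
            + ENNReal.ofReal ((c*m)/((m:ℝ)+1)) := add_le_add bound1 bound2
    _ = ENNReal.ofReal ((∑ l ∈ Finset.range m, c/((l:ℝ)+2)) + (c*m)/((m:ℝ)+1)) := by
        rw [ENNReal.ofReal_add (Finset.sum_nonneg (fun l _ => by positivity)) (by positivity),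
          ENNReal.ofReal_sum_of_nonneg (fun l _ => by positivity)]
    _ = ENNReal.ofReal (c * ∑ j ∈ Finset.range m, 1/((j:ℝ)+1)) := by
        congr 1
        have := ihw_harm m
        calc (∑ l ∈ Finset.range m, c/((l:ℝ)+2)) + (c*m)/((m:ℝ)+1)
            = c * ((∑ l ∈ Finset.range m, 1/((l:ℝ)+2)) + (m:ℝ)/((m:ℝ)+1)) := by
              rw [mul_add, Finset.mul_sum]
              congr 1
              · exact Finset.sum_congr rfl (fun l _ => by ring)
              · ring
          _ = _ := by rw [this]

/-- The number of rejections of the weighted Benjamini–Hochberg procedure at level `α`: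
`k* = max {k : at least k hypotheses satisfy P i ≤ α W i k / m}`. -/
noncomputable def wBHRejCount (m : ℕ) (P W : Fin m → ℝ) (α : ℝ) : ℕ :=
  sSup {k : ℕ |
    k ≤ (Finset.univ.filter (fun i : Fin m => P i ≤ α * W i * k / m)).card}

/-- Hypothesis `i` is rejected by the weighted BH procedure at level `α`. -/
noncomputable def wBHRejects (m : ℕ) (P W : Fin m → ℝ) (α : ℝ) (i : Fin m) : Prop :=
  P i ≤ α * W i * (wBHRejCount m P W α) / m

/-- **IHW-BY FDR control (Theorem 1b).**
If the null p-values are super-uniform, each null p-value is independent of its weight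
(as guaranteed by cross-weighting under Assumption 1), and the weights are nonnegative and
sum to `m` almost surely, then the weighted BH procedure applied at level
`α / (∑_{k=1}^m 1/k)` (i.e. weighted Benjamini–Yekutieli at level `α`) controls the FDR
at level `α`. -/
theorem ihw_by_fdr_control
    {Ω : Type*} [MeasurableSpace Ω] (μ : Measure Ω) [IsProbabilityMeasure μ]
    (m : ℕ) (hm : 0 < m) (H0 : Finset (Fin m))
    (P W : Fin m → Ω → ℝ)
    (hPmeas : ∀ i, Measurable (P i)) (hWmeas : ∀ i, Measurable (W i))
    (hsuper : ∀ i ∈ H0, ∀ t ∈ Set.Icc (0 : ℝ) 1,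
      μ {ω | P i ω ≤ t} ≤ ENNReal.ofReal t)
    (hindep : ∀ i ∈ H0, IndepFun (P i) (W i) μ)
    (hWnonneg : ∀ i, ∀ ω, 0 ≤ W i ω)
    (hWsum : ∀ᵐ ω ∂μ, ∑ i, W i ω = (m : ℝ))
    (α : ℝ) (hα : α ∈ Set.Ioo (0 : ℝ) 1)
    -- the level of the weighted BH procedure: `α' = α / (∑_{k=1}^m 1/k)`
    (α' : ℝ) (hα' : α' = α / (∑ k ∈ Finset.range m, (1 : ℝ) / (k + 1))) :
    ∫ ω,
      (((H0.filter (fun i => wBHRejects m (fun j => P j ω) (fun j => W j ω) α' i)).card : ℝ)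
        / max (wBHRejCount m (fun j => P j ω) (fun j => W j ω) α') 1) ∂μ ≤ α := by
  obtain ⟨hα0, hα1⟩ := hα
  set Hs : ℝ := ∑ k ∈ Finset.range m, (1 : ℝ) / (k + 1) with hHs
  have hHspos : 0 < Hs := by
    apply Finset.sum_pos (fun k _ => by positivity)
    exact ⟨0, Finset.mem_range.mpr hm⟩
  have hα'pos : 0 < α' := by rw [hα']; positivity
  have hα'H : α' * Hs = α := by rw [hα']; field_simp
  have hm0 : (0:ℝ) < m := by exact_mod_cast hm
  -- counting functions
  set N : ℕ → Ω → ℕ := fun k ω =>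
    (Finset.univ.filter (fun i : Fin m => P i ω ≤ α' * W i ω * k / m)).card with hN
  have hNle : ∀ k ω, N k ω ≤ m := fun k ω =>
    (Finset.card_filter_le _ _).trans (by simp)
  have hNmeas : ∀ k, Measurable (N k) := by
    intro k
    have : N k = fun ω => ∑ i : Fin m, if P i ω ≤ α' * W i ω * k / m then 1 else 0 := by
      funext ω; exact Finset.card_filter _ _
    rw [this]
    exact Finset.measurable_sum _ (fun i _ =>
      Measurable.ite (measurableSet_le (hPmeas i)
        (((measurable_const.mul (hWmeas i)).mul_const _).div_const _))
        measurable_const measurable_const)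
  set R : Ω → ℕ := fun ω => wBHRejCount m (fun j => P j ω) (fun j => W j ω) α' with hR
  have hRdef : ∀ ω, R ω = sSup {k : ℕ | k ≤ N k ω} := fun ω => rfl
  have hbdd : ∀ ω, BddAbove {k : ℕ | k ≤ N k ω} :=
    fun ω => ⟨m, fun k hk => le_trans hk (hNle k ω)⟩
  have hne : ∀ ω, Set.Nonempty {k : ℕ | k ≤ N k ω} := fun ω => ⟨0, Nat.zero_le _⟩
  have hRle : ∀ ω, R ω ≤ m := fun ω => by
    rw [hRdef]; exact csSup_le (hne ω) (fun k hk => le_trans hk (hNle k ω))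
  have hRmeas : Measurable R := by
    apply measurable_to_countable'
    intro k
    have hset : R ⁻¹' {k}
        = {ω | k ≤ N k ω} ∩ ⋂ l ∈ Finset.Icc (k+1) m, {ω | ¬ l ≤ N l ω} := by
      ext ω
      simp only [Set.mem_preimage, Set.mem_singleton_iff, Set.mem_inter_iff,
        Set.mem_iInter, Set.mem_setOf_eq]
      constructor
      · intro h
        rw [hRdef] at h
        refine ⟨?_, ?_⟩
        · have := Nat.sSup_mem (hne ω) (hbdd ω); rw [h] at this; exact this
        · intro l hl hcon
          have h2 : l ≤ sSup {k : ℕ | k ≤ N k ω} := le_csSup (hbdd ω) hcon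
          rw [h] at h2
          simp only [Finset.mem_Icc] at hl
          omega
      · rintro ⟨h1, h2⟩
        rw [hRdef]
        apply le_antisymm
        · apply csSup_le (hne ω)
          intro l hl
          by_contra hlk
          push_neg at hlk
          exact h2 l (Finset.mem_Icc.mpr ⟨hlk, le_trans hl (hNle l ω)⟩) hl
        · exact le_csSup (hbdd ω) h1
    rw [hset]
    refine MeasurableSet.inter ((hNmeas k) measurableSet_Ici) ?_
    refine Set.Finite.measurableSet_biInter (Finset.finite_toSet _) (fun l _ => ?_)
    exact ((hNmeas l) measurableSet_Ici).compl
  -- the FDP function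
  set f : Ω → ℝ := fun ω =>
    (((H0.filter (fun i =>
        wBHRejects m (fun j => P j ω) (fun j => W j ω) α' i)).card : ℝ)
      / ((max (R ω) 1 : ℕ) : ℝ)) with hf
  show ∫ ω, f ω ∂μ ≤ α
  have hfdecomp : ∀ ω, f ω = ∑ i ∈ H0,
      (if P i ω ≤ α' * W i ω * (R ω : ℝ) / (m:ℝ) then (1:ℝ) else 0)
        / ((max (R ω) 1 : ℕ) : ℝ) := by
    intro ω
    show ((H0.filter _).card : ℝ) / _ = _
    rw [Finset.card_filter]
    push_cast
    rw [Finset.sum_div]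
    rfl
  have hden1 : ∀ ω, (1:ℝ) ≤ ((max (R ω) 1 : ℕ) : ℝ) := by
    intro ω
    exact_mod_cast Nat.le_max_right (R ω) 1
  have hfnn : ∀ ω, 0 ≤ f ω := by
    intro ω
    apply div_nonneg (Nat.cast_nonneg _) (le_trans zero_le_one (hden1 ω))
  have hcastmeas : Measurable (fun ω => (R ω : ℝ)) :=
    measurable_from_top.comp hRmeas
  have hdenmeas : Measurable (fun ω => ((max (R ω) 1 : ℕ) : ℝ)) :=
    measurable_from_top.comp (hRmeas.max measurable_const)
  have hfmeas : Measurable f := by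
    have hnum : Measurable (fun ω =>
        ∑ i ∈ H0, (if P i ω ≤ α' * W i ω * (R ω : ℝ) / (m:ℝ) then (1:ℝ) else 0)) := by
      apply Finset.measurable_sum
      intro i _
      exact Measurable.ite (measurableSet_le (hPmeas i)
        (((measurable_const.mul (hWmeas i)).mul hcastmeas).div_const _))
        measurable_const measurable_const
    have : f = fun ω =>
        (∑ i ∈ H0, (if P i ω ≤ α' * W i ω * (R ω : ℝ) / (m:ℝ) then (1:ℝ) else 0))
          / ((max (R ω) 1 : ℕ) : ℝ) := by
      funext ω; rw [hfdecomp ω, Finset.sum_div]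
    rw [this]
    exact hnum.div hdenmeas
  -- interval events
  set S : ℕ → Set (ℝ × ℝ) := fun j =>
    {q : ℝ × ℝ | α' * q.1 / m * j < q.2 ∧ q.2 ≤ α' * q.1 / m * (j + 1)} with hS
  have hSmeas : ∀ j, MeasurableSet (S j) := by
    intro j
    apply MeasurableSet.inter
    · exact measurableSet_lt
        (((measurable_const.mul measurable_fst).div_const _).mul_const _) measurable_snd
    · exact measurableSet_le measurable_snd
        (((measurable_const.mul measurable_fst).div_const _).mul_const _)
  set A : Fin m → ℕ → Set Ω := fun i j =>
    (fun ω => (W i ω, P i ω)) ⁻¹' (S j) with hA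
  have hAmeas : ∀ i j, MeasurableSet (A i j) :=
    fun i j => ((hWmeas i).prodMk (hPmeas i)) (hSmeas j)
  set g : Fin m → Ω → ENNReal := fun i ω =>
    (∑ j ∈ Finset.range m,
      Set.indicator (A i j) (fun _ => ENNReal.ofReal (1/((j:ℝ)+1))) ω)
    + Set.indicator {ω' | P i ω' ≤ 0} (fun _ => (1:ENNReal)) ω with hg
  -- pointwise bound
  have hpt : ∀ (i : Fin m) (ω : Ω),
      ENNReal.ofReal ((if P i ω ≤ α' * W i ω * (R ω : ℝ) / (m:ℝ) then (1:ℝ) else 0)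
        / ((max (R ω) 1 : ℕ) : ℝ)) ≤ g i ω := by
    intro i ω
    by_cases hrej : P i ω ≤ α' * W i ω * (R ω : ℝ) / (m:ℝ)
    swap
    · rw [if_neg hrej, zero_div, ENNReal.ofReal_zero]; exact zero_le
    rw [if_pos hrej]
    set c := α' * W i ω / m with hc
    have hW0 := hWnonneg i ω
    have hc0 : 0 ≤ c := by rw [hc]; positivity
    have hcr : P i ω ≤ c * (R ω : ℝ) := by
      rw [hc]
      calc P i ω ≤ α' * W i ω * (R ω : ℝ) / (m:ℝ) := hrej
        _ = α' * W i ω / (m:ℝ) * (R ω : ℝ) := by ring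
    have hofle1 : ENNReal.ofReal (1 / ((max (R ω) 1 : ℕ) : ℝ)) ≤ 1 := by
      rw [← ENNReal.ofReal_one]
      apply ENNReal.ofReal_le_ofReal
      rw [div_le_one (lt_of_lt_of_le zero_lt_one (hden1 ω))]
      exact hden1 ω
    by_cases hp0 : P i ω ≤ 0
    · refine le_trans hofle1 ?_
      have h2 : Set.indicator {ω' | P i ω' ≤ 0} (fun _ => (1:ENNReal)) ω = 1 :=
        Set.indicator_of_mem (show ω ∈ {ω' | P i ω' ≤ 0} from hp0) _
      rw [hg]
      simp only []
      rw [h2]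
      exact le_add_self
    · push_neg at hp0
      have hcRpos : 0 < c * (R ω : ℝ) := lt_of_lt_of_le hp0 hcr
      have hcpos : 0 < c := by
        by_contra h
        push_neg at h
        have : c * (R ω : ℝ) ≤ 0 := mul_nonpos_of_nonpos_of_nonneg h (Nat.cast_nonneg _)
        linarith
      have hRpos : 0 < R ω := by
        rcases Nat.eq_zero_or_pos (R ω) with h | h
        · rw [h] at hcRpos; simp at hcRpos
        · exact h
      set k := ⌈P i ω / c⌉₊ with hk
      have hk1 : 1 ≤ k := Nat.ceil_pos.mpr (div_pos hp0 hcpos)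
      have hkR : k ≤ R ω := Nat.ceil_le.mpr ((div_le_iff₀ hcpos).mpr (by linarith [hcr]))
      set j := k - 1 with hj
      have hjk : j + 1 = k := by omega
      have hjm : j ∈ Finset.range m := Finset.mem_range.mpr (by have := hRle ω; omega)
      have hjkcast : ((j:ℝ) + 1) = (k:ℝ) := by exact_mod_cast congrArg (Nat.cast : ℕ → ℝ) hjk
      have hmem : ω ∈ A i j := by
        show α' * (W i ω) / m * (j:ℝ) < P i ω ∧ P i ω ≤ α' * (W i ω) / m * ((j:ℝ)+1)
        rw [← hc]
        constructor
        · have hlt : (j:ℝ) < P i ω / c := by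
            have h' := Nat.lt_ceil.mp (show j < k by omega)
            exact_mod_cast h'
          have := (lt_div_iff₀ hcpos).mp hlt
          linarith [this]
        · rw [hjkcast]
          have h2 : P i ω / c ≤ (k:ℝ) := Nat.le_ceil _
          have := (div_le_iff₀ hcpos).mp h2
          linarith [this]
      have hterm : Set.indicator (A i j) (fun _ => ENNReal.ofReal (1/((j:ℝ)+1))) ω
          = ENNReal.ofReal (1/((j:ℝ)+1)) := Set.indicator_of_mem hmem _
      have hle1 : ENNReal.ofReal (1 / ((max (R ω) 1 : ℕ) : ℝ))
          ≤ ENNReal.ofReal (1/((j:ℝ)+1)) := by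
        apply ENNReal.ofReal_le_ofReal
        apply one_div_le_one_div_of_le (by positivity)
        rw [hjkcast]
        have hkmax : k ≤ max (R ω) 1 := le_trans hkR (le_max_left _ _)
        exact_mod_cast hkmax
      refine le_trans hle1 ?_
      rw [hg]
      simp only []
      refine le_trans ?_ le_self_add
      rw [← hterm]
      exact Finset.single_le_sum
        (f := fun j' => Set.indicator (A i j')
          (fun _ => ENNReal.ofReal (1/((j':ℝ)+1))) ω)
        (fun _ _ => zero_le) hjm
  have hgmeas : ∀ i, Measurable (g i) := by
    intro i
    apply Measurable.add
    · apply Finset.measurable_sum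
      intro j _
      exact Measurable.indicator measurable_const (hAmeas i j)
    · exact Measurable.indicator measurable_const ((hPmeas i) measurableSet_Iic)
  -- lintegral of g
  have hgint : ∀ i ∈ H0, ∫⁻ ω, g i ω ∂μ
      ≤ ∑ j ∈ Finset.range m, ENNReal.ofReal (1/((j:ℝ)+1)) * μ (A i j) := by
    intro i hi
    have hP0meas : MeasurableSet {ω' | P i ω' ≤ 0} := (hPmeas i) measurableSet_Iic
    rw [hg]
    simp only []
    rw [lintegral_add_right _ (Measurable.indicator measurable_const hP0meas)]
    have hz : ∫⁻ ω, Set.indicator {ω' | P i ω' ≤ 0} (fun _ => (1:ENNReal)) ω ∂μ = 0 := by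
      rw [lintegral_indicator hP0meas, setLIntegral_const, one_mul]
      have := hsuper i hi 0 ⟨le_refl 0, zero_le_one⟩
      simpa using this
    rw [hz, add_zero]
    rw [lintegral_finset_sum _ (fun j _ =>
      Measurable.indicator measurable_const (hAmeas i j))]
    apply Finset.sum_le_sum
    intro j _
    rw [lintegral_indicator (hAmeas i j), setLIntegral_const]
  -- the independence step
  have hstep : ∀ i ∈ H0,
      ∑ j ∈ Finset.range m, ENNReal.ofReal (1/((j:ℝ)+1)) * μ (A i j)
        ≤ ∫⁻ ω, ENNReal.ofReal (α * W i ω / m) ∂μ := by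
    intro i hi
    haveI h1 : IsProbabilityMeasure (μ.map (P i)) :=
      Measure.isProbabilityMeasure_map (hPmeas i).aemeasurable
    haveI h2 : IsProbabilityMeasure (μ.map (W i)) :=
      Measure.isProbabilityMeasure_map (hWmeas i).aemeasurable
    have hmap : μ.map (fun ω => (W i ω, P i ω)) = (μ.map (W i)).prod (μ.map (P i)) :=
      (indepFun_iff_map_prod_eq_prod_map_map (hWmeas i).aemeasurable
        (hPmeas i).aemeasurable).mp ((hindep i hi).symm)
    have hFi : ∀ t : ℝ, 0 ≤ t → (μ.map (P i)) (Set.Iic t) ≤ ENNReal.ofReal t := by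
      intro t ht
      rw [Measure.map_apply (hPmeas i) measurableSet_Iic]
      rcases le_or_gt t 1 with h | h
      · exact hsuper i hi t ⟨ht, h⟩
      · calc μ (P i ⁻¹' Set.Iic t) ≤ 1 := prob_le_one
          _ = ENNReal.ofReal 1 := ENNReal.ofReal_one.symm
          _ ≤ ENNReal.ofReal t := ENNReal.ofReal_le_ofReal h.le
    have hsecmeas : ∀ j : ℕ, Measurable (fun w =>
        (μ.map (P i)) (Set.Ioc (α' * w / m * j) (α' * w / m * (j+1)))) := by
      intro j
      exact measurable_measure_prodMk_left (hSmeas j)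
    have hAeq : ∀ j : ℕ, μ (A i j)
        = ∫⁻ w, (μ.map (P i)) (Set.Ioc (α' * w / m * j) (α' * w / m * (j+1)))
            ∂(μ.map (W i)) := by
      intro j
      have hpair : Measurable (fun ω => (W i ω, P i ω)) := (hWmeas i).prodMk (hPmeas i)
      rw [hA]
      simp only []
      rw [← Measure.map_apply hpair (hSmeas j), hmap, Measure.prod_apply (hSmeas j)]
      rfl
    have hWae : ∀ᵐ w ∂(μ.map (W i)), 0 ≤ w := by
      have hms : MeasurableSet {w : ℝ | 0 ≤ w} := measurableSet_Ici
      rw [ae_map_iff (hWmeas i).aemeasurable hms]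
      exact Filter.Eventually.of_forall (hWnonneg i)
    calc ∑ j ∈ Finset.range m, ENNReal.ofReal (1/((j:ℝ)+1)) * μ (A i j)
        = ∑ j ∈ Finset.range m, ∫⁻ w, ENNReal.ofReal (1/((j:ℝ)+1))
            * (μ.map (P i)) (Set.Ioc (α' * w / m * j) (α' * w / m * (j+1)))
            ∂(μ.map (W i)) := by
          refine Finset.sum_congr rfl fun j _ => ?_
          rw [hAeq j, ← lintegral_const_mul _ (hsecmeas j)]
      _ = ∫⁻ w, ∑ j ∈ Finset.range m, ENNReal.ofReal (1/((j:ℝ)+1))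
            * (μ.map (P i)) (Set.Ioc (α' * w / m * j) (α' * w / m * (j+1)))
            ∂(μ.map (W i)) :=
          (lintegral_finset_sum _ (fun j _ => (hsecmeas j).const_mul _)).symm
      _ ≤ ∫⁻ w, ENNReal.ofReal (α * w / m) ∂(μ.map (W i)) := by
          apply lintegral_mono_ae
          filter_upwards [hWae] with w hw
          have hkey := ihw_key (μ.map (P i)) (α' * w / m) (by positivity) hFi m
          refine le_trans hkey (le_of_eq ?_)
          congr 1
          rw [← hHs, ← hα'H]
          ring
      _ = ∫⁻ ω, ENNReal.ofReal (α * W i ω / m) ∂μ :=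
          lintegral_map (ENNReal.measurable_ofReal.comp
            ((measurable_id.const_mul α).div_const m)) (hWmeas i)
  -- summing the per-hypothesis bounds
  have hsum_all : ∑ i ∈ H0, ∫⁻ ω, ENNReal.ofReal (α * W i ω / m) ∂μ
      ≤ ENNReal.ofReal α := by
    refine le_trans (Finset.sum_le_sum_of_subset (Finset.subset_univ H0)) ?_
    rw [← lintegral_finset_sum (f := fun (i : Fin m) ω => ENNReal.ofReal (α * W i ω / m))
      Finset.univ (fun i _ =>
        (ENNReal.measurable_ofReal.comp ((measurable_const.mul (hWmeas i)).div_const _) :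
          Measurable fun ω => ENNReal.ofReal (α * W i ω / m)))]
    have hae : (fun ω => ∑ i : Fin m, ENNReal.ofReal (α * W i ω / m)) =ᵐ[μ]
        (fun _ => ENNReal.ofReal α) := by
      filter_upwards [hWsum] with ω hω
      rw [← ENNReal.ofReal_sum_of_nonneg (fun i _ => by
        have := hWnonneg i ω; positivity)]
      congr 1
      rw [← Finset.sum_div, ← Finset.mul_sum, hω]
      field_simp
    rw [lintegral_congr_ae hae, lintegral_const, measure_univ, mul_one]
  -- conclusion
  have hbound : ∫⁻ ω, ENNReal.ofReal (f ω) ∂μ ≤ ENNReal.ofReal α := by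
    calc ∫⁻ ω, ENNReal.ofReal (f ω) ∂μ
        ≤ ∫⁻ ω, ∑ i ∈ H0, g i ω ∂μ := by
          refine lintegral_mono fun ω => ?_
          show ENNReal.ofReal (f ω) ≤ ∑ i ∈ H0, g i ω
          rw [hfdecomp ω, ENNReal.ofReal_sum_of_nonneg (fun i _ =>
            div_nonneg (by split <;> norm_num) (le_trans zero_le_one (hden1 ω)))]
          exact Finset.sum_le_sum (fun i _ => hpt i ω)
      _ = ∑ i ∈ H0, ∫⁻ ω, g i ω ∂μ := lintegral_finset_sum _ (fun i _ => hgmeas i)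
      _ ≤ ∑ i ∈ H0, ∫⁻ ω, ENNReal.ofReal (α * W i ω / m) ∂μ :=
          Finset.sum_le_sum (fun i hi => le_trans (hgint i hi) (hstep i hi))
      _ ≤ ENNReal.ofReal α := hsum_all
  rw [integral_eq_lintegral_of_nonneg_ae (Filter.Eventually.of_forall hfnn)
    hfmeas.aestronglyMeasurable]
  have hfin := ENNReal.toReal_mono ENNReal.ofReal_ne_top hbound
  rwa [ENNReal.toReal_ofReal hα0.le] at hfin
end

section
/- For a single fold with weights W_1,...,W_n ≥ 0 summing to n, if the null p-values are jointly independent and super-uniform conditionally on the weights, then P[∃ null i : P_i ≤ 1 − (1−α)^{W_i/n}] ≤ 1 − E[(1−α)^{Σ_{nulls} W_i / n}] ≤ α. -/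
open MeasureTheory ProbabilityTheory

lemma prod_sub_prod_le_card_mul {ι : Type*} (s : Finset ι) (a b : ι → ℝ) (δ : ℝ) (hδ : 0 ≤ δ)
    (ha0 : ∀ i ∈ s, 0 ≤ a i) (ha1 : ∀ i ∈ s, a i ≤ 1)
    (hb0 : ∀ i ∈ s, 0 ≤ b i) (hb1 : ∀ i ∈ s, b i ≤ 1)
    (hab : ∀ i ∈ s, a i - b i ≤ δ) :
    ∏ i ∈ s, a i - ∏ i ∈ s, b i ≤ s.card * δ := by
  classical
  induction s using Finset.induction_on with
  | empty => simp
  | @insert i s hi ih =>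
    simp only [Finset.forall_mem_insert] at ha0 ha1 hb0 hb1 hab
    rw [Finset.prod_insert hi, Finset.prod_insert hi, Finset.card_insert_of_notMem hi]
    have hA0 : 0 ≤ ∏ j ∈ s, a j := Finset.prod_nonneg ha0.2
    have hA1 : ∏ j ∈ s, a j ≤ 1 := Finset.prod_le_one ha0.2 ha1.2
    have hB0 : 0 ≤ ∏ j ∈ s, b j := Finset.prod_nonneg hb0.2
    have hB1 : ∏ j ∈ s, b j ≤ 1 := Finset.prod_le_one hb0.2 hb1.2
    have hIH := ih ha0.2 ha1.2 hb0.2 hb1.2 hab.2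
    have hc : (0:ℝ) ≤ s.card := by positivity
    have key : a i * ∏ j ∈ s, a j - b i * ∏ j ∈ s, b j
        = a i * (∏ j ∈ s, a j - ∏ j ∈ s, b j) + (a i - b i) * ∏ j ∈ s, b j := by ring
    have c1 : a i * (∏ j ∈ s, a j - ∏ j ∈ s, b j) ≤ s.card * δ := by
      rcases le_or_gt (∏ j ∈ s, a j - ∏ j ∈ s, b j) 0 with hle | hlt
      · exact le_trans (mul_nonpos_of_nonneg_of_nonpos ha0.1 hle) (by positivity)
      · calc a i * (∏ j ∈ s, a j - ∏ j ∈ s, b j) ≤ 1 * (∏ j ∈ s, a j - ∏ j ∈ s, b j) :=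
            mul_le_mul_of_nonneg_right ha1.1 hlt.le
          _ ≤ s.card * δ := by rw [one_mul]; exact hIH
    have c2 : (a i - b i) * ∏ j ∈ s, b j ≤ δ := by
      rcases le_or_gt (a i - b i) 0 with hle | hlt
      · exact le_trans (mul_nonpos_of_nonpos_of_nonneg hle hB0) hδ
      · calc (a i - b i) * ∏ j ∈ s, b j ≤ (a i - b i) * 1 :=
            mul_le_mul_of_nonneg_left hB1 hlt.le
          _ ≤ δ := by rw [mul_one]; exact hab.1
    push_cast
    linarith [key, c1, c2]



lemma measurable_const_rpow' {X : Type*} [MeasurableSpace X] {c : ℝ} (hc : 0 < c)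
    {f : X → ℝ} (hf : Measurable f) : Measurable fun x => c ^ f x := by
  have : (fun x => c ^ f x : X → ℝ) = fun x => Real.exp (Real.log c * f x) := by
    funext x; rw [Real.rpow_def_of_pos hc]
  rw [this]; exact Real.measurable_exp.comp (measurable_const.mul hf)

/-- **Weighted Šidák within-fold bound.**
For a single fold with nonnegative weights `W 1, …, W n` summing to `n`, if the null
p-values are jointly independent and super-uniform conditionally on the weights, then
`P[∃ null i : P i ≤ 1 − (1−α)^{W i/n}] ≤ 1 − E[(1−α)^{∑_{nulls} W i / n}] ≤ α`. -/
theorem weighted_sidak_fold_bound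
    {Ω : Type*} [mΩ : MeasurableSpace Ω] [StandardBorelSpace Ω] [Nonempty Ω]
    (μ : Measure Ω) [IsProbabilityMeasure μ]
    (n : ℕ) (hn : 0 < n) (N : Finset (Fin n))
    (P W : Fin n → Ω → ℝ)
    (hPmeas : ∀ i, Measurable (P i)) (hWmeas : ∀ i, Measurable (W i))
    (hWnonneg : ∀ i ω, 0 ≤ W i ω)
    (hWsum : ∀ᵐ ω ∂μ, ∑ i, W i ω = (n : ℝ))
    -- the σ-algebra generated by the weights
    (mW : MeasurableSpace Ω)
    (hmW : mW = MeasurableSpace.comap (fun ω => fun i : Fin n => W i ω) inferInstance)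
    (hle : mW ≤ mΩ)
    -- null p-values are jointly independent conditionally on the weights
    (hcondIndep : iCondIndepFun mW hle
      (fun (i : {i : Fin n // i ∈ N}) (ω : Ω) => P i ω) μ)
    -- null p-values are super-uniform conditionally on the weights
    (hcondSuper : ∀ i ∈ N, ∀ t ∈ Set.Icc (0 : ℝ) 1,
      (μ[(fun ω => if P i ω ≤ t then (1 : ℝ) else 0)|mW]) ≤ᵐ[μ] fun _ => t)
    (α : ℝ) (hα : α ∈ Set.Ioo (0 : ℝ) 1) :
    (μ {ω | ∃ i ∈ N, P i ω ≤ 1 - Real.rpow (1 - α) (W i ω / n)}).toReal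
      ≤ 1 - ∫ ω, Real.rpow (1 - α) ((∑ i ∈ N, W i ω) / n) ∂μ ∧
    1 - ∫ ω, Real.rpow (1 - α) ((∑ i ∈ N, W i ω) / n) ∂μ ≤ α := by
  classical
  letI : MeasurableSpace Ω := mΩ
  obtain ⟨hα0, hα1⟩ := hα
  have hβ0 : (0:ℝ) < 1 - α := by linarith
  have hβ1 : (1:ℝ) - α < 1 := by linarith
  have hn' : (0:ℝ) < n := by exact_mod_cast hn
  -- the threshold functions
  set t : Fin n → Ω → ℝ := fun i ω => 1 - (1 - α) ^ (W i ω / n) with htdef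
  -- the product function
  set h : Ω → ℝ := fun ω => (1 - α) ^ ((∑ i ∈ N, W i ω) / n) with hhdef
  have hrpow_meas : ∀ (f : Ω → ℝ), Measurable[mΩ] f → Measurable[mΩ] (fun ω => (1 - α) ^ (f ω) : Ω → ℝ) := by
    intro f hf
    have : (fun ω => (1 - α) ^ (f ω) : Ω → ℝ)
        = fun ω => Real.exp (Real.log (1 - α) * f ω) := by
      funext ω; rw [Real.rpow_def_of_pos hβ0]
    rw [this]; exact Real.measurable_exp.comp (measurable_const.mul hf)
  have ht_meas : ∀ i, Measurable[mΩ] (t i) :=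
    fun i => measurable_const.sub (hrpow_meas _ ((hWmeas i).div_const _))
  have ht0 : ∀ i ω, 0 ≤ t i ω := by
    intro i ω
    have : (1 - α) ^ (W i ω / n) ≤ 1 :=
      Real.rpow_le_one hβ0.le (by linarith) (div_nonneg (hWnonneg i ω) hn'.le)
    simp only [htdef]; linarith
  have ht1 : ∀ i ω, t i ω < 1 := by
    intro i ω
    have : (0:ℝ) < (1 - α) ^ (W i ω / n) := Real.rpow_pos_of_pos hβ0 _
    simp only [htdef]; linarith
  have hh_meas : Measurable[mΩ] h := by
    apply hrpow_meas
    exact (Finset.measurable_sum N fun i _ => hWmeas i).div_const _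
  have hh0 : ∀ ω, 0 ≤ h ω := fun ω => (Real.rpow_pos_of_pos hβ0 _).le
  have hh1 : ∀ ω, h ω ≤ 1 := by
    intro ω
    exact Real.rpow_le_one hβ0.le (by linarith)
      (div_nonneg (Finset.sum_nonneg fun i _ => hWnonneg i ω) hn'.le)
  have hh_int : Integrable h μ := by
    refine (integrable_const (1:ℝ)).mono' hh_meas.aestronglyMeasurable ?_
    exact Filter.Eventually.of_forall fun ω => by
      rw [Real.norm_eq_abs, abs_of_nonneg (hh0 ω)]; exact hh1 ω
  -- h is the product of (1 - t i) over the nulls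
  have hh_prod : ∀ ω, h ω = ∏ i ∈ N.attach, (1 - t i.1 ω) := by
    intro ω
    simp only [hhdef, htdef, sub_sub_cancel]
    have e1 : (∑ i ∈ N, W i ω) / (n:ℝ) = ∑ i ∈ N.attach, (W i.1 ω / n) := by
      rw [Finset.sum_div, Finset.sum_attach N (fun j => W j ω / n)]
    rw [e1, Real.rpow_sum_of_pos hβ0]
  -- second part
  have part2 : 1 - ∫ ω, h ω ∂μ ≤ α := by
    have hbd : ∀ᵐ ω ∂μ, (1 - α : ℝ) ≤ h ω := by
      filter_upwards [hWsum] with ω hω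
      have hsum_le : (∑ i ∈ N, W i ω) ≤ n := by
        rw [← hω]
        exact Finset.sum_le_sum_of_subset_of_nonneg (Finset.subset_univ N)
          fun i _ _ => hWnonneg i ω
      have hexp : (∑ i ∈ N, W i ω) / n ≤ 1 := by
        rw [div_le_one hn']; exact hsum_le
      calc (1 - α : ℝ) = (1 - α) ^ (1:ℝ) := (Real.rpow_one _).symm
        _ ≤ h ω := Real.rpow_le_rpow_of_exponent_ge hβ0 hβ1.le hexp
    have : (1 - α : ℝ) ≤ ∫ ω, h ω ∂μ := by
      have := integral_mono_ae (integrable_const (1 - α : ℝ)) hh_int hbd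
      simpa using this
    linarith
  refine ⟨?_, part2⟩
  -- first part
  set E : Set Ω := {ω | ∃ i ∈ N, P i ω ≤ t i ω} with hEdef
  show (μ E).toReal ≤ 1 - ∫ ω, h ω ∂μ
  have hE_meas : MeasurableSet[mΩ] E := by
    have : E = ⋃ i ∈ (N : Set (Fin n)), {ω | P i ω ≤ t i ω} := by
      ext ω; simp [hEdef]
    rw [this]
    exact MeasurableSet.biUnion N.countable_toSet
      (fun i _ => measurableSet_le (hPmeas i) (ht_meas i))
  have main : ∀ m : ℕ, 0 < m → (μ E).toReal ≤ 1 - ∫ ω, h ω ∂μ + N.card / m := by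
    intro m hm
    have hm' : (0:ℝ) < m := by exact_mod_cast hm
    -- the cell map on weight vectors
    set Kv : (Fin n → ℝ) → ({i : Fin n // i ∈ N} → Fin m) :=
      fun v i => ⟨⌊(m:ℝ) * (1 - (1 - α) ^ (v i.1 / n))⌋₊ % m, Nat.mod_lt _ hm⟩ with hKvdef
    have hKv_meas : Measurable Kv := by
      refine measurable_pi_lambda _ fun i => ?_
      have h1 : Measurable fun v : Fin n → ℝ => 1 - (1 - α) ^ (v i.1 / (n:ℝ)) :=
        measurable_const.sub (measurable_const_rpow' hβ0 ((measurable_pi_apply i.1).div_const _))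
      have h2 : Measurable fun v : Fin n → ℝ => ⌊(m:ℝ) * (1 - (1 - α) ^ (v i.1 / n))⌋₊ :=
        Nat.measurable_floor.comp (measurable_const.mul h1)
      exact (measurable_from_top (f := fun k : ℕ => (⟨k % m, Nat.mod_lt _ hm⟩ : Fin m))).comp h2
    set K : Ω → ({i : Fin n // i ∈ N} → Fin m) := fun ω => Kv (fun j => W j ω) with hKdef
    set A : ({i : Fin n // i ∈ N} → Fin m) → Set Ω := fun c => K ⁻¹' {c} with hAdef
    have hA_mW : ∀ c, MeasurableSet[mW] (A c) := by
      intro c; rw [hmW]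
      exact ⟨Kv ⁻¹' {c}, hKv_meas (measurableSet_singleton c), rfl⟩
    have hA_meas : ∀ c, MeasurableSet[mΩ] (A c) := fun c => hle _ (hA_mW c)
    have hA_disj : Pairwise (Function.onFun Disjoint A) := by
      intro c c' hcc'
      refine Set.disjoint_left.2 fun ω h1 h2 => hcc' ?_
      have e1 : K ω = c := h1
      have e2 : K ω = c' := h2
      rw [← e1, e2]
    have hA_cover : ⋃ c, A c = Set.univ := by
      ext ω; simp only [hAdef, Set.mem_iUnion, Set.mem_preimage, Set.mem_singleton_iff,
        Set.mem_univ, iff_true]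
      exact ⟨K ω, rfl⟩
    -- value of the cell map
    have hKval : ∀ (ω : Ω) (i : {i : Fin n // i ∈ N}), (K ω i : ℕ) = ⌊(m:ℝ) * t i.1 ω⌋₊ := by
      intro ω i
      have hlt : ⌊(m:ℝ) * t i.1 ω⌋₊ < m := by
        rw [Nat.floor_lt (mul_nonneg hm'.le (ht0 _ _))]
        calc (m:ℝ) * t i.1 ω < m * 1 := by
              exact mul_lt_mul_of_pos_left (ht1 _ _) hm'
          _ = m := mul_one _
      simp only [hKdef, hKvdef, htdef]
      exact Nat.mod_eq_of_lt hlt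
    -- fixed thresholds per cell
    set q : ({i : Fin n // i ∈ N} → Fin m) → {i : Fin n // i ∈ N} → ℝ :=
      fun c i => (((c i : ℕ) : ℝ) + 1) / m with hqdef
    have hq0 : ∀ c i, 0 < q c i := fun c i => div_pos (by positivity) hm'
    have hq1 : ∀ c i, q c i ≤ 1 := by
      intro c i
      rw [div_le_one hm']
      have := (c i).2
      exact_mod_cast Nat.succ_le_of_lt this
    have hAt : ∀ c ω, ω ∈ A c → ∀ i : {i : Fin n // i ∈ N},
        ((c i : ℕ) : ℝ) / m ≤ t i.1 ω ∧ t i.1 ω < q c i := by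
      intro c ω hω i
      have hKc : K ω = c := hω
      have hfl : ⌊(m:ℝ) * t i.1 ω⌋₊ = (c i : ℕ) := by rw [← hKval ω i, hKc]
      constructor
      · rw [div_le_iff₀ hm', mul_comm]
        rw [← hfl]
        exact Nat.floor_le (mul_nonneg hm'.le (ht0 _ _))
      · rw [hqdef, lt_div_iff₀ hm', mul_comm, ← hfl]
        exact Nat.lt_floor_add_one _
    -- the good event per cell
    set G : ({i : Fin n // i ∈ N} → Fin m) → Set Ω :=
      fun c => ⋂ i ∈ (Finset.univ : Finset {i : Fin n // i ∈ N}),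
        (fun ω => P i.1 ω) ⁻¹' Set.Ioi (q c i) with hGdef
    have hG_meas : ∀ c, MeasurableSet[mΩ] (G c) := by
      intro c
      exact Finset.measurableSet_biInter _ fun i _ => hPmeas i.1 measurableSet_Ioi
    haveI : SigmaFinite (μ.trim hle) := by
      have : IsFiniteMeasure (μ.trim hle) := isFiniteMeasure_trim hle
      infer_instance
    -- conditional superuniformity: factor lower bound
    have hfac : ∀ (i : {i : Fin n // i ∈ N}) (s : ℝ), 0 ≤ s → s ≤ 1 →
        (fun _ => 1 - s) ≤ᵐ[μ] μ⟦(fun ω => P i.1 ω) ⁻¹' Set.Ioi s | mW⟧ := by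
      intro i s hs0 hs1
      have hindeq : Set.indicator ((fun ω => P i.1 ω) ⁻¹' Set.Ioi s) (fun _ => (1:ℝ))
          = fun ω => 1 - (if P i.1 ω ≤ s then (1:ℝ) else 0) := by
        funext ω
        by_cases hc : P i.1 ω ≤ s
        · simp [Set.indicator_apply, Set.mem_preimage, Set.mem_Ioi, hc, not_lt.2 hc]
        · simp [Set.indicator_apply, Set.mem_preimage, Set.mem_Ioi, hc, lt_of_not_ge hc]
      have hint : Integrable (fun ω => if P i.1 ω ≤ s then (1:ℝ) else 0) μ := by
        have hmeas : Measurable[mΩ] (fun ω => if P i.1 ω ≤ s then (1:ℝ) else 0) :=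
          Measurable.ite (measurableSet_le (hPmeas i.1) measurable_const)
            measurable_const measurable_const
        refine (integrable_const (1:ℝ)).mono' hmeas.aestronglyMeasurable ?_
        refine Filter.Eventually.of_forall fun ω => ?_
        by_cases hc : P i.1 ω ≤ s <;> simp [hc]
      have hsub : μ⟦(fun ω => P i.1 ω) ⁻¹' Set.Ioi s | mW⟧
          =ᵐ[μ] fun ω => (μ[(fun _ => (1:ℝ)) | mW]) ω
            - (μ[(fun ω => if P i.1 ω ≤ s then (1:ℝ) else 0) | mW]) ω := by
        have : μ⟦(fun ω => P i.1 ω) ⁻¹' Set.Ioi s | mW⟧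
            = μ[(fun ω => (1:ℝ) - (if P i.1 ω ≤ s then (1:ℝ) else 0)) | mW] := by
          rw [hindeq]
        rw [this]
        exact condExp_sub (integrable_const 1) hint mW
      filter_upwards [hsub, hcondSuper i.1 i.2 s ⟨hs0, hs1⟩] with ω hω1 hω2
      rw [hω1, condExp_const hle]
      simp only
      linarith [hω2]
    have hfac0 : ∀ (i : {i : Fin n // i ∈ N}) (s : ℝ),
        (fun _ => (0:ℝ)) ≤ᵐ[μ] μ⟦(fun ω => P i.1 ω) ⁻¹' Set.Ioi s | mW⟧ := by
      intro i s
      exact condExp_nonneg (Filter.Eventually.of_forall fun ω =>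
        Set.indicator_nonneg (fun _ _ => zero_le_one) ω)
    -- conditional independence: product lower bound
    have hprodform := (iCondIndepFun_iff_condExp_inter_preimage_eq_mul
      (m' := mW) (hm' := hle)
      (fun _ => inferInstance) (fun (i : {i : Fin n // i ∈ N}) ω => P i.1 ω)
      (fun i => hPmeas i.1)).mp hcondIndep
    have hGbound : ∀ c, (fun _ => ∏ i : {i : Fin n // i ∈ N}, (1 - q c i)) ≤ᵐ[μ] μ⟦G c | mW⟧ := by
      intro c
      have h1 := hprodform Finset.univ (sets := fun i => Set.Ioi (q c i))
        (fun i _ => measurableSet_Ioi)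
      have h2 : ∀ᵐ ω ∂μ, ∀ i : {i : Fin n // i ∈ N},
          1 - q c i ≤ (μ⟦(fun ω => P i.1 ω) ⁻¹' Set.Ioi (q c i) | mW⟧) ω ∧
          0 ≤ (μ⟦(fun ω => P i.1 ω) ⁻¹' Set.Ioi (q c i) | mW⟧) ω := by
        rw [MeasureTheory.ae_all_iff]
        intro i
        filter_upwards [hfac i (q c i) (hq0 c i).le (hq1 c i), hfac0 i (q c i)] with ω hω1 hω2
        exact ⟨hω1, hω2⟩
      filter_upwards [h1, h2] with ω hω1 hω2
      calc ∏ i : {i : Fin n // i ∈ N}, (1 - q c i)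
          ≤ ∏ i : {i : Fin n // i ∈ N}, (μ⟦(fun ω => P i.1 ω) ⁻¹' Set.Ioi (q c i) | mW⟧) ω := by
            refine Finset.prod_le_prod (fun i _ => ?_) (fun i _ => ?_)
            · have := hq1 c i; linarith
            · exact (hω2 i).1
        _ = (μ⟦G c | mW⟧) ω := by
            rw [hGdef, hω1, Finset.prod_apply]
    -- per cell estimate
    have cell : ∀ c, (μ (E ∩ A c)).toReal
        ≤ (μ (A c)).toReal - ∫ ω in A c, (h ω - N.card / m) ∂μ := by
      intro c
      -- pointwise bound on the cell
      have hpt : ∀ ω ∈ A c, h ω - N.card / m ≤ ∏ i : {i : Fin n // i ∈ N}, (1 - q c i) := by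
        intro ω hω
        have hprod := prod_sub_prod_le_card_mul (Finset.univ : Finset {i : Fin n // i ∈ N})
          (fun i => 1 - t i.1 ω) (fun i => 1 - q c i) (1 / m)
          (by positivity)
          (fun i _ => by have := ht1 i.1 ω; linarith)
          (fun i _ => by have := ht0 i.1 ω; linarith)
          (fun i _ => by have := hq1 c i; linarith)
          (fun i _ => by have := hq0 c i; linarith)
          (fun i _ => by
            have h1 := (hAt c ω hω i).1
            have h2 : q c i = ((c i : ℕ) : ℝ) / m + 1 / m := by
              simp only [hqdef]; ring
            linarith)
        have hcard : ((Finset.univ : Finset {i : Fin n // i ∈ N}).card : ℝ) = N.card := by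
          rw [Finset.card_univ, Fintype.card_coe]
        have hhw : h ω = ∏ i : {i : Fin n // i ∈ N}, (1 - t i.1 ω) := by
          rw [hh_prod ω]
          rw [← Finset.attach_eq_univ]
        rw [hhw]
        have : (N.card : ℝ) * (1 / m) = N.card / m := by ring
        rw [hcard, this] at hprod
        linarith
      -- cell is split by the good event
      have hsubset : E ∩ A c ⊆ A c \ G c := by
        rintro ω ⟨hωE, hωA⟩
        obtain ⟨i, hiN, hiP⟩ := hωE
        refine ⟨hωA, ?_⟩
        intro hωG
        have h2 := (hAt c ω hωA ⟨i, hiN⟩).2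
        have h3 : q c ⟨i, hiN⟩ < P i ω := by
          have := Set.mem_iInter.1 hωG ⟨i, hiN⟩
          have := Set.mem_iInter.1 this (Finset.mem_univ _)
          exact this
        exact absurd hiP (by push_neg; linarith)
      have hfin : ∀ (S : Set Ω), μ S ≠ ⊤ := fun S => measure_ne_top μ S
      have step1 : (μ (E ∩ A c)).toReal ≤ (μ (A c \ G c)).toReal :=
        ENNReal.toReal_mono (hfin _) (measure_mono hsubset)
      have step2 : (μ (A c ∩ G c)).toReal + (μ (A c \ G c)).toReal = (μ (A c)).toReal := by
        rw [← ENNReal.toReal_add (hfin _) (hfin _), measure_inter_add_diff _ (hG_meas c)]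
      -- integral bound
      have hint1 : IntegrableOn (fun ω => h ω - N.card / m) (A c) μ :=
        (hh_int.sub (integrable_const _)).integrableOn
      have hint2 : IntegrableOn (fun _ : Ω => ∏ i : {i : Fin n // i ∈ N}, (1 - q c i)) (A c) μ :=
        (integrable_const _).integrableOn
      have step3 : ∫ ω in A c, (h ω - N.card / m) ∂μ ≤ (μ (A c ∩ G c)).toReal := by
        have hGint : Integrable (Set.indicator (G c) (fun _ => (1:ℝ))) μ := by
          have hmeas : Measurable[mΩ] (Set.indicator (G c) (fun _ => (1:ℝ))) :=
            (measurable_const (a := (1:ℝ))).indicator (hG_meas c)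
          refine (integrable_const (1:ℝ)).mono' hmeas.aestronglyMeasurable ?_
          refine Filter.Eventually.of_forall fun ω => ?_
          by_cases hc : ω ∈ G c <;> simp [Set.indicator_apply, hc]
        calc ∫ ω in A c, (h ω - N.card / m) ∂μ
            ≤ ∫ _ in A c, (∏ i : {i : Fin n // i ∈ N}, (1 - q c i)) ∂μ :=
              setIntegral_mono_on hint1 hint2 (hA_meas c) hpt
          _ ≤ ∫ ω in A c, (μ⟦G c | mW⟧) ω ∂μ :=
              setIntegral_mono_ae hint2 integrable_condExp.integrableOn (hGbound c)
          _ = ∫ ω in A c, Set.indicator (G c) (fun _ => (1:ℝ)) ω ∂μ :=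
              setIntegral_condExp hle hGint (hA_mW c)
          _ = (μ (A c ∩ G c)).toReal := by
              rw [setIntegral_indicator (hG_meas c), setIntegral_const]
              simp [Measure.real]
      linarith
    -- sum over cells
    have hfin : ∀ (S : Set Ω), μ S ≠ ⊤ := fun S => measure_ne_top μ S
    have hEsplit : (μ E).toReal = ∑ c, (μ (E ∩ A c)).toReal := by
      have h1 : E = ⋃ c, E ∩ A c := by
        rw [← Set.inter_iUnion, hA_cover, Set.inter_univ]
      have h2 : μ E = ∑' c, μ (E ∩ A c) := by
        nth_rewrite 1 [h1]
        exact measure_iUnion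
          (fun c c' hcc' => (hA_disj hcc').mono Set.inter_subset_right Set.inter_subset_right)
          (fun c => hE_meas.inter (hA_meas c))
      rw [h2, tsum_fintype, ENNReal.toReal_sum (fun c _ => hfin _)]
    have hAsplit : ∑ c, (μ (A c)).toReal = 1 := by
      have h2 : μ Set.univ = ∑' c, μ (A c) := by
        rw [← hA_cover]
        exact measure_iUnion hA_disj hA_meas
      have h3 : (μ Set.univ).toReal = 1 := by simp
      rw [← h3, h2, tsum_fintype, ENNReal.toReal_sum (fun c _ => hfin _)]
    have hIsplit : ∑ c, ∫ ω in A c, (h ω - N.card / m) ∂μ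
        = ∫ ω, (h ω - N.card / m) ∂μ := by
      have := integral_iUnion_fintype (f := fun ω => h ω - N.card / m) (μ := μ)
        hA_meas hA_disj (fun c => (hh_int.sub (integrable_const _)).integrableOn)
      rw [← this, hA_cover, Measure.restrict_univ]
    have hIval : ∫ ω, (h ω - N.card / m) ∂μ = ∫ ω, h ω ∂μ - N.card / m := by
      rw [integral_sub hh_int (integrable_const _), integral_const]
      simp
    calc (μ E).toReal = ∑ c, (μ (E ∩ A c)).toReal := hEsplit
      _ ≤ ∑ c, ((μ (A c)).toReal - ∫ ω in A c, (h ω - N.card / m) ∂μ) :=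
          Finset.sum_le_sum fun c _ => cell c
      _ = ∑ c, (μ (A c)).toReal - ∑ c, ∫ ω in A c, (h ω - N.card / m) ∂μ :=
          Finset.sum_sub_distrib _ _
      _ = 1 - (∫ ω, h ω ∂μ - N.card / m) := by rw [hAsplit, hIsplit, hIval]
      _ = 1 - ∫ ω, h ω ∂μ + N.card / m := by ring
  -- conclude by letting m → ∞
  refine le_of_forall_pos_le_add fun ε hε => ?_
  set m : ℕ := ⌈(N.card : ℝ) / ε⌉₊ + 1 with hmdef
  have hm : 0 < m := Nat.succ_pos _
  have hm' : (0:ℝ) < m := by exact_mod_cast hm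
  have hcard : (N.card : ℝ) / m ≤ ε := by
    rw [div_le_iff₀ hm']
    have h1 : (N.card : ℝ) / ε ≤ m := by
      calc ((N.card : ℝ) / ε) ≤ ⌈(N.card : ℝ) / ε⌉₊ := Nat.le_ceil _
        _ ≤ m := by exact_mod_cast Nat.le_succ _
    calc (N.card : ℝ) = ε * ((N.card : ℝ) / ε) := by field_simp
      _ ≤ ε * m := mul_le_mul_of_nonneg_left h1 hε.le
  calc (μ E).toReal ≤ 1 - ∫ ω, h ω ∂μ + N.card / m := main m hm
    _ ≤ 1 - ∫ ω, h ω ∂μ + ε := by linarith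
end

section
/- There exist four i.i.d. uniform [0,1] random variables P_1,...,P_4 (all nulls) and a weighting scheme with W_i ∈ {0,2}, Σ W_i = 4, such that each P_i is independent of its own weight W_i, yet applying the weighted BH procedure at level α yields FWER = FDR = α + (α²/4)(1−α) > α. -/
open MeasureTheory ProbabilityTheory Classical

namespace WBHaux

/-! ### Deterministic analysis of the two-effective-hypothesis weighted BH procedure -/

lemma det (α : ℝ) (hα0 : 0 < α) (p w : Fin 4 → ℝ) (hp : ∀ i, 0 < p i)
    (i j : Fin 4) (hij : i ≠ j)
    (hw : ∀ t, w t = if t = i ∨ t = j then 2 else 0) :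
    (∃ t, wBHRejects 4 p w α t) ↔
      (p i ≤ α / 2 ∨ p j ≤ α / 2 ∨ (p i ≤ α ∧ p j ≤ α)) := by
  set N : ℕ → ℕ := fun k =>
    (Finset.univ.filter (fun t : Fin 4 => p t ≤ α * w t * k / 4)).card with hN
  have hwi : w i = 2 := by rw [hw]; simp
  have hwj : w j = 2 := by rw [hw]; simp
  have hw0 : ∀ t, t ≠ i → t ≠ j → w t = 0 := by
    intro t h1 h2; rw [hw]; simp [h1, h2]
  have hsub : ∀ k, (Finset.univ.filter (fun t : Fin 4 => p t ≤ α * w t * k / 4))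
      ⊆ {i, j} := by
    intro k t ht
    simp only [Finset.mem_filter, Finset.mem_univ, true_and] at ht
    by_contra hc
    simp only [Finset.mem_insert, Finset.mem_singleton, not_or] at hc
    rw [hw0 t hc.1 hc.2] at ht
    have : α * 0 * (k : ℝ) / 4 = 0 := by ring
    rw [this] at ht
    exact absurd ht (not_le.2 (hp t))
  have hNle : ∀ k, N k ≤ 2 := by
    intro k
    calc N k ≤ ({i, j} : Finset (Fin 4)).card := Finset.card_le_card (hsub k)
      _ = 2 := Finset.card_pair hij
  have hbdd : BddAbove {k : ℕ | k ≤ N k} := ⟨2, fun k hk => le_trans hk (hNle k)⟩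
  have h0mem : 0 ∈ {k : ℕ | k ≤ N k} := Nat.zero_le _
  have hkeq : wBHRejCount 4 p w α = sSup {k : ℕ | k ≤ N k} := by
    simp only [wBHRejCount, hN]; norm_num
  have hksmem : wBHRejCount 4 p w α ∈ {k : ℕ | k ≤ N k} := by
    rw [hkeq]; exact Nat.sSup_mem ⟨0, h0mem⟩ hbdd
  set K := wBHRejCount 4 p w α with hK
  have hK2 : K ≤ 2 := le_trans hksmem (hNle K)
  constructor
  · rintro ⟨t, ht⟩
    unfold wBHRejects at ht
    rw [← hK] at ht
    by_cases hti : t = i ∨ t = j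
    · have hwt : w t = 2 := by rcases hti with rfl | rfl <;> assumption
      rw [hwt] at ht
      have ht' : p t ≤ α * K / 2 := by
        calc p t ≤ α * 2 * K / 4 := ht
          _ = α * K / 2 := by push_cast; ring
      interval_cases K
      · exfalso; simp at ht'; exact absurd ht' (not_le.2 (hp t))
      · have : p t ≤ α / 2 := by push_cast at ht'; linarith
        rcases hti with rfl | rfl
        · exact Or.inl this
        · exact Or.inr (Or.inl this)
      · have h2 : 2 ≤ N 2 := hksmem
        have hfe : (Finset.univ.filter (fun t : Fin 4 => p t ≤ α * w t * (2:ℕ) / 4))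
            = {i, j} := by
          apply Finset.eq_of_subset_of_card_le (hsub 2)
          rw [Finset.card_pair hij]; exact h2
        have hi2 : i ∈ Finset.univ.filter (fun t : Fin 4 => p t ≤ α * w t * (2:ℕ) / 4) := by
          rw [hfe]; simp
        have hj2 : j ∈ Finset.univ.filter (fun t : Fin 4 => p t ≤ α * w t * (2:ℕ) / 4) := by
          rw [hfe]; simp
        simp only [Finset.mem_filter, Finset.mem_univ, true_and, hwi, hwj] at hi2 hj2
        right; right
        constructor
        · calc p i ≤ α * 2 * (2:ℕ) / 4 := hi2
            _ = α := by push_cast; ring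
        · calc p j ≤ α * 2 * (2:ℕ) / 4 := hj2
            _ = α := by push_cast; ring
    · push_neg at hti
      rw [hw0 t hti.1 hti.2] at ht
      simp only [mul_zero, zero_mul, zero_div] at ht
      exact absurd ht (not_le.2 (hp t))
  · intro h
    have key : ∀ (t : Fin 4), w t = 2 → p t ≤ α / 2 → (∃ t, wBHRejects 4 p w α t) := by
      intro t hwt ht1
      have h1N : 1 ≤ N 1 := by
        have : t ∈ Finset.univ.filter (fun s : Fin 4 => p s ≤ α * w s * (1:ℕ) / 4) := by
          simp only [Finset.mem_filter, Finset.mem_univ, true_and, hwt]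
          calc p t ≤ α / 2 := ht1
            _ = α * 2 * (1:ℕ) / 4 := by push_cast; ring
        exact Finset.card_pos.2 ⟨t, this⟩
      have h1K : 1 ≤ K := by rw [hkeq]; exact le_csSup hbdd h1N
      refine ⟨t, ?_⟩
      unfold wBHRejects
      rw [← hK, hwt]
      have : (1:ℝ) ≤ (K:ℝ) := by exact_mod_cast h1K
      push_cast at ht1 ⊢
      nlinarith
    rcases h with h | h | h
    · exact key i hwi h
    · exact key j hwj h
    · have h2N : 2 ≤ N 2 := by
        have hsub2 : ({i, j} : Finset (Fin 4)) ⊆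
            Finset.univ.filter (fun s : Fin 4 => p s ≤ α * w s * (2:ℕ) / 4) := by
          intro t htm
          simp only [Finset.mem_insert, Finset.mem_singleton] at htm
          simp only [Finset.mem_filter, Finset.mem_univ, true_and]
          rcases htm with rfl | rfl
          · rw [hwi]; calc p t ≤ α := h.1
              _ = α * 2 * (2:ℕ) / 4 := by push_cast; ring
          · rw [hwj]; calc p t ≤ α := h.2
              _ = α * 2 * (2:ℕ) / 4 := by push_cast; ring
        calc (2:ℕ) = ({i, j} : Finset (Fin 4)).card := (Finset.card_pair hij).symm
          _ ≤ N 2 := Finset.card_le_card hsub2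
      have h2K : 2 ≤ K := by rw [hkeq]; exact le_csSup hbdd h2N
      refine ⟨i, ?_⟩
      unfold wBHRejects
      rw [← hK, hwi]
      have : (2:ℝ) ≤ (K:ℝ) := by exact_mod_cast h2K
      push_cast
      nlinarith [h.1]

/-! ### The probability space: product of uniform measures on `[0,1]` -/

noncomputable def mu0 : Measure ℝ := volume.restrict (Set.Icc 0 1)

instance : IsProbabilityMeasure mu0 := ⟨by simp [mu0, Real.volume_Icc]⟩

noncomputable def muP : Measure (Fin 4 → ℝ) := Measure.pi fun _ => mu0

instance : IsProbabilityMeasure muP := by unfold muP; infer_instance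

lemma muP_pi (s : Fin 4 → Set ℝ) : muP (Set.univ.pi s) = ∏ i, mu0 (s i) :=
  Measure.pi_pi _ _

lemma iInter_eq_pi (S : Finset (Fin 4)) (s : Fin 4 → Set ℝ) :
    (⋂ i ∈ S, (fun ω : Fin 4 → ℝ => ω i) ⁻¹' s i) =
      Set.univ.pi (fun i => if i ∈ S then s i else Set.univ) := by
  ext ω
  simp only [Set.mem_iInter, Set.mem_preimage, Set.mem_univ_pi]
  constructor
  · intro h i
    by_cases hi : i ∈ S
    · simp [hi, h i hi]
    · simp [hi]
  · intro h i hi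
    have := h i
    simpa [hi] using this

lemma muP_cyl (i : Fin 4) (s : Set ℝ) : muP {ω : Fin 4 → ℝ | ω i ∈ s} = mu0 s := by
  have h : {ω : Fin 4 → ℝ | ω i ∈ s} =
      Set.univ.pi (fun j => if j = i then s else Set.univ) := by
    ext ω
    simp only [Set.mem_setOf_eq, Set.mem_univ_pi]
    constructor
    · intro h j
      by_cases hj : j = i
      · subst hj; simp [h]
      · simp [hj]
    · intro h
      have := h i
      simpa using this
  rw [h, muP_pi]
  rw [show (∏ j, mu0 (if j = i then s else Set.univ)) =
      ∏ j, (if j = i then mu0 s else 1) from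
    Finset.prod_congr rfl fun j _ => by split <;> simp]
  simp [Finset.prod_ite_eq']

lemma coord_iIndep : iIndepFun
    (fun i (ω : Fin 4 → ℝ) => ω i) muP := by
  rw [iIndepFun_iff_measure_inter_preimage_eq_mul]
  intro S sets hsets
  rw [iInter_eq_pi S sets, muP_pi]
  calc (∏ i, mu0 (if i ∈ S then sets i else Set.univ))
      = ∏ i ∈ S, mu0 (sets i) := by
        rw [← Finset.prod_filter_mul_prod_filter_not Finset.univ (· ∈ S)]
        have ha : ∀ x ∈ Finset.filter (· ∈ S) Finset.univ,
            mu0 (if x ∈ S then sets x else Set.univ) = mu0 (sets x) := by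
          intro x hx; simp only [Finset.mem_filter] at hx; simp [hx.2]
        have hb : ∀ x ∈ Finset.filter (· ∉ S) Finset.univ,
            mu0 (if x ∈ S then sets x else Set.univ) = 1 := by
          intro x hx; simp only [Finset.mem_filter] at hx; simp [hx.2]
        rw [Finset.prod_congr rfl ha, Finset.prod_congr rfl hb]
        simp [Finset.filter_mem_eq_inter]
    _ = ∏ i ∈ S, muP ((fun ω : Fin 4 → ℝ => ω i) ⁻¹' sets i) :=
        Finset.prod_congr rfl fun i _ => (muP_cyl i (sets i)).symm

/-! ### Values of `mu0` on intervals -/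

lemma mu0_apply {s : Set ℝ} (hs : MeasurableSet s) :
    mu0 s = volume (s ∩ Set.Icc 0 1) := Measure.restrict_apply hs

lemma mu0_Iic {t : ℝ} (h1 : t ≤ 1) :
    mu0 (Set.Iic t) = ENNReal.ofReal t := by
  rw [mu0_apply measurableSet_Iic,
    show Set.Iic t ∩ Set.Icc (0:ℝ) 1 = Set.Icc 0 t by
      ext x
      simp only [Set.mem_inter_iff, Set.mem_Iic, Set.mem_Icc]
      constructor
      · rintro ⟨h1', h2', h3'⟩; exact ⟨h2', h1'⟩
      · rintro ⟨h1', h2'⟩; exact ⟨h2', h1', by linarith⟩,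
    Real.volume_Icc]
  norm_num

lemma mu0_Icc {a b : ℝ} (h0 : 0 ≤ a) (h1 : b ≤ 1) :
    mu0 (Set.Icc a b) = ENNReal.ofReal (b - a) := by
  rw [mu0_apply measurableSet_Icc,
    Set.inter_eq_left.mpr (Set.Icc_subset_Icc h0 h1),
    Real.volume_Icc]

lemma mu0_Ioc {a b : ℝ} (h0 : 0 ≤ a) (h1 : b ≤ 1) :
    mu0 (Set.Ioc a b) = ENNReal.ofReal (b - a) := by
  rw [mu0_apply measurableSet_Ioc,
    Set.inter_eq_left.mpr (Set.Ioc_subset_Icc_self.trans (Set.Icc_subset_Icc h0 h1)),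
    Real.volume_Ioc]

lemma mu0_Iio {t : ℝ} (h1 : t ≤ 1) :
    mu0 (Set.Iio t) = ENNReal.ofReal t := by
  rw [mu0_apply measurableSet_Iio,
    show Set.Iio t ∩ Set.Icc (0:ℝ) 1 = Set.Ico 0 t by
      ext x
      simp only [Set.mem_inter_iff, Set.mem_Iio, Set.mem_Icc, Set.mem_Ico]
      constructor
      · rintro ⟨h1', h2', h3'⟩; exact ⟨h2', h1'⟩
      · rintro ⟨h1', h2'⟩; exact ⟨h2', h1', by linarith⟩,
    Real.volume_Ico]
  norm_num

lemma mu0_Ioi {t : ℝ} (h0 : 0 ≤ t) :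
    mu0 (Set.Ioi t) = ENNReal.ofReal (1 - t) := by
  rw [mu0_apply measurableSet_Ioi,
    show Set.Ioi t ∩ Set.Icc (0:ℝ) 1 = Set.Ioc t 1 by
      ext x
      simp only [Set.mem_inter_iff, Set.mem_Ioi, Set.mem_Icc, Set.mem_Ioc]
      constructor
      · rintro ⟨h1', h2', h3'⟩; exact ⟨h1', h3'⟩
      · rintro ⟨h1', h2'⟩; exact ⟨h1', by linarith, h2'⟩,
    Real.volume_Ioc]

lemma mu0_compl_Icc {a b : ℝ} (h0 : 0 ≤ a) (h1 : b ≤ 1) (hab : a ≤ b) :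
    mu0 (Set.Icc a b)ᶜ = ENNReal.ofReal (1 - (b - a)) := by
  rw [prob_compl_eq_one_sub measurableSet_Icc, mu0_Icc h0 h1,
    show ENNReal.ofReal (1 - (b-a)) = ENNReal.ofReal 1 - ENNReal.ofReal (b-a) from
      ENNReal.ofReal_sub _ (by linarith), ENNReal.ofReal_one]

/-! ### Boxes in dimension 4 -/

def bx (a b c d : Set ℝ) : Fin 4 → Set ℝ := fun i =>
  if i.val = 0 then a else if i.val = 1 then b else if i.val = 2 then c else d

@[simp] lemma bx_zero (a b c d : Set ℝ) : bx a b c d 0 = a := rfl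
@[simp] lemma bx_one (a b c d : Set ℝ) : bx a b c d 1 = b := rfl
@[simp] lemma bx_two (a b c d : Set ℝ) : bx a b c d 2 = c := rfl
@[simp] lemma bx_three (a b c d : Set ℝ) : bx a b c d 3 = d := rfl

lemma mem_bx (ω : Fin 4 → ℝ) (a b c d : Set ℝ) :
    ω ∈ Set.univ.pi (bx a b c d) ↔ ω 0 ∈ a ∧ ω 1 ∈ b ∧ ω 2 ∈ c ∧ ω 3 ∈ d := by
  simp only [Set.mem_univ_pi]
  constructor
  · intro h
    exact ⟨h 0, h 1, h 2, h 3⟩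
  · rintro ⟨h0, h1, h2, h3⟩ i
    fin_cases i <;> simpa [bx]

lemma bx_measurable {a b c d : Set ℝ} (ha : MeasurableSet a) (hb : MeasurableSet b)
    (hc : MeasurableSet c) (hd : MeasurableSet d) :
    MeasurableSet (Set.univ.pi (bx a b c d)) := by
  apply MeasurableSet.univ_pi
  intro i
  unfold bx
  split_ifs <;> assumption

lemma disj_bx {s t : Fin 4 → Set ℝ} (i : Fin 4)
    (h : ∀ x : ℝ, x ∈ s i → x ∈ t i → False) :
    Disjoint (Set.univ.pi s) (Set.univ.pi t) :=
  Set.disjoint_left.mpr fun ω hs ht => h (ω i) (hs i trivial) (ht i trivial)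

lemma muP_bx (a b c d : Set ℝ) :
    muP (Set.univ.pi (bx a b c d)) = mu0 a * mu0 b * mu0 c * mu0 d := by
  rw [muP_pi, Fin.prod_univ_four]
  simp

lemma ofReal_mul4 {a b c d : ℝ} (ha : 0 ≤ a) (hb : 0 ≤ b) (hc : 0 ≤ c) :
    ENNReal.ofReal a * ENNReal.ofReal b * ENNReal.ofReal c * ENNReal.ofReal d
      = ENNReal.ofReal (a * b * c * d) := by
  rw [← ENNReal.ofReal_mul ha, ← ENNReal.ofReal_mul (mul_nonneg ha hb),
    ← ENNReal.ofReal_mul (mul_nonneg (mul_nonneg ha hb) hc)]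

/-! ### The eight boxes making up the rejection event -/

def IA (α : ℝ) : Set ℝ := Set.Icc (α/2) α
def B1 (α : ℝ) : Set (Fin 4 → ℝ) := Set.univ.pi (bx (IA α) Set.univ (IA α) Set.univ)
def B2 (α : ℝ) : Set (Fin 4 → ℝ) := Set.univ.pi (bx (IA α) Set.univ (Set.Iio (α/2)) Set.univ)
def B3 (α : ℝ) : Set (Fin 4 → ℝ) := Set.univ.pi (bx (IA α) (Set.Iic (α/2)) (Set.Ioi α) Set.univ)
def B4 (α : ℝ) : Set (Fin 4 → ℝ) := Set.univ.pi (bx (Set.Iio (α/2)) Set.univ (IA α) Set.univ)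
def B5 (α : ℝ) : Set (Fin 4 → ℝ) := Set.univ.pi (bx (Set.Ioi α) Set.univ (IA α) (Set.Iic (α/2)))
def B6 (α : ℝ) : Set (Fin 4 → ℝ) := Set.univ.pi (bx (IA α)ᶜ (Set.Iic (α/2)) (IA α)ᶜ Set.univ)
def B7 (α : ℝ) : Set (Fin 4 → ℝ) := Set.univ.pi (bx (IA α)ᶜ (Set.Ioi (α/2)) (IA α)ᶜ (Set.Iic (α/2)))
def B8 (α : ℝ) : Set (Fin 4 → ℝ) := Set.univ.pi (bx (IA α)ᶜ (Set.Ioc (α/2) α) (IA α)ᶜ (Set.Ioc (α/2) α))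

def UU (α : ℝ) : Set (Fin 4 → ℝ) :=
  B1 α ∪ (B2 α ∪ (B3 α ∪ (B4 α ∪ (B5 α ∪ (B6 α ∪ (B7 α ∪ B8 α))))))

lemma mem_UU_iff (α : ℝ) (ω : Fin 4 → ℝ) :
    ω ∈ UU α ↔
      ((α/2 ≤ ω 0 ∧ ω 0 ≤ α) ∧ (α/2 ≤ ω 2 ∧ ω 2 ≤ α)) ∨
      ((α/2 ≤ ω 0 ∧ ω 0 ≤ α) ∧ ω 2 < α/2) ∨
      ((α/2 ≤ ω 0 ∧ ω 0 ≤ α) ∧ ω 1 ≤ α/2 ∧ α < ω 2) ∨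
      (ω 0 < α/2 ∧ (α/2 ≤ ω 2 ∧ ω 2 ≤ α)) ∨
      (α < ω 0 ∧ (α/2 ≤ ω 2 ∧ ω 2 ≤ α) ∧ ω 3 ≤ α/2) ∨
      (¬(α/2 ≤ ω 0 ∧ ω 0 ≤ α) ∧ ω 1 ≤ α/2 ∧ ¬(α/2 ≤ ω 2 ∧ ω 2 ≤ α)) ∨
      (¬(α/2 ≤ ω 0 ∧ ω 0 ≤ α) ∧ α/2 < ω 1 ∧ ¬(α/2 ≤ ω 2 ∧ ω 2 ≤ α) ∧ ω 3 ≤ α/2) ∨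
      (¬(α/2 ≤ ω 0 ∧ ω 0 ≤ α) ∧ (α/2 < ω 1 ∧ ω 1 ≤ α) ∧ ¬(α/2 ≤ ω 2 ∧ ω 2 ≤ α) ∧
        (α/2 < ω 3 ∧ ω 3 ≤ α)) := by
  simp only [UU, B1, B2, B3, B4, B5, B6, B7, B8, Set.mem_union, mem_bx, IA,
    Set.mem_Icc, Set.mem_Iio, Set.mem_Iic, Set.mem_Ioi, Set.mem_Ioc,
    Set.mem_compl_iff, Set.mem_univ, true_and, and_true]

/-! ### The adversarial weights -/

noncomputable def gA (α : ℝ) : ℝ → ℝ := fun x => if α/2 ≤ x ∧ x ≤ α then 2 else 0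
noncomputable def gB (α : ℝ) : ℝ → ℝ := fun x => if α/2 ≤ x ∧ x ≤ α then 0 else 2

lemma measurable_gA (α : ℝ) : Measurable (gA α) := by
  have h : {x : ℝ | α/2 ≤ x ∧ x ≤ α} = Set.Icc (α/2) α := rfl
  exact Measurable.ite (h ▸ measurableSet_Icc) measurable_const measurable_const

lemma measurable_gB (α : ℝ) : Measurable (gB α) := by
  have h : {x : ℝ | α/2 ≤ x ∧ x ≤ α} = Set.Icc (α/2) α := rfl
  exact Measurable.ite (h ▸ measurableSet_Icc) measurable_const measurable_const

noncomputable def Wf (α : ℝ) : Fin 4 → (Fin 4 → ℝ) → ℝ := fun i =>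
  if i.val = 0 then (fun ω => gA α (ω 2))
  else if i.val = 1 then (fun ω => gB α (ω 2))
  else if i.val = 2 then (fun ω => gA α (ω 0))
  else (fun ω => gB α (ω 0))

@[simp] lemma Wf_zero (α : ℝ) : Wf α 0 = fun ω => gA α (ω 2) := rfl
@[simp] lemma Wf_one (α : ℝ) : Wf α 1 = fun ω => gB α (ω 2) := rfl
@[simp] lemma Wf_two (α : ℝ) : Wf α 2 = fun ω => gA α (ω 0) := rfl
@[simp] lemma Wf_three (α : ℝ) : Wf α 3 = fun ω => gB α (ω 0) := rfl

/-! ### The event identification -/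

lemma event_iff (α : ℝ) (h0 : 0 < α) (h1 : α < 1) (ω : Fin 4 → ℝ)
    (hω : ∀ i, 0 < ω i) :
    (∃ t, wBHRejects 4 (fun j => ω j) (fun j => Wf α j ω) α t) ↔ ω ∈ UU α := by
  rw [mem_UU_iff]
  by_cases hA : α/2 ≤ ω 0 ∧ ω 0 ≤ α <;> by_cases hB : α/2 ≤ ω 2 ∧ ω 2 ≤ α
  · -- A and B : effective indices 0 and 2
    have hw : ∀ t : Fin 4, (fun j => Wf α j ω) t
        = if t = (0 : Fin 4) ∨ t = (2 : Fin 4) then 2 else 0 := by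
      intro t; fin_cases t <;> simp [Wf, gA, gB, hA, hB, Fin.ext_iff] <;> norm_num [show ((0:Fin 4):ℕ) = 0 from rfl, show ((1:Fin 4):ℕ) = 1 from rfl, show ((2:Fin 4):ℕ) = 2 from rfl, show ((3:Fin 4):ℕ) = 3 from rfl]
    rw [det α h0 _ _ hω 0 2 (by decide) hw]
    constructor
    · intro _; exact Or.inl ⟨hA, hB⟩
    · intro _; exact Or.inr (Or.inr ⟨hA.2, hB.2⟩)
  · -- A and ¬B : effective indices 1 and 2
    have hw : ∀ t : Fin 4, (fun j => Wf α j ω) t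
        = if t = (1 : Fin 4) ∨ t = (2 : Fin 4) then 2 else 0 := by
      intro t; fin_cases t <;> simp [Wf, gA, gB, hA, hB, Fin.ext_iff] <;> norm_num [show ((0:Fin 4):ℕ) = 0 from rfl, show ((1:Fin 4):ℕ) = 1 from rfl, show ((2:Fin 4):ℕ) = 2 from rfl, show ((3:Fin 4):ℕ) = 3 from rfl]
    rw [det α h0 _ _ hω 1 2 (by decide) hw]
    have hB' : ω 2 < α/2 ∨ α < ω 2 := by
      rcases lt_or_ge (ω 2) (α/2) with h | h
      · exact Or.inl h
      · right; by_contra hc; push_neg at hc; exact hB ⟨h, hc⟩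
    constructor
    · rintro (h | h | ⟨ha, hb⟩)
      · rcases hB' with hc | hc
        · exact Or.inr (Or.inl ⟨hA, hc⟩)
        · exact Or.inr (Or.inr (Or.inl ⟨hA, h, hc⟩))
      · rcases hB' with hc | hc
        · exact Or.inr (Or.inl ⟨hA, hc⟩)
        · exfalso; linarith
      · rcases hB' with hc | hc
        · exact Or.inr (Or.inl ⟨hA, hc⟩)
        · exfalso; linarith
    · rintro (⟨_, hb⟩ | ⟨_, hb⟩ | ⟨_, hb, _⟩ | ⟨ha, _⟩ | ⟨ha, _⟩ |
        ⟨ha, _⟩ | ⟨ha, _⟩ | ⟨ha, _⟩)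
      · exact absurd hb hB
      · exact Or.inr (Or.inl hb.le)
      · exact Or.inl hb
      · exfalso; linarith [hA.1]
      · exfalso; linarith [hA.2]
      · exact absurd hA ha
      · exact absurd hA ha
      · exact absurd hA ha
  · -- ¬A and B : effective indices 0 and 3
    have hw : ∀ t : Fin 4, (fun j => Wf α j ω) t
        = if t = (0 : Fin 4) ∨ t = (3 : Fin 4) then 2 else 0 := by
      intro t; fin_cases t <;> simp [Wf, gA, gB, hA, hB, Fin.ext_iff] <;> norm_num [show ((0:Fin 4):ℕ) = 0 from rfl, show ((1:Fin 4):ℕ) = 1 from rfl, show ((2:Fin 4):ℕ) = 2 from rfl, show ((3:Fin 4):ℕ) = 3 from rfl]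
    rw [det α h0 _ _ hω 0 3 (by decide) hw]
    have hA' : ω 0 < α/2 ∨ α < ω 0 := by
      rcases lt_or_ge (ω 0) (α/2) with h | h
      · exact Or.inl h
      · right; by_contra hc; push_neg at hc; exact hA ⟨h, hc⟩
    constructor
    · rintro (h | h | ⟨ha, hb⟩)
      · rcases hA' with hc | hc
        · exact Or.inr (Or.inr (Or.inr (Or.inl ⟨hc, hB⟩)))
        · exfalso; linarith
      · rcases hA' with hc | hc
        · exact Or.inr (Or.inr (Or.inr (Or.inl ⟨hc, hB⟩)))
        · exact Or.inr (Or.inr (Or.inr (Or.inr (Or.inl ⟨hc, hB, h⟩))))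
      · rcases hA' with hc | hc
        · exact Or.inr (Or.inr (Or.inr (Or.inl ⟨hc, hB⟩)))
        · exfalso; linarith
    · rintro (⟨ha, _⟩ | ⟨ha, _⟩ | ⟨ha, _, _⟩ | ⟨ha, _⟩ | ⟨_, _, h3⟩ |
        ⟨_, _, hb⟩ | ⟨_, _, hb, _⟩ | ⟨_, _, hb, _⟩)
      · exact absurd ha hA
      · exact absurd ha hA
      · exact absurd ha hA
      · exact Or.inl ha.le
      · exact Or.inr (Or.inl h3)
      · exact absurd hB hb
      · exact absurd hB hb
      · exact absurd hB hb
  · -- ¬A and ¬B : effective indices 1 and 3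
    have hw : ∀ t : Fin 4, (fun j => Wf α j ω) t
        = if t = (1 : Fin 4) ∨ t = (3 : Fin 4) then 2 else 0 := by
      intro t; fin_cases t <;> simp [Wf, gA, gB, hA, hB, Fin.ext_iff] <;> norm_num [show ((0:Fin 4):ℕ) = 0 from rfl, show ((1:Fin 4):ℕ) = 1 from rfl, show ((2:Fin 4):ℕ) = 2 from rfl, show ((3:Fin 4):ℕ) = 3 from rfl]
    rw [det α h0 _ _ hω 1 3 (by decide) hw]
    constructor
    · rintro (h | h | ⟨ha, hb⟩)
      · exact Or.inr (Or.inr (Or.inr (Or.inr (Or.inr (Or.inl ⟨hA, h, hB⟩)))))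
      · by_cases hc : ω 1 ≤ α/2
        · exact Or.inr (Or.inr (Or.inr (Or.inr (Or.inr (Or.inl ⟨hA, hc, hB⟩)))))
        · exact Or.inr (Or.inr (Or.inr (Or.inr (Or.inr (Or.inr (Or.inl
            ⟨hA, not_le.1 hc, hB, h⟩))))))
      · by_cases hc : ω 1 ≤ α/2
        · exact Or.inr (Or.inr (Or.inr (Or.inr (Or.inr (Or.inl ⟨hA, hc, hB⟩)))))
        · by_cases hd : ω 3 ≤ α/2
          · exact Or.inr (Or.inr (Or.inr (Or.inr (Or.inr (Or.inr (Or.inl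
              ⟨hA, not_le.1 hc, hB, hd⟩))))))
          · exact Or.inr (Or.inr (Or.inr (Or.inr (Or.inr (Or.inr (Or.inr
              ⟨hA, ⟨not_le.1 hc, ha⟩, hB, ⟨not_le.1 hd, hb⟩⟩))))))
    · rintro (⟨ha, _⟩ | ⟨ha, _⟩ | ⟨ha, _, _⟩ | ⟨_, hb⟩ | ⟨_, hb, _⟩ |
        ⟨_, h6, _⟩ | ⟨_, _, _, h7⟩ | ⟨_, ⟨_, h81⟩, _, _, h83⟩)
      · exact absurd ha hA
      · exact absurd ha hA
      · exact absurd ha hA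
      · exact absurd hb hB
      · exact absurd hb hB
      · exact Or.inl h6
      · exact Or.inr (Or.inl h7)
      · exact Or.inr (Or.inr ⟨h81, h83⟩)

/-! ### The measure of the rejection event -/

lemma muU (α : ℝ) (h0 : 0 < α) (h1 : α < 1) :
    muP (UU α) = ENNReal.ofReal (α + α ^ 2 / 4 * (1 - α)) := by
  have m1 : MeasurableSet (B1 α) := by rw [B1, IA]; exact bx_measurable measurableSet_Icc MeasurableSet.univ measurableSet_Icc MeasurableSet.univ
  have m2 : MeasurableSet (B2 α) := by rw [B2, IA]; exact bx_measurable measurableSet_Icc MeasurableSet.univ measurableSet_Iio MeasurableSet.univ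
  have m3 : MeasurableSet (B3 α) := by rw [B3, IA]; exact bx_measurable measurableSet_Icc measurableSet_Iic measurableSet_Ioi MeasurableSet.univ
  have m4 : MeasurableSet (B4 α) := by rw [B4, IA]; exact bx_measurable measurableSet_Iio MeasurableSet.univ measurableSet_Icc MeasurableSet.univ
  have m5 : MeasurableSet (B5 α) := by rw [B5, IA]; exact bx_measurable measurableSet_Ioi MeasurableSet.univ measurableSet_Icc measurableSet_Iic
  have m6 : MeasurableSet (B6 α) := by rw [B6, IA]; exact bx_measurable measurableSet_Icc.compl measurableSet_Iic measurableSet_Icc.compl MeasurableSet.univ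
  have m7 : MeasurableSet (B7 α) := by rw [B7, IA]; exact bx_measurable measurableSet_Icc.compl measurableSet_Ioi measurableSet_Icc.compl measurableSet_Iic
  have m8 : MeasurableSet (B8 α) := by rw [B8, IA]; exact bx_measurable measurableSet_Icc.compl measurableSet_Ioc measurableSet_Icc.compl measurableSet_Ioc
  have d12 : Disjoint (B1 α) (B2 α) := by
    rw [B1, B2]
    apply disj_bx 2
    intro x hx hy
    simp only [bx_zero, bx_one, bx_two, bx_three, IA, Set.mem_Icc, Set.mem_Iio, Set.mem_Ioi, Set.mem_Iic, Set.mem_Ioc, Set.mem_compl_iff] at hx hy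
    first
      | exact hy hx
      | exact hx hy
      | (try obtain ⟨hx1, hx2⟩ := hx
         try obtain ⟨hy1, hy2⟩ := hy
         linarith)
  have d13 : Disjoint (B1 α) (B3 α) := by
    rw [B1, B3]
    apply disj_bx 2
    intro x hx hy
    simp only [bx_zero, bx_one, bx_two, bx_three, IA, Set.mem_Icc, Set.mem_Iio, Set.mem_Ioi, Set.mem_Iic, Set.mem_Ioc, Set.mem_compl_iff] at hx hy
    first
      | exact hy hx
      | exact hx hy
      | (try obtain ⟨hx1, hx2⟩ := hx
         try obtain ⟨hy1, hy2⟩ := hy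
         linarith)
  have d14 : Disjoint (B1 α) (B4 α) := by
    rw [B1, B4]
    apply disj_bx 0
    intro x hx hy
    simp only [bx_zero, bx_one, bx_two, bx_three, IA, Set.mem_Icc, Set.mem_Iio, Set.mem_Ioi, Set.mem_Iic, Set.mem_Ioc, Set.mem_compl_iff] at hx hy
    first
      | exact hy hx
      | exact hx hy
      | (try obtain ⟨hx1, hx2⟩ := hx
         try obtain ⟨hy1, hy2⟩ := hy
         linarith)
  have d15 : Disjoint (B1 α) (B5 α) := by
    rw [B1, B5]
    apply disj_bx 0
    intro x hx hy
    simp only [bx_zero, bx_one, bx_two, bx_three, IA, Set.mem_Icc, Set.mem_Iio, Set.mem_Ioi, Set.mem_Iic, Set.mem_Ioc, Set.mem_compl_iff] at hx hy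
    first
      | exact hy hx
      | exact hx hy
      | (try obtain ⟨hx1, hx2⟩ := hx
         try obtain ⟨hy1, hy2⟩ := hy
         linarith)
  have d16 : Disjoint (B1 α) (B6 α) := by
    rw [B1, B6]
    apply disj_bx 0
    intro x hx hy
    simp only [bx_zero, bx_one, bx_two, bx_three, IA, Set.mem_Icc, Set.mem_Iio, Set.mem_Ioi, Set.mem_Iic, Set.mem_Ioc, Set.mem_compl_iff] at hx hy
    first
      | exact hy hx
      | exact hx hy
      | (try obtain ⟨hx1, hx2⟩ := hx
         try obtain ⟨hy1, hy2⟩ := hy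
         linarith)
  have d17 : Disjoint (B1 α) (B7 α) := by
    rw [B1, B7]
    apply disj_bx 0
    intro x hx hy
    simp only [bx_zero, bx_one, bx_two, bx_three, IA, Set.mem_Icc, Set.mem_Iio, Set.mem_Ioi, Set.mem_Iic, Set.mem_Ioc, Set.mem_compl_iff] at hx hy
    first
      | exact hy hx
      | exact hx hy
      | (try obtain ⟨hx1, hx2⟩ := hx
         try obtain ⟨hy1, hy2⟩ := hy
         linarith)
  have d18 : Disjoint (B1 α) (B8 α) := by
    rw [B1, B8]
    apply disj_bx 0
    intro x hx hy
    simp only [bx_zero, bx_one, bx_two, bx_three, IA, Set.mem_Icc, Set.mem_Iio, Set.mem_Ioi, Set.mem_Iic, Set.mem_Ioc, Set.mem_compl_iff] at hx hy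
    first
      | exact hy hx
      | exact hx hy
      | (try obtain ⟨hx1, hx2⟩ := hx
         try obtain ⟨hy1, hy2⟩ := hy
         linarith)
  have d23 : Disjoint (B2 α) (B3 α) := by
    rw [B2, B3]
    apply disj_bx 2
    intro x hx hy
    simp only [bx_zero, bx_one, bx_two, bx_three, IA, Set.mem_Icc, Set.mem_Iio, Set.mem_Ioi, Set.mem_Iic, Set.mem_Ioc, Set.mem_compl_iff] at hx hy
    first
      | exact hy hx
      | exact hx hy
      | (try obtain ⟨hx1, hx2⟩ := hx
         try obtain ⟨hy1, hy2⟩ := hy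
         linarith)
  have d24 : Disjoint (B2 α) (B4 α) := by
    rw [B2, B4]
    apply disj_bx 0
    intro x hx hy
    simp only [bx_zero, bx_one, bx_two, bx_three, IA, Set.mem_Icc, Set.mem_Iio, Set.mem_Ioi, Set.mem_Iic, Set.mem_Ioc, Set.mem_compl_iff] at hx hy
    first
      | exact hy hx
      | exact hx hy
      | (try obtain ⟨hx1, hx2⟩ := hx
         try obtain ⟨hy1, hy2⟩ := hy
         linarith)
  have d25 : Disjoint (B2 α) (B5 α) := by
    rw [B2, B5]
    apply disj_bx 0
    intro x hx hy
    simp only [bx_zero, bx_one, bx_two, bx_three, IA, Set.mem_Icc, Set.mem_Iio, Set.mem_Ioi, Set.mem_Iic, Set.mem_Ioc, Set.mem_compl_iff] at hx hy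
    first
      | exact hy hx
      | exact hx hy
      | (try obtain ⟨hx1, hx2⟩ := hx
         try obtain ⟨hy1, hy2⟩ := hy
         linarith)
  have d26 : Disjoint (B2 α) (B6 α) := by
    rw [B2, B6]
    apply disj_bx 0
    intro x hx hy
    simp only [bx_zero, bx_one, bx_two, bx_three, IA, Set.mem_Icc, Set.mem_Iio, Set.mem_Ioi, Set.mem_Iic, Set.mem_Ioc, Set.mem_compl_iff] at hx hy
    first
      | exact hy hx
      | exact hx hy
      | (try obtain ⟨hx1, hx2⟩ := hx
         try obtain ⟨hy1, hy2⟩ := hy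
         linarith)
  have d27 : Disjoint (B2 α) (B7 α) := by
    rw [B2, B7]
    apply disj_bx 0
    intro x hx hy
    simp only [bx_zero, bx_one, bx_two, bx_three, IA, Set.mem_Icc, Set.mem_Iio, Set.mem_Ioi, Set.mem_Iic, Set.mem_Ioc, Set.mem_compl_iff] at hx hy
    first
      | exact hy hx
      | exact hx hy
      | (try obtain ⟨hx1, hx2⟩ := hx
         try obtain ⟨hy1, hy2⟩ := hy
         linarith)
  have d28 : Disjoint (B2 α) (B8 α) := by
    rw [B2, B8]
    apply disj_bx 0
    intro x hx hy
    simp only [bx_zero, bx_one, bx_two, bx_three, IA, Set.mem_Icc, Set.mem_Iio, Set.mem_Ioi, Set.mem_Iic, Set.mem_Ioc, Set.mem_compl_iff] at hx hy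
    first
      | exact hy hx
      | exact hx hy
      | (try obtain ⟨hx1, hx2⟩ := hx
         try obtain ⟨hy1, hy2⟩ := hy
         linarith)
  have d34 : Disjoint (B3 α) (B4 α) := by
    rw [B3, B4]
    apply disj_bx 0
    intro x hx hy
    simp only [bx_zero, bx_one, bx_two, bx_three, IA, Set.mem_Icc, Set.mem_Iio, Set.mem_Ioi, Set.mem_Iic, Set.mem_Ioc, Set.mem_compl_iff] at hx hy
    first
      | exact hy hx
      | exact hx hy
      | (try obtain ⟨hx1, hx2⟩ := hx
         try obtain ⟨hy1, hy2⟩ := hy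
         linarith)
  have d35 : Disjoint (B3 α) (B5 α) := by
    rw [B3, B5]
    apply disj_bx 0
    intro x hx hy
    simp only [bx_zero, bx_one, bx_two, bx_three, IA, Set.mem_Icc, Set.mem_Iio, Set.mem_Ioi, Set.mem_Iic, Set.mem_Ioc, Set.mem_compl_iff] at hx hy
    first
      | exact hy hx
      | exact hx hy
      | (try obtain ⟨hx1, hx2⟩ := hx
         try obtain ⟨hy1, hy2⟩ := hy
         linarith)
  have d36 : Disjoint (B3 α) (B6 α) := by
    rw [B3, B6]
    apply disj_bx 0
    intro x hx hy
    simp only [bx_zero, bx_one, bx_two, bx_three, IA, Set.mem_Icc, Set.mem_Iio, Set.mem_Ioi, Set.mem_Iic, Set.mem_Ioc, Set.mem_compl_iff] at hx hy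
    first
      | exact hy hx
      | exact hx hy
      | (try obtain ⟨hx1, hx2⟩ := hx
         try obtain ⟨hy1, hy2⟩ := hy
         linarith)
  have d37 : Disjoint (B3 α) (B7 α) := by
    rw [B3, B7]
    apply disj_bx 0
    intro x hx hy
    simp only [bx_zero, bx_one, bx_two, bx_three, IA, Set.mem_Icc, Set.mem_Iio, Set.mem_Ioi, Set.mem_Iic, Set.mem_Ioc, Set.mem_compl_iff] at hx hy
    first
      | exact hy hx
      | exact hx hy
      | (try obtain ⟨hx1, hx2⟩ := hx
         try obtain ⟨hy1, hy2⟩ := hy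
         linarith)
  have d38 : Disjoint (B3 α) (B8 α) := by
    rw [B3, B8]
    apply disj_bx 0
    intro x hx hy
    simp only [bx_zero, bx_one, bx_two, bx_three, IA, Set.mem_Icc, Set.mem_Iio, Set.mem_Ioi, Set.mem_Iic, Set.mem_Ioc, Set.mem_compl_iff] at hx hy
    first
      | exact hy hx
      | exact hx hy
      | (try obtain ⟨hx1, hx2⟩ := hx
         try obtain ⟨hy1, hy2⟩ := hy
         linarith)
  have d45 : Disjoint (B4 α) (B5 α) := by
    rw [B4, B5]
    apply disj_bx 0
    intro x hx hy
    simp only [bx_zero, bx_one, bx_two, bx_three, IA, Set.mem_Icc, Set.mem_Iio, Set.mem_Ioi, Set.mem_Iic, Set.mem_Ioc, Set.mem_compl_iff] at hx hy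
    first
      | exact hy hx
      | exact hx hy
      | (try obtain ⟨hx1, hx2⟩ := hx
         try obtain ⟨hy1, hy2⟩ := hy
         linarith)
  have d46 : Disjoint (B4 α) (B6 α) := by
    rw [B4, B6]
    apply disj_bx 2
    intro x hx hy
    simp only [bx_zero, bx_one, bx_two, bx_three, IA, Set.mem_Icc, Set.mem_Iio, Set.mem_Ioi, Set.mem_Iic, Set.mem_Ioc, Set.mem_compl_iff] at hx hy
    first
      | exact hy hx
      | exact hx hy
      | (try obtain ⟨hx1, hx2⟩ := hx
         try obtain ⟨hy1, hy2⟩ := hy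
         linarith)
  have d47 : Disjoint (B4 α) (B7 α) := by
    rw [B4, B7]
    apply disj_bx 2
    intro x hx hy
    simp only [bx_zero, bx_one, bx_two, bx_three, IA, Set.mem_Icc, Set.mem_Iio, Set.mem_Ioi, Set.mem_Iic, Set.mem_Ioc, Set.mem_compl_iff] at hx hy
    first
      | exact hy hx
      | exact hx hy
      | (try obtain ⟨hx1, hx2⟩ := hx
         try obtain ⟨hy1, hy2⟩ := hy
         linarith)
  have d48 : Disjoint (B4 α) (B8 α) := by
    rw [B4, B8]
    apply disj_bx 2
    intro x hx hy
    simp only [bx_zero, bx_one, bx_two, bx_three, IA, Set.mem_Icc, Set.mem_Iio, Set.mem_Ioi, Set.mem_Iic, Set.mem_Ioc, Set.mem_compl_iff] at hx hy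
    first
      | exact hy hx
      | exact hx hy
      | (try obtain ⟨hx1, hx2⟩ := hx
         try obtain ⟨hy1, hy2⟩ := hy
         linarith)
  have d56 : Disjoint (B5 α) (B6 α) := by
    rw [B5, B6]
    apply disj_bx 2
    intro x hx hy
    simp only [bx_zero, bx_one, bx_two, bx_three, IA, Set.mem_Icc, Set.mem_Iio, Set.mem_Ioi, Set.mem_Iic, Set.mem_Ioc, Set.mem_compl_iff] at hx hy
    first
      | exact hy hx
      | exact hx hy
      | (try obtain ⟨hx1, hx2⟩ := hx
         try obtain ⟨hy1, hy2⟩ := hy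
         linarith)
  have d57 : Disjoint (B5 α) (B7 α) := by
    rw [B5, B7]
    apply disj_bx 2
    intro x hx hy
    simp only [bx_zero, bx_one, bx_two, bx_three, IA, Set.mem_Icc, Set.mem_Iio, Set.mem_Ioi, Set.mem_Iic, Set.mem_Ioc, Set.mem_compl_iff] at hx hy
    first
      | exact hy hx
      | exact hx hy
      | (try obtain ⟨hx1, hx2⟩ := hx
         try obtain ⟨hy1, hy2⟩ := hy
         linarith)
  have d58 : Disjoint (B5 α) (B8 α) := by
    rw [B5, B8]
    apply disj_bx 2
    intro x hx hy
    simp only [bx_zero, bx_one, bx_two, bx_three, IA, Set.mem_Icc, Set.mem_Iio, Set.mem_Ioi, Set.mem_Iic, Set.mem_Ioc, Set.mem_compl_iff] at hx hy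
    first
      | exact hy hx
      | exact hx hy
      | (try obtain ⟨hx1, hx2⟩ := hx
         try obtain ⟨hy1, hy2⟩ := hy
         linarith)
  have d67 : Disjoint (B6 α) (B7 α) := by
    rw [B6, B7]
    apply disj_bx 1
    intro x hx hy
    simp only [bx_zero, bx_one, bx_two, bx_three, IA, Set.mem_Icc, Set.mem_Iio, Set.mem_Ioi, Set.mem_Iic, Set.mem_Ioc, Set.mem_compl_iff] at hx hy
    first
      | exact hy hx
      | exact hx hy
      | (try obtain ⟨hx1, hx2⟩ := hx
         try obtain ⟨hy1, hy2⟩ := hy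
         linarith)
  have d68 : Disjoint (B6 α) (B8 α) := by
    rw [B6, B8]
    apply disj_bx 1
    intro x hx hy
    simp only [bx_zero, bx_one, bx_two, bx_three, IA, Set.mem_Icc, Set.mem_Iio, Set.mem_Ioi, Set.mem_Iic, Set.mem_Ioc, Set.mem_compl_iff] at hx hy
    first
      | exact hy hx
      | exact hx hy
      | (try obtain ⟨hx1, hx2⟩ := hx
         try obtain ⟨hy1, hy2⟩ := hy
         linarith)
  have d78 : Disjoint (B7 α) (B8 α) := by
    rw [B7, B8]
    apply disj_bx 3
    intro x hx hy
    simp only [bx_zero, bx_one, bx_two, bx_three, IA, Set.mem_Icc, Set.mem_Iio, Set.mem_Ioi, Set.mem_Iic, Set.mem_Ioc, Set.mem_compl_iff] at hx hy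
    first
      | exact hy hx
      | exact hx hy
      | (try obtain ⟨hx1, hx2⟩ := hx
         try obtain ⟨hy1, hy2⟩ := hy
         linarith)
  have e1 : muP (B1 α) = ENNReal.ofReal ((α-α/2)*1*(α-α/2)*1) := by
    rw [B1, IA, muP_bx, mu0_Icc (by linarith) (by linarith), measure_univ, ← ENNReal.ofReal_one,
      ofReal_mul4 (by linarith) (by linarith) (by linarith)]
  have e2 : muP (B2 α) = ENNReal.ofReal ((α-α/2)*1*(α/2)*1) := by
    rw [B2, IA, muP_bx, mu0_Icc (by linarith) (by linarith), mu0_Iio (by linarith), measure_univ, ← ENNReal.ofReal_one,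
      ofReal_mul4 (by linarith) (by linarith) (by linarith)]
  have e3 : muP (B3 α) = ENNReal.ofReal ((α-α/2)*(α/2)*(1-α)*1) := by
    rw [B3, IA, muP_bx, mu0_Icc (by linarith) (by linarith), mu0_Iic (by linarith), mu0_Ioi (by linarith), measure_univ, ← ENNReal.ofReal_one,
      ofReal_mul4 (by linarith) (by linarith) (by linarith)]
  have e4 : muP (B4 α) = ENNReal.ofReal ((α/2)*1*(α-α/2)*1) := by
    rw [B4, IA, muP_bx, mu0_Iio (by linarith), mu0_Icc (by linarith) (by linarith), measure_univ, ← ENNReal.ofReal_one,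
      ofReal_mul4 (by linarith) (by linarith) (by linarith)]
  have e5 : muP (B5 α) = ENNReal.ofReal ((1-α)*1*(α-α/2)*(α/2)) := by
    rw [B5, IA, muP_bx, mu0_Ioi (by linarith), mu0_Icc (by linarith) (by linarith), mu0_Iic (by linarith), measure_univ, ← ENNReal.ofReal_one,
      ofReal_mul4 (by linarith) (by linarith) (by linarith)]
  have e6 : muP (B6 α) = ENNReal.ofReal ((1-(α-α/2))*(α/2)*(1-(α-α/2))*1) := by
    rw [B6, IA, muP_bx, mu0_compl_Icc (by linarith) (by linarith) (by linarith), mu0_Iic (by linarith), measure_univ, ← ENNReal.ofReal_one,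
      ofReal_mul4 (by linarith) (by linarith) (by linarith)]
  have e7 : muP (B7 α) = ENNReal.ofReal ((1-(α-α/2))*(1-α/2)*(1-(α-α/2))*(α/2)) := by
    rw [B7, IA, muP_bx, mu0_compl_Icc (by linarith) (by linarith) (by linarith), mu0_Ioi (by linarith), mu0_Iic (by linarith),
      ofReal_mul4 (by linarith) (by linarith) (by linarith)]
  have e8 : muP (B8 α) = ENNReal.ofReal ((1-(α-α/2))*(α-α/2)*(1-(α-α/2))*(α-α/2)) := by
    rw [B8, IA, muP_bx, mu0_compl_Icc (by linarith) (by linarith) (by linarith), mu0_Ioc (by linarith) (by linarith),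
      ofReal_mul4 (by linarith) (by linarith) (by linarith)]
  have nn1 : (0:ℝ) ≤ (α-α/2)*1*(α-α/2)*1 := by apply_rules [mul_nonneg] <;> linarith
  have nn2 : (0:ℝ) ≤ (α-α/2)*1*(α/2)*1 := by apply_rules [mul_nonneg] <;> linarith
  have nn3 : (0:ℝ) ≤ (α-α/2)*(α/2)*(1-α)*1 := by apply_rules [mul_nonneg] <;> linarith
  have nn4 : (0:ℝ) ≤ (α/2)*1*(α-α/2)*1 := by apply_rules [mul_nonneg] <;> linarith
  have nn5 : (0:ℝ) ≤ (1-α)*1*(α-α/2)*(α/2) := by apply_rules [mul_nonneg] <;> linarith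
  have nn6 : (0:ℝ) ≤ (1-(α-α/2))*(α/2)*(1-(α-α/2))*1 := by apply_rules [mul_nonneg] <;> linarith
  have nn7 : (0:ℝ) ≤ (1-(α-α/2))*(1-α/2)*(1-(α-α/2))*(α/2) := by apply_rules [mul_nonneg] <;> linarith
  have nn8 : (0:ℝ) ≤ (1-(α-α/2))*(α-α/2)*(1-(α-α/2))*(α-α/2) := by apply_rules [mul_nonneg] <;> linarith
  have nns7 : (0:ℝ) ≤ (1-(α-α/2))*(1-α/2)*(1-(α-α/2))*(α/2) + ((1-(α-α/2))*(α-α/2)*(1-(α-α/2))*(α-α/2)) := add_nonneg nn7 nn8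
  have nns6 : (0:ℝ) ≤ (1-(α-α/2))*(α/2)*(1-(α-α/2))*1 + ((1-(α-α/2))*(1-α/2)*(1-(α-α/2))*(α/2) + ((1-(α-α/2))*(α-α/2)*(1-(α-α/2))*(α-α/2))) := add_nonneg nn6 nns7
  have nns5 : (0:ℝ) ≤ (1-α)*1*(α-α/2)*(α/2) + ((1-(α-α/2))*(α/2)*(1-(α-α/2))*1 + ((1-(α-α/2))*(1-α/2)*(1-(α-α/2))*(α/2) + ((1-(α-α/2))*(α-α/2)*(1-(α-α/2))*(α-α/2)))) := add_nonneg nn5 nns6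
  have nns4 : (0:ℝ) ≤ (α/2)*1*(α-α/2)*1 + ((1-α)*1*(α-α/2)*(α/2) + ((1-(α-α/2))*(α/2)*(1-(α-α/2))*1 + ((1-(α-α/2))*(1-α/2)*(1-(α-α/2))*(α/2) + ((1-(α-α/2))*(α-α/2)*(1-(α-α/2))*(α-α/2))))) := add_nonneg nn4 nns5
  have nns3 : (0:ℝ) ≤ (α-α/2)*(α/2)*(1-α)*1 + ((α/2)*1*(α-α/2)*1 + ((1-α)*1*(α-α/2)*(α/2) + ((1-(α-α/2))*(α/2)*(1-(α-α/2))*1 + ((1-(α-α/2))*(1-α/2)*(1-(α-α/2))*(α/2) + ((1-(α-α/2))*(α-α/2)*(1-(α-α/2))*(α-α/2)))))) := add_nonneg nn3 nns4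
  have nns2 : (0:ℝ) ≤ (α-α/2)*1*(α/2)*1 + ((α-α/2)*(α/2)*(1-α)*1 + ((α/2)*1*(α-α/2)*1 + ((1-α)*1*(α-α/2)*(α/2) + ((1-(α-α/2))*(α/2)*(1-(α-α/2))*1 + ((1-(α-α/2))*(1-α/2)*(1-(α-α/2))*(α/2) + ((1-(α-α/2))*(α-α/2)*(1-(α-α/2))*(α-α/2))))))) := add_nonneg nn2 nns3
  have nns1 : (0:ℝ) ≤ (α-α/2)*1*(α-α/2)*1 + ((α-α/2)*1*(α/2)*1 + ((α-α/2)*(α/2)*(1-α)*1 + ((α/2)*1*(α-α/2)*1 + ((1-α)*1*(α-α/2)*(α/2) + ((1-(α-α/2))*(α/2)*(1-(α-α/2))*1 + ((1-(α-α/2))*(1-α/2)*(1-(α-α/2))*(α/2) + ((1-(α-α/2))*(α-α/2)*(1-(α-α/2))*(α-α/2)))))))) := add_nonneg nn1 nns2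
  have t7 : ENNReal.ofReal ((1-(α-α/2))*(1-α/2)*(1-(α-α/2))*(α/2)) + ENNReal.ofReal ((1-(α-α/2))*(α-α/2)*(1-(α-α/2))*(α-α/2))
      = ENNReal.ofReal ((1-(α-α/2))*(1-α/2)*(1-(α-α/2))*(α/2) + ((1-(α-α/2))*(α-α/2)*(1-(α-α/2))*(α-α/2))) := (ENNReal.ofReal_add nn7 nn8).symm
  have t6 : ENNReal.ofReal ((1-(α-α/2))*(α/2)*(1-(α-α/2))*1) + ENNReal.ofReal ((1-(α-α/2))*(1-α/2)*(1-(α-α/2))*(α/2) + ((1-(α-α/2))*(α-α/2)*(1-(α-α/2))*(α-α/2)))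
      = ENNReal.ofReal ((1-(α-α/2))*(α/2)*(1-(α-α/2))*1 + ((1-(α-α/2))*(1-α/2)*(1-(α-α/2))*(α/2) + ((1-(α-α/2))*(α-α/2)*(1-(α-α/2))*(α-α/2)))) := (ENNReal.ofReal_add nn6 nns7).symm
  have t5 : ENNReal.ofReal ((1-α)*1*(α-α/2)*(α/2)) + ENNReal.ofReal ((1-(α-α/2))*(α/2)*(1-(α-α/2))*1 + ((1-(α-α/2))*(1-α/2)*(1-(α-α/2))*(α/2) + ((1-(α-α/2))*(α-α/2)*(1-(α-α/2))*(α-α/2))))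
      = ENNReal.ofReal ((1-α)*1*(α-α/2)*(α/2) + ((1-(α-α/2))*(α/2)*(1-(α-α/2))*1 + ((1-(α-α/2))*(1-α/2)*(1-(α-α/2))*(α/2) + ((1-(α-α/2))*(α-α/2)*(1-(α-α/2))*(α-α/2))))) := (ENNReal.ofReal_add nn5 nns6).symm
  have t4 : ENNReal.ofReal ((α/2)*1*(α-α/2)*1) + ENNReal.ofReal ((1-α)*1*(α-α/2)*(α/2) + ((1-(α-α/2))*(α/2)*(1-(α-α/2))*1 + ((1-(α-α/2))*(1-α/2)*(1-(α-α/2))*(α/2) + ((1-(α-α/2))*(α-α/2)*(1-(α-α/2))*(α-α/2)))))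
      = ENNReal.ofReal ((α/2)*1*(α-α/2)*1 + ((1-α)*1*(α-α/2)*(α/2) + ((1-(α-α/2))*(α/2)*(1-(α-α/2))*1 + ((1-(α-α/2))*(1-α/2)*(1-(α-α/2))*(α/2) + ((1-(α-α/2))*(α-α/2)*(1-(α-α/2))*(α-α/2)))))) := (ENNReal.ofReal_add nn4 nns5).symm
  have t3 : ENNReal.ofReal ((α-α/2)*(α/2)*(1-α)*1) + ENNReal.ofReal ((α/2)*1*(α-α/2)*1 + ((1-α)*1*(α-α/2)*(α/2) + ((1-(α-α/2))*(α/2)*(1-(α-α/2))*1 + ((1-(α-α/2))*(1-α/2)*(1-(α-α/2))*(α/2) + ((1-(α-α/2))*(α-α/2)*(1-(α-α/2))*(α-α/2))))))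
      = ENNReal.ofReal ((α-α/2)*(α/2)*(1-α)*1 + ((α/2)*1*(α-α/2)*1 + ((1-α)*1*(α-α/2)*(α/2) + ((1-(α-α/2))*(α/2)*(1-(α-α/2))*1 + ((1-(α-α/2))*(1-α/2)*(1-(α-α/2))*(α/2) + ((1-(α-α/2))*(α-α/2)*(1-(α-α/2))*(α-α/2))))))) := (ENNReal.ofReal_add nn3 nns4).symm
  have t2 : ENNReal.ofReal ((α-α/2)*1*(α/2)*1) + ENNReal.ofReal ((α-α/2)*(α/2)*(1-α)*1 + ((α/2)*1*(α-α/2)*1 + ((1-α)*1*(α-α/2)*(α/2) + ((1-(α-α/2))*(α/2)*(1-(α-α/2))*1 + ((1-(α-α/2))*(1-α/2)*(1-(α-α/2))*(α/2) + ((1-(α-α/2))*(α-α/2)*(1-(α-α/2))*(α-α/2)))))))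
      = ENNReal.ofReal ((α-α/2)*1*(α/2)*1 + ((α-α/2)*(α/2)*(1-α)*1 + ((α/2)*1*(α-α/2)*1 + ((1-α)*1*(α-α/2)*(α/2) + ((1-(α-α/2))*(α/2)*(1-(α-α/2))*1 + ((1-(α-α/2))*(1-α/2)*(1-(α-α/2))*(α/2) + ((1-(α-α/2))*(α-α/2)*(1-(α-α/2))*(α-α/2)))))))) := (ENNReal.ofReal_add nn2 nns3).symm
  have t1 : ENNReal.ofReal ((α-α/2)*1*(α-α/2)*1) + ENNReal.ofReal ((α-α/2)*1*(α/2)*1 + ((α-α/2)*(α/2)*(1-α)*1 + ((α/2)*1*(α-α/2)*1 + ((1-α)*1*(α-α/2)*(α/2) + ((1-(α-α/2))*(α/2)*(1-(α-α/2))*1 + ((1-(α-α/2))*(1-α/2)*(1-(α-α/2))*(α/2) + ((1-(α-α/2))*(α-α/2)*(1-(α-α/2))*(α-α/2))))))))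
      = ENNReal.ofReal ((α-α/2)*1*(α-α/2)*1 + ((α-α/2)*1*(α/2)*1 + ((α-α/2)*(α/2)*(1-α)*1 + ((α/2)*1*(α-α/2)*1 + ((1-α)*1*(α-α/2)*(α/2) + ((1-(α-α/2))*(α/2)*(1-(α-α/2))*1 + ((1-(α-α/2))*(1-α/2)*(1-(α-α/2))*(α/2) + ((1-(α-α/2))*(α-α/2)*(1-(α-α/2))*(α-α/2))))))))) := (ENNReal.ofReal_add nn1 nns2).symm
  have hU : muP (UU α)
      = muP (B1 α) + (muP (B2 α) + (muP (B3 α) + (muP (B4 α) +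
        (muP (B5 α) + (muP (B6 α) + (muP (B7 α) + muP (B8 α))))))) := by
    rw [UU]
    rw [measure_union (by
      simp only [Set.disjoint_union_right]
      exact ⟨d12, d13, d14, d15, d16, d17, d18⟩) (m2.union (m3.union (m4.union (m5.union (m6.union (m7.union m8))))))]
    rw [measure_union (by
      simp only [Set.disjoint_union_right]
      exact ⟨d23, d24, d25, d26, d27, d28⟩) (m3.union (m4.union (m5.union (m6.union (m7.union m8)))))]
    rw [measure_union (by
      simp only [Set.disjoint_union_right]
      exact ⟨d34, d35, d36, d37, d38⟩) (m4.union (m5.union (m6.union (m7.union m8))))]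
    rw [measure_union (by
      simp only [Set.disjoint_union_right]
      exact ⟨d45, d46, d47, d48⟩) (m5.union (m6.union (m7.union m8)))]
    rw [measure_union (by
      simp only [Set.disjoint_union_right]
      exact ⟨d56, d57, d58⟩) (m6.union (m7.union m8))]
    rw [measure_union (by
      simp only [Set.disjoint_union_right]
      exact ⟨d67, d68⟩) (m7.union m8)]
    rw [measure_union d78 m8]
  rw [hU, e1, e2, e3, e4, e5, e6, e7, e8, t7, t6, t5, t4, t3, t2, t1]
  congr 1
  ring

end WBHaux

/-- **Counterexample: pairwise independence `P i ⊥ W i` does not suffice for FDR control.**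
For every `α ∈ (0,1)` there exist four i.i.d. uniform-`[0,1]` p-values `P 1, …, P 4`
(all true nulls) and weights `W i ∈ {0, 2}` summing to `4`, with each `P i` independent
of its own weight `W i`, such that the weighted BH procedure at level `α` rejects at
least one (null) hypothesis with probability exactly `α + (α²/4)(1 − α) > α`; since all
hypotheses are null, FWER = FDR = `α + (α²/4)(1 − α)`. -/
theorem weighted_bh_pairwise_independence_counterexample
    (α : ℝ) (hα : α ∈ Set.Ioo (0 : ℝ) 1) :
    ∃ (Ω : Type) (_ : MeasurableSpace Ω) (μ : Measure Ω) (_ : IsProbabilityMeasure μ)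
      (P W : Fin 4 → Ω → ℝ),
      (∀ i, Measurable (P i)) ∧ (∀ i, Measurable (W i)) ∧
      iIndepFun P μ ∧
      (∀ i, ∀ t ∈ Set.Icc (0 : ℝ) 1, μ {ω | P i ω ≤ t} = ENNReal.ofReal t) ∧
      (∀ i ω, W i ω = 0 ∨ W i ω = 2) ∧
      (∀ ω, ∑ i, W i ω = 4) ∧
      (∀ i, IndepFun (P i) (W i) μ) ∧
      μ {ω | ∃ i : Fin 4, wBHRejects 4 (fun j => P j ω) (fun j => W j ω) α i}
        = ENNReal.ofReal (α + α ^ 2 / 4 * (1 - α)) ∧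
      α < α + α ^ 2 / 4 * (1 - α) := by
  obtain ⟨h0, h1⟩ := hα
  refine ⟨Fin 4 → ℝ, inferInstance, WBHaux.muP, inferInstance,
    (fun i ω => ω i), (fun i => WBHaux.Wf α i), ?_, ?_, ?_, ?_, ?_, ?_, ?_, ?_, ?_⟩
  · exact fun i => measurable_pi_apply i
  · intro i
    fin_cases i
    · exact (WBHaux.measurable_gA α).comp (measurable_pi_apply 2)
    · exact (WBHaux.measurable_gB α).comp (measurable_pi_apply 2)
    · exact (WBHaux.measurable_gA α).comp (measurable_pi_apply 0)
    · exact (WBHaux.measurable_gB α).comp (measurable_pi_apply 0)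
  · exact WBHaux.coord_iIndep
  · intro i t ht
    have h : {ω : Fin 4 → ℝ | ω i ≤ t} = {ω : Fin 4 → ℝ | ω i ∈ Set.Iic t} := rfl
    rw [h, WBHaux.muP_cyl, WBHaux.mu0_Iic ht.2]
  · intro i ω
    have hgA : ∀ x : ℝ, WBHaux.gA α x = 0 ∨ WBHaux.gA α x = 2 := by
      intro x; unfold WBHaux.gA; split_ifs <;> simp
    have hgB : ∀ x : ℝ, WBHaux.gB α x = 0 ∨ WBHaux.gB α x = 2 := by
      intro x; unfold WBHaux.gB; split_ifs <;> simp
    fin_cases i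
    · exact hgA (ω 2)
    · exact hgB (ω 2)
    · exact hgA (ω 0)
    · exact hgB (ω 0)
  · intro ω
    rw [Fin.sum_univ_four]
    simp only [WBHaux.Wf_zero, WBHaux.Wf_one, WBHaux.Wf_two, WBHaux.Wf_three,
      WBHaux.gA, WBHaux.gB]
    split_ifs <;> norm_num
  · intro i
    have base : ∀ (i j : Fin 4), i ≠ j →
        IndepFun (fun ω : Fin 4 → ℝ => ω i) (fun ω : Fin 4 → ℝ => ω j) WBHaux.muP :=
      fun i j hij => WBHaux.coord_iIndep.indepFun hij
    fin_cases i
    · exact (base 0 2 (by decide)).comp measurable_id (WBHaux.measurable_gA α)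
    · exact (base 1 2 (by decide)).comp measurable_id (WBHaux.measurable_gB α)
    · exact (base 2 0 (by decide)).comp measurable_id (WBHaux.measurable_gA α)
    · exact (base 3 0 (by decide)).comp measurable_id (WBHaux.measurable_gB α)
  · have hnull : WBHaux.muP {ω : Fin 4 → ℝ | ¬ ∀ i, 0 < ω i} = 0 := by
      have hsub : {ω : Fin 4 → ℝ | ¬ ∀ i, 0 < ω i}
          ⊆ ⋃ i : Fin 4, {ω : Fin 4 → ℝ | ω i ∈ Set.Iic 0} := by
        intro ω hω
        push_neg at hω
        obtain ⟨i, hi⟩ := hω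
        exact Set.mem_iUnion.2 ⟨i, hi⟩
      refine measure_mono_null hsub (measure_iUnion_null fun i => ?_)
      rw [WBHaux.muP_cyl, WBHaux.mu0_Iic (by norm_num)]
      simp
    have hae : ∀ᵐ ω ∂WBHaux.muP, ∀ i, 0 < ω i := by
      rw [MeasureTheory.ae_iff]
      exact hnull
    have heq : {ω : Fin 4 → ℝ |
        ∃ i : Fin 4, wBHRejects 4 (fun j => ω j) (fun j => WBHaux.Wf α j ω) α i}
          =ᵐ[WBHaux.muP] WBHaux.UU α := by
      rw [Filter.eventuallyEq_set]
      filter_upwards [hae] with ω hω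
      exact WBHaux.event_iff α h0 h1 ω hω
    rw [measure_congr heq, WBHaux.muU α h0 h1]
  · have hpos : 0 < α ^ 2 / 4 * (1 - α) :=
      mul_pos (div_pos (pow_pos h0 2) (by norm_num)) (by linarith)
    linarith
end

section
/- In the IHWc procedure with censoring level τ: for any index i, if hypothesis i is rejected then P_i ≤ (αW_i·k̂/m) ∧ τ, and the number of rejections k̂ equals k_i, the number of rejections when P_i is replaced by 0; in particular rejection of i implies P_i ≤ (αW_i·k_i/m) ∧ τ. -/
open MeasureTheory Classical

/-- Censoring of p-values at level `τ`: p-values `≤ τ` are replaced by `0`. -/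
noncomputable def censor (m : ℕ) (τ : ℝ) (P : Fin m → ℝ) : Fin m → ℝ :=
  fun j => if τ < P j then P j else 0

/-- The number of rejections of the censored weighted BH procedure (IHWc) at level `α`
with censoring level `τ`:
`k* = max {k : at least k p-values satisfy P i ≤ (α W i k / m) ∧ τ}`. -/
noncomputable def cBHRejCount (m : ℕ) (P W : Fin m → ℝ) (α τ : ℝ) : ℕ :=
  sSup {k : ℕ |
    k ≤ (Finset.univ.filter (fun i : Fin m => P i ≤ min (α * W i * k / m) τ)).card}

/-- **IHWc leave-one-out stability (key step in the proof of Theorem 2).**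
In the IHWc procedure — weights given by a function `w` of the censored p-values, and
the censored weighted BH rejection rule — if hypothesis `i` is rejected, then
`P i ≤ (α W i k̂ / m) ∧ τ`, the rejection count `k̂` is unchanged (and at least `1`) when
`P i` is replaced by `0`, and in particular `P i ≤ (α W i k_i / m) ∧ τ` where `k_i` is
the rejection count with `P i` replaced by `0`. -/
theorem ihwc_leave_one_out_stability
    (m : ℕ) (hm : 0 < m) (α τ : ℝ) (hα : 0 < α) (hτ : 0 < τ)
    (P : Fin m → ℝ) (hPnonneg : ∀ j, 0 ≤ P j)
    (w : (Fin m → ℝ) → Fin m → ℝ) (hwnonneg : ∀ p j, 0 ≤ w p j)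
    (i : Fin m)
    -- `i` is rejected by IHWc with weights `W = w (censored P)`
    (hrej : P i ≤ min
      (α * w (censor m τ P) i *
        (cBHRejCount m P (w (censor m τ P)) α τ : ℝ) / m) τ) :
    cBHRejCount m P (w (censor m τ P)) α τ
      = cBHRejCount m (Function.update P i 0)
          (w (censor m τ (Function.update P i 0))) α τ ∧
    1 ≤ cBHRejCount m (Function.update P i 0)
          (w (censor m τ (Function.update P i 0))) α τ ∧
    P i ≤ min
      (α * w (censor m τ P) i *
        (cBHRejCount m (Function.update P i 0)
          (w (censor m τ (Function.update P i 0))) α τ : ℝ) / m) τ := by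
  have hPiτ : P i ≤ τ := (le_min_iff.mp hrej).2
  have hcens : censor m τ (Function.update P i 0) = censor m τ P := by
    funext j
    by_cases hj : j = i
    · subst hj
      simp [censor, Function.update_self, not_lt.mpr hτ.le, not_lt.mpr hPiτ]
    · simp [censor, Function.update_of_ne hj]
  rw [hcens]
  set W := w (censor m τ P) with hW
  set P' := Function.update P i 0 with hP'
  have hWi : 0 ≤ W i := hwnonneg _ _
  set S : Set ℕ := {k : ℕ |
    k ≤ (Finset.univ.filter (fun j : Fin m => P j ≤ min (α * W j * k / m) τ)).card} with hS
  set S' : Set ℕ := {k : ℕ |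
    k ≤ (Finset.univ.filter (fun j : Fin m => P' j ≤ min (α * W j * k / m) τ)).card} with hS'
  set khat := cBHRejCount m P W α τ with hkhat
  set ki := cBHRejCount m P' W α τ with hki
  have hk1 : khat = sSup S := rfl
  have hk2 : ki = sSup S' := rfl
  have hminnn : ∀ (j : Fin m) (k : ℕ), (0:ℝ) ≤ min (α * W j * k / m) τ := by
    intro j k
    exact le_min (div_nonneg (mul_nonneg (mul_nonneg hα.le (hwnonneg _ _))
      (Nat.cast_nonneg k)) (Nat.cast_nonneg m)) hτ.le
  have hbdd : ∀ (Q : Fin m → ℝ), BddAbove {k : ℕ |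
      k ≤ (Finset.univ.filter (fun j : Fin m => Q j ≤ min (α * W j * k / m) τ)).card} := by
    intro Q
    refine ⟨m, fun k hk => ?_⟩
    exact hk.trans ((Finset.card_filter_le _ _).trans (by simp))
  have h0S : (0:ℕ) ∈ S := by simp [hS]
  have h0S' : (0:ℕ) ∈ S' := by simp [hS']
  have hsub : S ⊆ S' := by
    intro k hk
    refine hk.trans (Finset.card_le_card ?_)
    intro j hj
    simp only [Finset.mem_filter, Finset.mem_univ, true_and] at hj ⊢
    by_cases hji : j = i
    · subst hji; simpa [hP', Function.update_self] using hminnn j k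
    · rwa [hP', Function.update_of_ne hji]
  have hkle : khat ≤ ki := by
    rw [hk1, hk2]; exact csSup_le_csSup (hbdd P') ⟨0, h0S⟩ hsub
  -- khat ≥ 1
  have hkhat1 : 1 ≤ khat := by
    by_contra h
    push_neg at h
    have h0 : khat = 0 := Nat.lt_one_iff.mp h
    rw [h0] at hrej
    have hPi0 : P i = 0 :=
      le_antisymm (by simpa using (le_min_iff.mp hrej).1) (hPnonneg i)
    have h1S : (1:ℕ) ∈ S := by
      have hi1 : i ∈ Finset.univ.filter
          (fun j : Fin m => P j ≤ min (α * W j * ((1:ℕ):ℝ) / m) τ) := by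
        simp only [Finset.mem_filter, Finset.mem_univ, true_and]
        rw [hPi0]; exact hminnn i 1
      exact Finset.card_pos.mpr ⟨i, hi1⟩
    have := le_csSup (hbdd P) h1S
    rw [← hk1, h0] at this
    omega
  -- monotone in k
  have hrej' : P i ≤ min (α * W i * (ki:ℝ) / m) τ := by
    refine le_trans hrej (min_le_min ?_ le_rfl)
    gcongr
    all_goals first
      | exact mul_nonneg hα.le hWi
      | exact_mod_cast hkle
  have hfilt : (Finset.univ.filter (fun j : Fin m => P' j ≤ min (α * W j * (ki:ℝ) / m) τ))
      = (Finset.univ.filter (fun j : Fin m => P j ≤ min (α * W j * (ki:ℝ) / m) τ)) := by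
    apply Finset.filter_congr
    intro j _
    by_cases hji : j = i
    · subst hji
      simp only [hP', Function.update_self]
      exact iff_of_true (hminnn j ki) hrej'
    · rw [hP', Function.update_of_ne hji]
  have hkiS : ki ∈ S := by
    have hmem : ki ∈ S' := by
      rw [hk2]; exact Nat.sSup_mem ⟨0, h0S'⟩ (hbdd P')
    have hmem' : ki ≤ (Finset.univ.filter
        (fun j : Fin m => P' j ≤ min (α * W j * (ki:ℝ) / m) τ)).card := hmem
    exact hmem'.trans_eq (congrArg Finset.card hfilt)
  have hkeq : khat = ki := le_antisymm hkle (by rw [hk1]; exact le_csSup (hbdd P) hkiS)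
  exact ⟨hkeq, hkeq ▸ hkhat1, hkeq ▸ hrej⟩
end

section
/- Under Assumption 2 (jointly independent super-uniform null pairs independent of alternatives, with P_i ⊥ X_i for nulls), the IHWc procedure with censoring level τ ∈ (0,1) and cross-weights satisfying Σ_i W_i = m a.s. controls the FDR at level α. -/
open MeasureTheory ProbabilityTheory Classical

/-- Hypothesis `i` is rejected by IHWc. -/
noncomputable def cBHRejects (m : ℕ) (P W : Fin m → ℝ) (α τ : ℝ) (i : Fin m) : Prop :=
  P i ≤ min (α * W i * (cBHRejCount m P W α τ : ℝ) / m) τ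

namespace IHWc

variable {m : ℕ} {P W : Fin m → ℝ} {α τ : ℝ}

def cset (m : ℕ) (P W : Fin m → ℝ) (α τ : ℝ) : Set ℕ :=
  {k : ℕ |
    k ≤ (Finset.univ.filter (fun i : Fin m => P i ≤ min (α * W i * k / m) τ)).card}

lemma cBHRejCount_eq : cBHRejCount m P W α τ = sSup (cset m P W α τ) := rfl

lemma cset_bddAbove : BddAbove (cset m P W α τ) :=
  ⟨m, fun k hk => le_trans hk (le_trans (Finset.card_filter_le _ _) (by simp))⟩

lemma cset_zero_mem : 0 ∈ cset m P W α τ := Nat.zero_le _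

lemma le_cBHRejCount {k : ℕ}
    (hk : k ≤ (Finset.univ.filter (fun i : Fin m => P i ≤ min (α * W i * k / m) τ)).card) :
    k ≤ cBHRejCount m P W α τ :=
  le_csSup cset_bddAbove hk

lemma cBHRejCount_mem : cBHRejCount m P W α τ ∈ cset m P W α τ :=
  Nat.sSup_mem ⟨0, cset_zero_mem⟩ cset_bddAbove

/-- threshold monotone in k -/
lemma thresh_mono {i : Fin m} (hα : 0 ≤ α) (hw : 0 ≤ W i) {k k' : ℕ} (hkk : k ≤ k') :
    min (α * W i * k / m) τ ≤ min (α * W i * k' / m) τ := by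
  apply min_le_min _ le_rfl
  have h1 : α * W i * (k:ℝ) ≤ α * W i * (k':ℝ) := by
    apply mul_le_mul_of_nonneg_left (by exact_mod_cast hkk) (by positivity)
  exact div_le_div_of_nonneg_right h1 (Nat.cast_nonneg m)

end IHWc

namespace Det

variable {m : ℕ} {P W : Fin m → ℝ} {α τ : ℝ} {i : Fin m}

open IHWc

/-- zeroed p-value vector -/
noncomputable def zeroAt (P : Fin m → ℝ) (i : Fin m) : Fin m → ℝ :=
  fun j => if j = i then 0 else P j

lemma thresh_nonneg (hα : 0 ≤ α) (hw : 0 ≤ W i) (hτ : 0 ≤ τ) (k : ℕ) :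
    0 ≤ min (α * W i * k / m) τ :=
  le_min (by positivity) hτ

/-- A3: zeroing a p-value can only increase the rejection count. -/
lemma count_le_count_zeroAt (hα : 0 ≤ α) (hw : ∀ j, 0 ≤ W j) (hτ : 0 ≤ τ) :
    cBHRejCount m P W α τ ≤ cBHRejCount m (zeroAt P i) W α τ := by
  apply csSup_le_csSup cset_bddAbove ⟨0, cset_zero_mem⟩
  intro k hk
  refine le_trans hk (Finset.card_le_card ?_)
  intro j hj
  simp only [Finset.mem_filter, Finset.mem_univ, true_and] at hj ⊢
  by_cases hji : j = i
  · subst hji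
    simp only [zeroAt, if_pos rfl]
    exact thresh_nonneg hα (hw j) hτ k
  · simpa [zeroAt, hji] using hj

/-- A4: if `i` is rejected, zeroing `P i` does not change the rejection count. -/
lemma count_zeroAt_eq (hα : 0 ≤ α) (hw : ∀ j, 0 ≤ W j) (hτ : 0 ≤ τ)
    (hrej : P i ≤ min (α * W i * (cBHRejCount m P W α τ : ℝ) / m) τ) :
    cBHRejCount m (zeroAt P i) W α τ = cBHRejCount m P W α τ := by
  refine le_antisymm ?_ (count_le_count_zeroAt hα hw hτ)
  set R := cBHRejCount m P W α τ with hR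
  set k := cBHRejCount m (zeroAt P i) W α τ with hk
  rcases le_or_gt k R with h | h
  · exact h
  · -- show k ∈ cset m P W α τ
    apply le_cBHRejCount (P := P) (W := W)
    have hmem := cBHRejCount_mem (m := m) (P := zeroAt P i) (W := W) (α := α) (τ := τ)
    rw [← hk] at hmem
    refine le_trans hmem (le_of_eq (congrArg Finset.card ?_))
    apply Finset.filter_congr
    intro j _
    by_cases hji : j = i
    · subst hji
      simp only [zeroAt, if_pos rfl, eq_iff_iff]
      constructor
      · intro _
        exact le_trans hrej (thresh_mono hα (hw j) h.le)
      · intro _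
        exact thresh_nonneg hα (hw j) hτ k
    · simp [zeroAt, hji]

/-- A5: if some `i` is rejected then the rejection count is at least 1. -/
lemma one_le_count (hα : 0 ≤ α) (hw : ∀ j, 0 ≤ W j) (hτ : 0 ≤ τ)
    (hrej : P i ≤ min (α * W i * (cBHRejCount m P W α τ : ℝ) / m) τ) :
    1 ≤ cBHRejCount m P W α τ := by
  by_contra h
  push_neg at h
  interval_cases h' : cBHRejCount m P W α τ
  · apply absurd (le_cBHRejCount (P := P) (W := W) (α := α) (τ := τ) (k := 1) ?_)
    · omega
    · have : (0:ℕ) < (Finset.univ.filter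
          (fun j : Fin m => P j ≤ min (α * W j * ((1:ℕ):ℝ) / m) τ)).card := by
        apply Finset.card_pos.mpr
        refine ⟨i, Finset.mem_filter.mpr ⟨Finset.mem_univ i, ?_⟩⟩
        exact le_trans hrej (thresh_mono hα (hw i) (Nat.zero_le 1))
      omega

end Det

namespace Meas

open IHWc

variable {m : ℕ} {α τ : ℝ}

lemma cBHRejCount_eq_sup (P W : Fin m → ℝ) :
    cBHRejCount m P W α τ = (Finset.range (m + 1)).sup
      (fun k => if k ≤ (Finset.univ.filter
          (fun i : Fin m => P i ≤ min (α * W i * k / m) τ)).card then k else 0) := by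
  set f : ℕ → ℕ := fun k => if k ≤ (Finset.univ.filter
      (fun i : Fin m => P i ≤ min (α * W i * k / m) τ)).card then k else 0 with hf
  apply le_antisymm
  · have hmem := cBHRejCount_mem (m := m) (P := P) (W := W) (α := α) (τ := τ)
    have hle : cBHRejCount m P W α τ ≤ m :=
      le_trans hmem (le_trans (Finset.card_filter_le _ _) (by simp))
    have h1 : f (cBHRejCount m P W α τ) = cBHRejCount m P W α τ := if_pos hmem
    have h2 : f (cBHRejCount m P W α τ) ≤ (Finset.range (m + 1)).sup f :=
      Finset.le_sup (Finset.mem_range.mpr (by omega))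
    rwa [h1] at h2
  · apply Finset.sup_le
    intro k _
    by_cases hk : k ≤ (Finset.univ.filter
        (fun i : Fin m => P i ≤ min (α * W i * k / m) τ)).card
    · rw [hf]; simp only [if_pos hk]; exact le_cBHRejCount hk
    · rw [hf]; simp only [if_neg hk]; exact Nat.zero_le _

variable {X : Type*} [MeasurableSpace X]

lemma measurable_finset_sup {ι : Type*} (s : Finset ι) (f : ι → X → ℕ)
    (hf : ∀ i, Measurable (f i)) : Measurable (fun x => s.sup (fun i => f i x)) := by
  classical
  induction s using Finset.induction_on with
  | empty => simpa using measurable_const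
  | insert _ _ _ ih =>
      simp only [Finset.sup_insert]
      exact Measurable.sup (hf _) ih

lemma measurable_card_filter {ι : Type*} [Fintype ι] (p : ι → X → Prop)
    (hp : ∀ i, MeasurableSet {x | p i x}) :
    Measurable (fun x => (Finset.univ.filter (fun i : ι => p i x)).card) := by
  classical
  have : (fun x => (Finset.univ.filter (fun i : ι => p i x)).card)
      = fun x => ∑ i : ι, if p i x then 1 else 0 := by
    funext x
    rw [Finset.card_filter]
  rw [this]
  exact Finset.measurable_sum _ (fun i _ => Measurable.ite (hp i) measurable_const
    measurable_const)

lemma measurable_cBHRejCount :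
    Measurable (fun x : (Fin m → ℝ) × (Fin m → ℝ) => cBHRejCount m x.1 x.2 α τ) := by
  have : (fun x : (Fin m → ℝ) × (Fin m → ℝ) => cBHRejCount m x.1 x.2 α τ)
      = fun x => (Finset.range (m + 1)).sup
        (fun k => if k ≤ (Finset.univ.filter
            (fun i : Fin m => x.1 i ≤ min (α * x.2 i * k / m) τ)).card then k else 0) := by
    funext x; exact cBHRejCount_eq_sup x.1 x.2
  rw [this]
  apply measurable_finset_sup
  intro k
  have hcard : Measurable (fun x : (Fin m → ℝ) × (Fin m → ℝ) =>
      (Finset.univ.filter (fun i : Fin m => x.1 i ≤ min (α * x.2 i * k / m) τ)).card) := by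
    apply measurable_card_filter
    intro i
    apply measurableSet_le
    · exact (measurable_pi_apply i).comp measurable_fst
    · apply Measurable.min _ measurable_const
      apply Measurable.div_const
      exact (measurable_const.mul ((measurable_pi_apply i).comp measurable_snd)).mul
        measurable_const
  exact Measurable.ite (hcard (show MeasurableSet {n : ℕ | k ≤ n} from trivial))
    measurable_const measurable_const

end Meas

namespace Indep

open ProbabilityTheory

variable {Ω β γ δ : Type*} [MeasurableSpace Ω] [MeasurableSpace β] [MeasurableSpace γ]
  [MeasurableSpace δ] {μ : Measure Ω} [IsProbabilityMeasure μ]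
  {f : Ω → β} {g : Ω → γ} {h : Ω → δ}

/-- If `f ⊥ g` and `(f, g) ⊥ h`, then `f ⊥ (g, h)`. -/
lemma indepFun_pair_right (hf : Measurable f) (hg : Measurable g) (hh : Measurable h)
    (hfg : IndepFun f g μ) (hfgh : IndepFun (fun ω => (f ω, g ω)) h μ) :
    IndepFun f (fun ω => (g ω, h ω)) μ := by
  haveI : IsProbabilityMeasure (μ.map f) := Measure.isProbabilityMeasure_map hf.aemeasurable
  haveI : IsProbabilityMeasure (μ.map g) := Measure.isProbabilityMeasure_map hg.aemeasurable
  haveI : IsProbabilityMeasure (μ.map h) := Measure.isProbabilityMeasure_map hh.aemeasurable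
  have hgh : IndepFun g h μ := hfgh.comp measurable_snd measurable_id
  rw [indepFun_iff_map_prod_eq_prod_map_map hf.aemeasurable
    ((hg.prodMk hh)).aemeasurable]
  have e1 : μ.map (fun ω => ((f ω, g ω), h ω))
      = ((μ.map f).prod (μ.map g)).prod (μ.map h) := by
    rw [(indepFun_iff_map_prod_eq_prod_map_map (hf.prodMk hg).aemeasurable
      hh.aemeasurable).mp hfgh,
      (indepFun_iff_map_prod_eq_prod_map_map hf.aemeasurable hg.aemeasurable).mp hfg]
  have e2 : μ.map (fun ω => (g ω, h ω)) = (μ.map g).prod (μ.map h) :=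
    (indepFun_iff_map_prod_eq_prod_map_map hg.aemeasurable hh.aemeasurable).mp hgh
  have e3 : μ.map (fun ω => (f ω, (g ω, h ω)))
      = (μ.map (fun ω => ((f ω, g ω), h ω))).map MeasurableEquiv.prodAssoc := by
    rw [Measure.map_map MeasurableEquiv.prodAssoc.measurable
      ((hf.prodMk hg).prodMk hh)]
    rfl
  rw [e3, e1, (measurePreserving_prodAssoc (μ.map f) (μ.map g) (μ.map h)).map_eq, e2]

end Indep

namespace Key

open ProbabilityTheory

variable {Ω γ : Type*} [MeasurableSpace Ω] [MeasurableSpace γ]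

lemma key_bound (μ : Measure Ω) [IsProbabilityMeasure μ]
    (p : Ω → ℝ) (Z : Ω → γ) (hp : Measurable p) (hZ : Measurable Z)
    (hind : IndepFun p Z μ)
    (t h u : γ → ℝ) (ht : Measurable t) (hh : Measurable h) (hu : Measurable u)
    (ht01 : ∀ z, t z ∈ Set.Icc (0:ℝ) 1) (hh01 : ∀ z, h z ∈ Set.Icc (0:ℝ) 1)
    (hbound : ∀ z, t z * h z ≤ u z)
    (huint : Integrable (fun ω => u (Z ω)) μ)
    (hsuper : ∀ c ∈ Set.Icc (0:ℝ) 1, μ {ω | p ω ≤ c} ≤ ENNReal.ofReal c) :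
    ∫ ω, (if p ω ≤ t (Z ω) then 1 else 0) * h (Z ω) ∂μ ≤ ∫ ω, u (Z ω) ∂μ := by
  set νP := μ.map p with hνP
  set νZ := μ.map Z with hνZ
  haveI : IsProbabilityMeasure νP := Measure.isProbabilityMeasure_map hp.aemeasurable
  haveI : IsProbabilityMeasure νZ := Measure.isProbabilityMeasure_map hZ.aemeasurable
  set F : ℝ × γ → ℝ := fun q => (if q.1 ≤ t q.2 then 1 else 0) * h q.2 with hF
  have hFmeas : Measurable F := by
    apply Measurable.mul _ (hh.comp measurable_snd)
    exact Measurable.ite (measurableSet_le measurable_fst (ht.comp measurable_snd))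
      measurable_const measurable_const
  have hmap : μ.map (fun ω => (p ω, Z ω)) = νP.prod νZ :=
    (indepFun_iff_map_prod_eq_prod_map_map hp.aemeasurable hZ.aemeasurable).mp hind
  have hFbnd : ∀ q, ‖F q‖ ≤ 1 := by
    intro q
    rw [Real.norm_eq_abs, abs_mul]
    have h1 : |if q.1 ≤ t q.2 then (1:ℝ) else 0| ≤ 1 := by
      split <;> simp
    have h2 : |h q.2| ≤ 1 := abs_le.mpr ⟨by linarith [(hh01 q.2).1], (hh01 q.2).2⟩
    calc |if q.1 ≤ t q.2 then (1:ℝ) else 0| * |h q.2| ≤ 1 * 1 :=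
          mul_le_mul h1 h2 (abs_nonneg _) zero_le_one
      _ = 1 := by ring
  have hFint : Integrable F (νP.prod νZ) := by
    refine Integrable.mono' (integrable_const 1) hFmeas.aestronglyMeasurable ?_
    exact Filter.Eventually.of_forall hFbnd
  have step1 : ∫ ω, (if p ω ≤ t (Z ω) then 1 else 0) * h (Z ω) ∂μ
      = ∫ q, F q ∂(νP.prod νZ) := by
    rw [← hmap, integral_map (hp.prodMk hZ).aemeasurable hFmeas.aestronglyMeasurable]
  have step2 : ∫ q, F q ∂(νP.prod νZ) = ∫ z, ∫ q, F (q, z) ∂νP ∂νZ :=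
    integral_prod_symm F hFint
  have inner_eq : ∀ z, ∫ q, F (q, z) ∂νP = (νP (Set.Iic (t z))).toReal * h z := by
    intro z
    have : (fun q => F (q, z)) = fun q => (Set.Iic (t z)).indicator (fun _ => (1:ℝ)) q * h z := by
      funext q
      simp [hF, Set.indicator_apply, Set.mem_Iic]
    rw [this, integral_mul_const, integral_indicator_const (1:ℝ) measurableSet_Iic]
    simp [smul_eq_mul, measureReal_def]
  have inner_le : ∀ z, ∫ q, F (q, z) ∂νP ≤ u z := by
    intro z
    rw [inner_eq z]
    have hIic : νP (Set.Iic (t z)) ≤ ENNReal.ofReal (t z) := by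
      rw [hνP, Measure.map_apply hp measurableSet_Iic]
      exact hsuper (t z) (ht01 z)
    have htoReal : (νP (Set.Iic (t z))).toReal ≤ t z :=
      ENNReal.toReal_le_of_le_ofReal (ht01 z).1 hIic
    calc (νP (Set.Iic (t z))).toReal * h z ≤ t z * h z :=
          mul_le_mul_of_nonneg_right htoReal (hh01 z).1
      _ ≤ u z := hbound z
  have huintZ : Integrable u νZ := by
    rw [hνZ, integrable_map_measure hu.aestronglyMeasurable hZ.aemeasurable]
    exact huint
  have step3 : ∫ z, ∫ q, F (q, z) ∂νP ∂νZ ≤ ∫ z, u z ∂νZ := by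
    apply integral_mono _ huintZ (fun z => inner_le z)
    exact hFint.integral_prod_right
  have step4 : ∫ z, u z ∂νZ = ∫ ω, u (Z ω) ∂μ := by
    rw [hνZ, integral_map hZ.aemeasurable hu.aestronglyMeasurable]
  rw [step1, step2]
  rw [← step4]
  exact step3

end Key

namespace Main

open IHWc

variable {m K : ℕ} (I : Fin K → Finset (Fin m)) (fold : Fin m → Fin K)
  (w : Fin K → (Fin m → ℝ) × (Fin m → ℝ) → Fin m → ℝ) (α τ : ℝ)

/-- weights as a function of (p-value vector, covariate vector) -/
noncomputable def Wt (z : (Fin m → ℝ) × (Fin m → ℝ)) : Fin m → ℝ :=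
  fun j => w (fold j) (fun j' => if j' ∈ I (fold j) then 0 else censor m τ z.1 j', z.2) j

noncomputable def Rt (z : (Fin m → ℝ) × (Fin m → ℝ)) : ℕ :=
  cBHRejCount m z.1 (Wt I fold w τ z) α τ

noncomputable def tt (i : Fin m) (z : (Fin m → ℝ) × (Fin m → ℝ)) : ℝ :=
  min (max (α * Wt I fold w τ z i * (Rt I fold w α τ z : ℝ) / m) 0) τ

noncomputable def hh (z : (Fin m → ℝ) × (Fin m → ℝ)) : ℝ :=
  ((max (Rt I fold w α τ z) 1 : ℕ) : ℝ)⁻¹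

lemma meas_inner (hwmeas : ∀ l, Measurable (w l)) (j : Fin m) :
    Measurable (fun z : (Fin m → ℝ) × (Fin m → ℝ) =>
      ((fun j' => if j' ∈ I (fold j) then 0 else censor m τ z.1 j', z.2) :
        (Fin m → ℝ) × (Fin m → ℝ))) := by
  apply Measurable.prodMk _ measurable_snd
  apply measurable_pi_lambda
  intro j'
  by_cases hj' : j' ∈ I (fold j)
  · simp only [if_pos hj']; exact measurable_const
  · simp only [if_neg hj']
    unfold censor
    exact Measurable.ite (measurableSet_lt measurable_const measurable_fst.eval)
      measurable_fst.eval measurable_const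

lemma meas_Wt_j (hwmeas : ∀ l, Measurable (w l)) (j : Fin m) :
    Measurable (fun z => Wt I fold w τ z j) :=
  (measurable_pi_apply j).comp ((hwmeas (fold j)).comp (meas_inner I fold w τ hwmeas j))

lemma meas_Rt (hwmeas : ∀ l, Measurable (w l)) : Measurable (Rt I fold w α τ) := by
  have h1 : Measurable (fun z : (Fin m → ℝ) × (Fin m → ℝ) =>
      ((z.1, Wt I fold w τ z) : (Fin m → ℝ) × (Fin m → ℝ))) := by
    apply Measurable.prodMk measurable_fst
    exact measurable_pi_lambda _ (fun j => meas_Wt_j I fold w τ hwmeas j)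
  have h2 := (Meas.measurable_cBHRejCount (m := m) (α := α) (τ := τ)).comp h1
  exact h2

lemma meas_cast_Rt (hwmeas : ∀ l, Measurable (w l)) : Measurable (fun z => ((Rt I fold w α τ z : ℕ) : ℝ)) :=
  Measurable.comp measurable_from_top (meas_Rt I fold w α τ hwmeas)

lemma meas_tt (hwmeas : ∀ l, Measurable (w l)) (i : Fin m) : Measurable (tt I fold w α τ i) := by
  unfold tt
  apply Measurable.min _ measurable_const
  apply Measurable.max _ measurable_const
  apply Measurable.div_const
  exact (measurable_const.mul (meas_Wt_j I fold w τ hwmeas i)).mul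
    (meas_cast_Rt I fold w α τ hwmeas)

lemma meas_hh (hwmeas : ∀ l, Measurable (w l)) : Measurable (hh I fold w α τ) := by
  unfold hh
  apply Measurable.inv
  exact Measurable.comp measurable_from_top
    ((meas_Rt I fold w α τ hwmeas).max measurable_const)

lemma tt_mem_Icc (hτ0 : 0 ≤ τ) (hτ1 : τ ≤ 1) (i : Fin m) (z : (Fin m → ℝ) × (Fin m → ℝ)) :
    tt I fold w α τ i z ∈ Set.Icc (0:ℝ) 1 := by
  constructor
  · exact le_min (le_max_right _ _) hτ0
  · exact le_trans (min_le_right _ _) hτ1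

lemma hh_mem_Icc (z : (Fin m → ℝ) × (Fin m → ℝ)) : hh I fold w α τ z ∈ Set.Icc (0:ℝ) 1 := by
  unfold hh
  constructor
  · positivity
  · apply inv_le_one_of_one_le₀
    exact_mod_cast Nat.le_max_right _ _

lemma tt_mul_hh_le (hm : 0 < m) (hα0 : 0 ≤ α) (hτ0 : 0 ≤ τ) (i : Fin m)
    (z : (Fin m → ℝ) × (Fin m → ℝ)) :
    tt I fold w α τ i z * hh I fold w α τ z ≤ α * max (Wt I fold w τ z i) 0 / m := by
  rcases Nat.eq_zero_or_pos (Rt I fold w α τ z) with h0 | h1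
  · have : tt I fold w α τ i z = 0 := by
      unfold tt
      rw [h0]
      norm_num [hτ0]
    rw [this, zero_mul]
    positivity
  · have hmax : max (Rt I fold w α τ z) 1 = Rt I fold w α τ z := max_eq_left h1
    have hRpos : (0:ℝ) < (Rt I fold w α τ z : ℝ) := by exact_mod_cast h1
    unfold tt hh
    rw [hmax]
    have h2 : min (max (α * Wt I fold w τ z i * (Rt I fold w α τ z : ℝ) / m) 0) τ
        ≤ α * max (Wt I fold w τ z i) 0 * (Rt I fold w α τ z : ℝ) / m := by
      apply le_trans (min_le_left _ _)
      apply max_le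
      · apply div_le_div_of_nonneg_right _ (Nat.cast_nonneg m)
        apply mul_le_mul_of_nonneg_right _ hRpos.le
        exact mul_le_mul_of_nonneg_left (le_max_left _ _) hα0
      · positivity
    calc min (max (α * Wt I fold w τ z i * (Rt I fold w α τ z : ℝ) / m) 0) τ
          * ((Rt I fold w α τ z : ℕ) : ℝ)⁻¹
        ≤ (α * max (Wt I fold w τ z i) 0 * (Rt I fold w α τ z : ℝ) / m)
          * ((Rt I fold w α τ z : ℕ) : ℝ)⁻¹ := by
          apply mul_le_mul_of_nonneg_right h2
          positivity
      _ = α * max (Wt I fold w τ z i) 0 / m := by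
          field_simp

end Main

namespace Main

variable {Ω : Type*} [MeasurableSpace Ω] {m K : ℕ} (I : Fin K → Finset (Fin m))
  (fold : Fin m → Fin K)
  (w : Fin K → (Fin m → ℝ) × (Fin m → ℝ) → Fin m → ℝ) (τ : ℝ)

/-- the leave-one-out data vector -/
noncomputable def Zv (P X : Fin m → Ω → ℝ) (i : Fin m) (ω : Ω) :
    (Fin m → ℝ) × (Fin m → ℝ) :=
  (fun j => if j = i then 0 else P j ω, fun j => X j ω)

lemma meas_Zv (P X : Fin m → Ω → ℝ) (hP : ∀ j, Measurable (P j))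
    (hX : ∀ j, Measurable (X j)) (i : Fin m) : Measurable (Zv P X i) := by
  apply Measurable.prodMk
  · apply measurable_pi_lambda
    intro j
    by_cases hj : j = i
    · simp only [if_pos hj]; exact measurable_const
    · simp only [if_neg hj]; exact hP j
  · exact measurable_pi_lambda _ (fun j => hX j)

lemma Wt_Zv_eq (P X W : Fin m → Ω → ℝ) (i j : Fin m) (ω : Ω)
    (hτ0 : 0 ≤ τ)
    (hWj : W j ω = w (fold j)
      (fun j'' => if j'' ∈ I (fold j) then 0 else censor m τ (fun j' => P j' ω) j'',
        fun j'' => X j'' ω) j)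
    (hPle : P i ω ≤ τ) :
    Wt I fold w τ (Zv P X i ω) j = W j ω := by
  rw [hWj]
  unfold Wt Zv
  congr 1
  apply Prod.ext
  · funext j'
    by_cases hj' : j' ∈ I (fold j)
    · simp [hj']
    · simp only [if_neg hj']
      unfold censor
      by_cases hji : j' = i
      · subst hji
        simp [not_lt.mpr hτ0, not_lt.mpr hPle]
      · simp [hji]
  · rfl

lemma Wt_Zv_self (P X W : Fin m → Ω → ℝ) (i : Fin m) (ω : Ω)
    (hfi : i ∈ I (fold i))
    (hWi : W i ω = w (fold i)
      (fun j'' => if j'' ∈ I (fold i) then 0 else censor m τ (fun j' => P j' ω) j'',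
        fun j'' => X j'' ω) i) :
    Wt I fold w τ (Zv P X i ω) i = W i ω := by
  rw [hWi]
  unfold Wt Zv
  congr 1
  apply Prod.ext
  · funext j'
    by_cases hj' : j' ∈ I (fold i)
    · simp [hj']
    · have hji : j' ≠ i := fun h => hj' (h ▸ hfi)
      simp only [if_neg hj']
      unfold censor
      simp [hji]
  · rfl

end Main

namespace Main

noncomputable def zeta (m : ℕ) (H0 : Finset (Fin m)) (i : Fin m) (hi : i ∈ H0)
    (q : ℝ × (({j : {j : Fin m // j ∈ H0} //
          j ∈ Finset.univ.erase (⟨i, hi⟩ : {j : Fin m // j ∈ H0})} → ℝ × ℝ)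
        × ({j : Fin m // j ∉ H0} → ℝ × ℝ))) :
    (Fin m → ℝ) × (Fin m → ℝ) :=
  (fun j =>
    if hj : j = i then 0
    else if h0 : j ∈ H0 then
      (q.2.1 ⟨⟨j, h0⟩, Finset.mem_erase.mpr
        ⟨fun hc => hj (congrArg Subtype.val hc), Finset.mem_univ _⟩⟩).1
    else (q.2.2 ⟨j, h0⟩).1,
   fun j =>
    if hj : j = i then q.1
    else if h0 : j ∈ H0 then
      (q.2.1 ⟨⟨j, h0⟩, Finset.mem_erase.mpr
        ⟨fun hc => hj (congrArg Subtype.val hc), Finset.mem_univ _⟩⟩).2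
    else (q.2.2 ⟨j, h0⟩).2)

lemma meas_zeta (m : ℕ) (H0 : Finset (Fin m)) (i : Fin m) (hi : i ∈ H0) :
    Measurable (zeta m H0 i hi) := by
  unfold zeta
  apply Measurable.prodMk
  · apply measurable_pi_lambda
    intro j
    by_cases hj : j = i
    · simp only [dif_pos hj]; exact measurable_const
    · simp only [dif_neg hj]
      by_cases h0 : j ∈ H0
      · simp only [dif_pos h0]; exact measurable_snd.fst.eval.fst
      · simp only [dif_neg h0]; exact measurable_snd.snd.eval.fst
  · apply measurable_pi_lambda
    intro j
    by_cases hj : j = i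
    · simp only [dif_pos hj]; exact measurable_fst
    · simp only [dif_neg hj]
      by_cases h0 : j ∈ H0
      · simp only [dif_pos h0]; exact measurable_snd.fst.eval.snd
      · simp only [dif_neg h0]; exact measurable_snd.snd.eval.snd

lemma zeta_eq {Ω : Type*} (m : ℕ) (H0 : Finset (Fin m)) (P X : Fin m → Ω → ℝ)
    (i : Fin m) (hi : i ∈ H0) (ω : Ω) :
    zeta m H0 i hi (X i ω,
      (fun j : {j : {j : Fin m // j ∈ H0} //
          j ∈ Finset.univ.erase (⟨i, hi⟩ : {j : Fin m // j ∈ H0})} =>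
        ((P j.1.1 ω, X j.1.1 ω) : ℝ × ℝ),
       fun j : {j : Fin m // j ∉ H0} => ((P j.1 ω, X j.1 ω) : ℝ × ℝ)))
      = Zv P X i ω := by
  unfold zeta Zv
  apply Prod.ext
  · funext j
    by_cases hj : j = i
    · simp [hj]
    · by_cases h0 : j ∈ H0 <;> simp [hj, h0]
  · funext j
    by_cases hj : j = i
    · simp [hj]
    · by_cases h0 : j ∈ H0 <;> simp [hj, h0]

end Main



set_option maxHeartbeats 2000000 in
/-- **IHWc FDR control (Theorem 2).**
Under Assumption 2 — the null (p-value, covariate) pairs are jointly independent,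
independent of the alternative pairs, with `P i ⊥ X i` and super-uniform `P i` for each
null `i` — the IHWc procedure with censoring level `τ ∈ (0,1)` and cross-weights learned
on each fold from the censored out-of-fold p-values and the covariates, nonnegative and
summing to `m` almost surely, controls the FDR at level `α`. -/
theorem ihwc_fdr_control
    {Ω : Type*} [MeasurableSpace Ω] (μ : Measure Ω) [IsProbabilityMeasure μ]
    (m K : ℕ) (hm : 0 < m) (I : Fin K → Finset (Fin m))
    (hpart : ∀ i : Fin m, ∃! l : Fin K, i ∈ I l)
    (H0 : Finset (Fin m))
    (P X W : Fin m → Ω → ℝ)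
    (hPmeas : ∀ i, Measurable (P i)) (hXmeas : ∀ i, Measurable (X i))
    (hWmeas : ∀ i, Measurable (W i))
    -- Assumption 2(a): null pairs are jointly independent
    (hnull_indep : iIndepFun
      (fun (i : {i : Fin m // i ∈ H0}) (ω : Ω) => (P i ω, X i ω)) μ)
    -- Assumption 2(b): null pairs are independent of alternative pairs
    (hnull_alt_indep : IndepFun
      (fun ω => fun i : {i : Fin m // i ∈ H0} => (P i ω, X i ω))
      (fun ω => fun i : {i : Fin m // i ∉ H0} => (P i ω, X i ω)) μ)
    -- Assumption 2(c): for nulls, `P i ⊥ X i`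
    (hPX_indep : ∀ i ∈ H0, IndepFun (P i) (X i) μ)
    -- Assumption 2(d): null p-values are super-uniform
    (hsuper : ∀ i ∈ H0, ∀ t ∈ Set.Icc (0 : ℝ) 1,
      μ {ω | P i ω ≤ t} ≤ ENNReal.ofReal t)
    (α τ : ℝ) (hα : α ∈ Set.Ioo (0 : ℝ) 1) (hτ : τ ∈ Set.Ioo (0 : ℝ) 1)
    -- IHWc cross-weighting: fold-`l` weights are a measurable function of the censored
    -- out-of-fold p-values and of all covariates
    (w : Fin K → (Fin m → ℝ) × (Fin m → ℝ) → Fin m → ℝ)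
    (hwmeas : ∀ l, Measurable (w l))
    (hWdef : ∀ l : Fin K, ∀ i ∈ I l, ∀ ω,
      W i ω = w l
        (fun j => if j ∈ I l then 0 else censor m τ (fun j' => P j' ω) j,
          fun j => X j ω) i)
    (hWnonneg : ∀ i ω, 0 ≤ W i ω)
    (hWsum : ∀ᵐ ω ∂μ, ∑ i, W i ω = (m : ℝ)) :
    ∫ ω,
      (((H0.filter
          (fun i => cBHRejects m (fun j => P j ω) (fun j => W j ω) α τ i)).card : ℝ)
        / max (cBHRejCount m (fun j => P j ω) (fun j => W j ω) α τ) 1) ∂μ ≤ α := by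

  classical
  obtain ⟨hα0, hα1⟩ := hα
  obtain ⟨hτ0, hτ1⟩ := hτ
  choose fold hfold using fun i : Fin m => (hpart i).exists
  -- weights are integrable (they are a.e. bounded by m)
  have hWint : ∀ i : Fin m, Integrable (W i) μ := by
    intro i
    refine Integrable.mono' (integrable_const (m:ℝ)) (hWmeas i).aestronglyMeasurable ?_
    filter_upwards [hWsum] with ω hω
    rw [Real.norm_eq_abs, abs_of_nonneg (hWnonneg i ω), ← hω]
    exact Finset.single_le_sum (fun j _ => hWnonneg j ω) (Finset.mem_univ i)
  -- shorthand
  set R : Ω → ℕ := fun ω => cBHRejCount m (fun j => P j ω) (fun j => W j ω) α τ with hRdef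
  have hRmeas : Measurable R :=
    Meas.measurable_cBHRejCount.comp
      ((measurable_pi_lambda _ hPmeas).prodMk (measurable_pi_lambda _ hWmeas))
  -- the per-hypothesis comparison terms
  set g : Fin m → Ω → ℝ := fun i ω =>
    (if P i ω ≤ Main.tt I fold w α τ i (Main.Zv P X i ω) then (1:ℝ) else 0)
      * Main.hh I fold w α τ (Main.Zv P X i ω) with hgdef
  have hgmeas : ∀ i, Measurable (g i) := by
    intro i
    apply Measurable.mul
    · exact Measurable.ite
        (measurableSet_le (hPmeas i)
          ((Main.meas_tt I fold w α τ hwmeas i).comp (Main.meas_Zv P X hPmeas hXmeas i)))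
        measurable_const measurable_const
    · exact (Main.meas_hh I fold w α τ hwmeas).comp (Main.meas_Zv P X hPmeas hXmeas i)
  have hgbnd : ∀ i ω, g i ω ∈ Set.Icc (0:ℝ) 1 := by
    intro i ω
    have h1 := Main.hh_mem_Icc I fold w α τ (Main.Zv P X i ω)
    constructor
    · apply mul_nonneg _ h1.1
      split <;> norm_num
    · have h2 : (if P i ω ≤ Main.tt I fold w α τ i (Main.Zv P X i ω) then (1:ℝ) else 0) ≤ 1 := by
        split <;> norm_num
      exact le_trans (mul_le_mul h2 h1.2 h1.1 zero_le_one) (by norm_num)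
  have hgint : ∀ i, Integrable (g i) μ := by
    intro i
    refine Integrable.mono' (integrable_const (1:ℝ)) (hgmeas i).aestronglyMeasurable ?_
    apply Filter.Eventually.of_forall
    intro ω
    rw [Real.norm_eq_abs, abs_of_nonneg (hgbnd i ω).1]
    exact (hgbnd i ω).2
  ----------------------------------------------------------------
  --  Pointwise FDP bound
  ----------------------------------------------------------------
  have hpt : ∀ ω,
      (((H0.filter
          (fun i => cBHRejects m (fun j => P j ω) (fun j => W j ω) α τ i)).card : ℝ)
        / ((max (R ω) 1 : ℕ) : ℝ)) ≤ ∑ i ∈ H0, g i ω := by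
    intro ω
    have hcard : ((H0.filter
        (fun i => cBHRejects m (fun j => P j ω) (fun j => W j ω) α τ i)).card : ℝ)
        = ∑ i ∈ H0, (if cBHRejects m (fun j => P j ω) (fun j => W j ω) α τ i
            then (1:ℝ) else 0) := by
      rw [Finset.card_filter]
      push_cast
      rfl
    rw [hcard, Finset.sum_div]
    apply Finset.sum_le_sum
    intro i _
    by_cases hrej : cBHRejects m (fun j => P j ω) (fun j => W j ω) α τ i
    · rw [if_pos hrej]
      have hrej' : P i ω ≤ min (α * W i ω * (R ω : ℝ) / m) τ := hrej
      have hPle : P i ω ≤ τ := le_trans hrej' (min_le_right _ _)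
      have hWtall : ∀ j, Main.Wt I fold w τ (Main.Zv P X i ω) j = W j ω := fun j =>
        Main.Wt_Zv_eq I fold w τ P X W i j ω hτ0.le (hWdef (fold j) j (hfold j) ω) hPle
      have hWfun : Main.Wt I fold w τ (Main.Zv P X i ω) = fun j => W j ω :=
        funext hWtall
      have hz1 : (Main.Zv P X i ω).1 = Det.zeroAt (fun j => P j ω) i := rfl
      have hRt : Main.Rt I fold w α τ (Main.Zv P X i ω) = R ω := by
        unfold Main.Rt
        rw [hWfun, hz1]
        exact Det.count_zeroAt_eq hα0.le (fun j => hWnonneg j ω) hτ0.le hrej'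
      have hR1 : 1 ≤ R ω :=
        Det.one_le_count hα0.le (fun j => hWnonneg j ω) hτ0.le hrej'
      have hR1' : (1:ℝ) ≤ (R ω : ℝ) := by exact_mod_cast hR1
      have hind : P i ω ≤ Main.tt I fold w α τ i (Main.Zv P X i ω) := by
        unfold Main.tt
        rw [hRt, hWtall i]
        exact le_trans hrej' (min_le_min (le_max_left _ _) le_rfl)
      have hhh : Main.hh I fold w α τ (Main.Zv P X i ω) = (R ω : ℝ)⁻¹ := by
        unfold Main.hh
        rw [hRt, max_eq_left hR1]
      rw [hgdef]
      simp only [if_pos hind, hhh, one_mul]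
      rw [max_eq_left hR1, one_div]
    · rw [if_neg hrej, zero_div]
      exact (hgbnd i ω).1
  ----------------------------------------------------------------
  --  Independence and the per-hypothesis integral bound
  ----------------------------------------------------------------
  have hkey : ∀ i ∈ H0, ∫ ω, g i ω ∂μ ≤ ∫ ω, α * W i ω / m ∂μ := by
    intro i hi
    -- independence of `P i` and `Zv P X i`
    have hindep : IndepFun (P i) (Main.Zv P X i) μ := by
      set i0 : {j : Fin m // j ∈ H0} := ⟨i, hi⟩ with hi0
      have hmeasPair : ∀ j : {j : Fin m // j ∈ H0},
          Measurable (fun ω => ((P j.1 ω, X j.1 ω) : ℝ × ℝ)) :=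
        fun j => (hPmeas _).prodMk (hXmeas _)
      have hrest : Measurable (fun ω => fun j : {j // j ∈ Finset.univ.erase i0} =>
          ((P j.1.1 ω, X j.1.1 ω) : ℝ × ℝ)) :=
        measurable_pi_lambda _ (fun j => (hPmeas _).prodMk (hXmeas _))
      have halt : Measurable (fun ω => fun j : {j : Fin m // j ∉ H0} =>
          ((P j.1 ω, X j.1 ω) : ℝ × ℝ)) :=
        measurable_pi_lambda _ (fun j => (hPmeas _).prodMk (hXmeas _))
      have h1 := hnull_indep.indepFun_finset {i0} (Finset.univ.erase i0)
        (Finset.disjoint_singleton_left.mpr (Finset.notMem_erase i0 _)) hmeasPair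
      have h2 : IndepFun (fun ω => ((P i ω, X i ω) : ℝ × ℝ))
          (fun ω => fun j : {j // j ∈ Finset.univ.erase i0} =>
            ((P j.1.1 ω, X j.1.1 ω) : ℝ × ℝ)) μ := by
        have h2' := h1.comp (measurable_pi_apply (⟨i0, Finset.mem_singleton_self i0⟩ :
          {j // j ∈ ({i0} : Finset {j : Fin m // j ∈ H0})})) measurable_id
        exact h2'
      have h3 : IndepFun
          (fun ω => (((P i ω, X i ω) : ℝ × ℝ),
            fun j : {j // j ∈ Finset.univ.erase i0} => ((P j.1.1 ω, X j.1.1 ω) : ℝ × ℝ)))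
          (fun ω => fun j : {j : Fin m // j ∉ H0} => ((P j.1 ω, X j.1 ω) : ℝ × ℝ)) μ := by
        have hφ : Measurable (fun v : ({j : Fin m // j ∈ H0} → ℝ × ℝ) =>
            ((v i0, fun j : {j // j ∈ Finset.univ.erase i0} => v j.1) :
              (ℝ × ℝ) × ({j // j ∈ Finset.univ.erase i0} → ℝ × ℝ))) :=
          (measurable_pi_apply i0).prodMk
            (measurable_pi_lambda _ (fun j => measurable_pi_apply _))
        have h3' := hnull_alt_indep.comp hφ measurable_id
        exact h3'
      have h4 : IndepFun (fun ω => ((P i ω, X i ω) : ℝ × ℝ))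
          (fun ω =>
            ((fun j : {j // j ∈ Finset.univ.erase i0} => ((P j.1.1 ω, X j.1.1 ω) : ℝ × ℝ),
              fun j : {j : Fin m // j ∉ H0} => ((P j.1 ω, X j.1 ω) : ℝ × ℝ)))) μ :=
        Indep.indepFun_pair_right ((hPmeas i).prodMk (hXmeas i)) hrest halt h2 h3
      have h5 : IndepFun (P i)
          (fun ω => (X i ω,
            ((fun j : {j // j ∈ Finset.univ.erase i0} => ((P j.1.1 ω, X j.1.1 ω) : ℝ × ℝ),
              fun j : {j : Fin m // j ∉ H0} => ((P j.1 ω, X j.1 ω) : ℝ × ℝ))))) μ :=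
        Indep.indepFun_pair_right (hPmeas i) (hXmeas i) (hrest.prodMk halt)
          (hPX_indep i hi) h4
      have h6 := h5.comp measurable_id (Main.meas_zeta m H0 i hi)
      refine IndepFun.congr h6 (Filter.Eventually.of_forall fun ω => rfl)
        (Filter.Eventually.of_forall fun ω => ?_)
      exact Main.zeta_eq m H0 P X i hi ω
    have hu_eq : (fun ω => α * max (Main.Wt I fold w τ (Main.Zv P X i ω) i) 0 / m)
        = fun ω => α * W i ω / m := by
      funext ω
      rw [Main.Wt_Zv_self I fold w τ P X W i ω (hfold i) (hWdef (fold i) i (hfold i) ω),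
        max_eq_left (hWnonneg i ω)]
    have huint : Integrable (fun ω => α * max (Main.Wt I fold w τ (Main.Zv P X i ω) i) 0 / m) μ := by
      rw [hu_eq]
      exact ((hWint i).const_mul α).div_const m
    have hb := Key.key_bound μ (P i) (Main.Zv P X i) (hPmeas i)
      (Main.meas_Zv P X hPmeas hXmeas i) hindep
      (Main.tt I fold w α τ i) (Main.hh I fold w α τ)
      (fun z => α * max (Main.Wt I fold w τ z i) 0 / m)
      (Main.meas_tt I fold w α τ hwmeas i) (Main.meas_hh I fold w α τ hwmeas)
      (by
        apply Measurable.div_const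
        exact measurable_const.mul ((Main.meas_Wt_j I fold w τ hwmeas i).max measurable_const))
      (Main.tt_mem_Icc I fold w α τ hτ0.le hτ1.le i)
      (Main.hh_mem_Icc I fold w α τ)
      (Main.tt_mul_hh_le I fold w α τ hm hα0.le hτ0.le i)
      huint
      (hsuper i hi)
    rw [hu_eq] at hb
    exact hb
  ----------------------------------------------------------------
  --  Put everything together
  ----------------------------------------------------------------
  have hFDPmeas : Measurable (fun ω =>
      (((H0.filter
          (fun i => cBHRejects m (fun j => P j ω) (fun j => W j ω) α τ i)).card : ℝ)
        / ((max (R ω) 1 : ℕ) : ℝ))) := by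
    apply Measurable.div
    · have : (fun ω => ((H0.filter
          (fun i => cBHRejects m (fun j => P j ω) (fun j => W j ω) α τ i)).card : ℝ))
          = fun ω => ∑ i ∈ H0, (if cBHRejects m (fun j => P j ω) (fun j => W j ω) α τ i
            then (1:ℝ) else 0) := by
        funext ω
        rw [Finset.card_filter]
        push_cast
        rfl
      rw [this]
      apply Finset.measurable_sum
      intro i _
      apply Measurable.ite _ measurable_const measurable_const
      show MeasurableSet {ω | P i ω ≤ min (α * W i ω * (R ω : ℝ) / m) τ}
      apply measurableSet_le (hPmeas i)
      apply Measurable.min _ measurable_const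
      apply Measurable.div_const
      exact (measurable_const.mul (hWmeas i)).mul
        (Measurable.comp measurable_from_top hRmeas)
    · exact Measurable.comp measurable_from_top (hRmeas.max measurable_const)
  have hFDPint : Integrable (fun ω =>
      (((H0.filter
          (fun i => cBHRejects m (fun j => P j ω) (fun j => W j ω) α τ i)).card : ℝ)
        / ((max (R ω) 1 : ℕ) : ℝ))) μ := by
    refine Integrable.mono' (integrable_const (m:ℝ)) hFDPmeas.aestronglyMeasurable ?_
    apply Filter.Eventually.of_forall
    intro ω
    have h1 : (0:ℝ) ≤ ((H0.filter
        (fun i => cBHRejects m (fun j => P j ω) (fun j => W j ω) α τ i)).card : ℝ) := by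
      positivity
    have h2 : (1:ℝ) ≤ ((max (R ω) 1 : ℕ) : ℝ) :=
      Nat.one_le_cast.mpr (le_max_right _ _)
    rw [Real.norm_eq_abs, abs_of_nonneg (div_nonneg h1 (by linarith))]
    calc ((H0.filter
        (fun i => cBHRejects m (fun j => P j ω) (fun j => W j ω) α τ i)).card : ℝ)
          / ((max (R ω) 1 : ℕ) : ℝ)
        ≤ ((H0.filter
          (fun i => cBHRejects m (fun j => P j ω) (fun j => W j ω) α τ i)).card : ℝ) / 1 := by
          apply div_le_div_of_nonneg_left h1 (by linarith) h2
      _ ≤ (m:ℝ) := by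
          rw [div_one]
          exact_mod_cast le_trans (Finset.card_filter_le _ _) (le_trans (Finset.card_le_card
            (H0.subset_univ)) (by simp))
  calc ∫ ω, (((H0.filter
          (fun i => cBHRejects m (fun j => P j ω) (fun j => W j ω) α τ i)).card : ℝ)
        / ((max (R ω) 1 : ℕ) : ℝ)) ∂μ
      ≤ ∫ ω, ∑ i ∈ H0, g i ω ∂μ := by
        apply integral_mono hFDPint (integrable_finset_sum _ (fun i _ => hgint i)) hpt
    _ = ∑ i ∈ H0, ∫ ω, g i ω ∂μ := integral_finset_sum _ (fun i _ => hgint i)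
    _ ≤ ∑ i ∈ H0, ∫ ω, α * W i ω / m ∂μ := Finset.sum_le_sum hkey
    _ ≤ ∑ i : Fin m, ∫ ω, α * W i ω / m ∂μ := by
        apply Finset.sum_le_sum_of_subset_of_nonneg (H0.subset_univ)
        intro i _ _
        apply integral_nonneg
        intro ω
        have := hWnonneg i ω
        positivity
    _ = ∫ ω, ∑ i : Fin m, α * W i ω / m ∂μ :=
        (integral_finset_sum _ (fun i _ => ((hWint i).const_mul α).div_const m)).symm
    _ = ∫ ω, α * (∑ i : Fin m, W i ω) / m ∂μ := by
        congr 1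
        funext ω
        rw [Finset.mul_sum, Finset.sum_div]
    _ = ∫ (_ : Ω), α * (m:ℝ) / m ∂μ := by
        apply integral_congr_ae
        filter_upwards [hWsum] with ω hω
        rw [hω]
    _ = α * (m:ℝ) / m := by
        rw [integral_const]
        simp
    _ = α := by
        field_simp
end
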